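/- arXiv:2202.08601 — 3 statements merged into one kernel-verified Lean document; each statement's English description precedes it below -/
import Mathlib

section
/- For each r ∈ {2,3,4} there exists y ∈ ℂ⁶ ∖ {0} with Σ_k y_k = 0 and (Σ_k y_k²)² ≠ 4 Σ_k y_k⁴ such that exactly r of the 10 nodes [ε^A] satisfy Σ_k ε^A_k y_k = 0; consequently for each r ∈ {2,3,4} there is a hyperplane section of the Segre cubic which is a cubic surface with exactly r singular points. For r = 4 one may take y = e_i − e_j for any i ≠ j. -/
open scoped BigOperators

/-- The vector `ε^A` with coordinate `1` on `A` and `-1` off `A`. -/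
noncomputable def eps (A : Finset (Fin 6)) : Fin 6 → ℂ := fun k => if k ∈ A then 1 else -1

lemma eps_ne_zero (A : Finset (Fin 6)) : eps A ≠ 0 := by
  intro h
  have h0 := congrFun h 0
  simp only [eps, Pi.zero_apply] at h0
  split at h0
  · exact one_ne_zero h0
  · exact (neg_ne_zero.mpr (one_ne_zero (α := ℂ))) h0

/-- The node `[ε^A]` lies on the hyperplane `H_y`. -/
def NodeOnHyp (y : Fin 6 → ℂ) (p : Projectivization ℂ (Fin 6 → ℂ)) : Prop :=
  ∃ A : Finset (Fin 6), A.card = 3 ∧ (∑ k, eps A k * y k) = 0 ∧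
    p = Projectivization.mk ℂ (eps A) (eps_ne_zero A)

/-- `p` is a singular point of the cubic surface `Σ₃ ∩ H_y` (Jacobian criterion). -/
def SingOnSection (y : Fin 6 → ℂ) (p : Projectivization ℂ (Fin 6 → ℂ)) : Prop :=
  ∃ (x : Fin 6 → ℂ) (hx : x ≠ 0), p = Projectivization.mk ℂ x hx ∧
    (∑ k, x k) = 0 ∧ (∑ k, (x k) ^ 3) = 0 ∧ (∑ k, y k * x k) = 0 ∧
    ¬ LinearIndependent ℂ ![(1 : Fin 6 → ℂ), fun k => (x k) ^ 2, y]

/-- The vector `e_i - e_j` in `ℂ⁶`. -/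
noncomputable def eij (i j : Fin 6) : Fin 6 → ℂ := Pi.single i 1 - Pi.single j 1

-- ===== auxiliary lemmas =====


lemma eps_sq (A : Finset (Fin 6)) (k : Fin 6) : eps A k ^ 2 = 1 := by
  unfold eps; split <;> ring

lemma eps_cube (A : Finset (Fin 6)) (k : Fin 6) : eps A k ^ 3 = eps A k := by
  unfold eps; split <;> ring

lemma eps_compl (A : Finset (Fin 6)) : eps Aᶜ = -eps A := by
  funext k
  by_cases h : k ∈ A <;> simp [eps, h]

lemma eps_inj {A B : Finset (Fin 6)} (h : eps A = eps B) : A = B := by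
  ext k
  have hk := congrFun h k
  by_cases hA : k ∈ A <;> by_cases hB : k ∈ B <;> simp [eps, hA, hB] at hk ⊢
  · norm_num at hk
  · norm_num at hk

lemma sum_eps (A : Finset (Fin 6)) : (∑ k, eps A k) = 2 * (A.card : ℂ) - 6 := by
  have : ∀ k, eps A k = (if k ∈ A then (2:ℂ) else 0) - 1 := by
    intro k; unfold eps; split <;> ring
  rw [Finset.sum_congr rfl (fun k _ => this k), Finset.sum_sub_distrib]
  rw [Finset.sum_ite_mem, Finset.univ_inter, Finset.sum_const]
  simp [mul_comm]

lemma mk_eps_compl (A : Finset (Fin 6)) :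
    Projectivization.mk ℂ (eps Aᶜ) (eps_ne_zero Aᶜ) =
      Projectivization.mk ℂ (eps A) (eps_ne_zero A) := by
  rw [Projectivization.mk_eq_mk_iff']
  exact ⟨-1, by rw [eps_compl]; funext k; simp⟩

lemma mk_eps_eq_iff (A B : Finset (Fin 6)) :
    Projectivization.mk ℂ (eps A) (eps_ne_zero A) =
      Projectivization.mk ℂ (eps B) (eps_ne_zero B) ↔ A = B ∨ A = Bᶜ := by
  constructor
  · intro h
    rw [Projectivization.mk_eq_mk_iff'] at h
    obtain ⟨t, ht⟩ := h
    have h0 := congrFun ht 0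
    simp only [Pi.smul_apply, smul_eq_mul] at h0
    have hpt : ∀ k, t * eps B k = eps A k := by
      intro k; have := congrFun ht k; simpa using this
    have ht1 : t = 1 ∨ t = -1 := by
      by_cases hA : (0:Fin 6) ∈ A <;> by_cases hB : (0:Fin 6) ∈ B <;>
        simp [eps, hA, hB] at h0 <;>
        first
          | (left; linear_combination h0)
          | (left; linear_combination -h0)
          | (right; linear_combination h0)
          | (right; linear_combination -h0)
    rcases ht1 with rfl | rfl
    · left
      apply eps_inj
      funext k; have := hpt k; rw [one_mul] at this; exact this.symm
    · right
      have : eps B = eps Aᶜ := by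
        funext k; rw [eps_compl]; have := hpt k; simp only [Pi.neg_apply]
        linear_combination -this
      have := eps_inj this
      rw [this, compl_compl]
  · rintro (rfl | rfl)
    · rfl
    · rw [← mk_eps_compl B]

set_option maxRecDepth 8000 in
set_option maxHeartbeats 1000000 in
lemma CR_eq (x : Fin 6 → ℂ) (b : ℂ) (h1 : (∑ k, x k) = 0) (h3 : (∑ k, (x k)^3) = 0) :
    (∑ k, (b * ((x k)^2 - (∑ j, (x j)^2)/6))^2)^2
      = 4 * ∑ k, (b * ((x k)^2 - (∑ j, (x j)^2)/6))^4 := by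
  simp only [Fin.sum_univ_six] at h1 h3 ⊢
  linear_combination (b^4 * (((-1 : ℂ)/4) * x 5 ^ 7 + ((1 : ℂ)/6) * x 4 * x 5 ^ 6 + ((11 : ℂ)/12) * x 4 ^ 2 * x 5 ^ 5 + ((1 : ℂ)/6) * x 4 ^ 3 * x 5 ^ 4 + ((1 : ℂ)/6) * x 4 ^ 4 * x 5 ^ 3 + ((11 : ℂ)/12) * x 4 ^ 5 * x 5 ^ 2 + ((1 : ℂ)/6) * x 4 ^ 6 * x 5 + ((-1 : ℂ)/4) * x 4 ^ 7 + ((1 : ℂ)/6) * x 3 * x 5 ^ 6 + ((-1 : ℂ)/6) * x 3 * x 4 * x 5 ^ 5 + ((-1 : ℂ)/4) * x 3 * x 4 ^ 2 * x 5 ^ 4 + ((1 : ℂ)/6) * x 3 * x 4 ^ 3 * x 5 ^ 3 + ((-1 : ℂ)/4) * x 3 * x 4 ^ 4 * x 5 ^ 2 + ((-1 : ℂ)/6) * x 3 * x 4 ^ 5 * x 5 + ((1 : ℂ)/6) * x 3 * x 4 ^ 6 + ((11 : ℂ)/12) * x 3 ^ 2 * x 5 ^ 5 + ((-1 : ℂ)/4)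 * x 3 ^ 2 * x 4 * x 5 ^ 4 + ((-1 : ℂ)/4) * x 3 ^ 2 * x 4 ^ 4 * x 5 + ((11 : ℂ)/12) * x 3 ^ 2 * x 4 ^ 5 + ((1 : ℂ)/6) * x 3 ^ 3 * x 5 ^ 4 + ((1 : ℂ)/6) * x 3 ^ 3 * x 4 * x 5 ^ 3 + ((1 : ℂ)/6) * x 3 ^ 3 * x 4 ^ 3 * x 5 + ((1 : ℂ)/6) * x 3 ^ 3 * x 4 ^ 4 + ((1 : ℂ)/6) * x 3 ^ 4 * x 5 ^ 3 + ((-1 : ℂ)/4) * x 3 ^ 4 * x 4 * x 5 ^ 2 + ((-1 : ℂ)/4) * x 3 ^ 4 * x 4 ^ 2 * x 5 + ((1 : ℂ)/6) * x 3 ^ 4 * x 4 ^ 3 + ((11 : ℂ)/12) * x 3 ^ 5 * x 5 ^ 2 + ((-1 : ℂ)/6) * x 3 ^ 5 * x 4 * x 5 + ((11 : ℂ)/12) * x 3 ^ 5 * x 4 ^ 2 + ((1 : ℂ)/6) * x 3 ^ 6 * x 5 + ((1 : ℂ)/6) * x 3 ^ 6 * x 4 + ((-1 : ℂ)/4) *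 x 3 ^ 7 + ((1 : ℂ)/6) * x 2 * x 5 ^ 6 + ((-1 : ℂ)/6) * x 2 * x 4 * x 5 ^ 5 + ((-1 : ℂ)/4) * x 2 * x 4 ^ 2 * x 5 ^ 4 + ((1 : ℂ)/6) * x 2 * x 4 ^ 3 * x 5 ^ 3 + ((-1 : ℂ)/4) * x 2 * x 4 ^ 4 * x 5 ^ 2 + ((-1 : ℂ)/6) * x 2 * x 4 ^ 5 * x 5 + ((1 : ℂ)/6) * x 2 * x 4 ^ 6 + ((-1 : ℂ)/6) * x 2 * x 3 * x 5 ^ 5 + ((1 : ℂ)/6) * x 2 * x 3 * x 4 * x 5 ^ 4 + ((1 : ℂ)/6) * x 2 * x 3 * x 4 ^ 4 * x 5 + ((-1 : ℂ)/6) * x 2 * x 3 * x 4 ^ 5 + ((-1 : ℂ)/4) * x 2 * x 3 ^ 2 * x 5 ^ 4 + ((1 : ℂ)/2) * x 2 * x 3 ^ 2 * x 4 ^ 2 * x 5 ^ 2 + ((-1 : ℂ)/4) * x 2 * x 3 ^ 2 * x 4 ^ 4 + ((1 : ℂ)/6) * x 2 * x 3 ^ 3 * x 5 ^ 3 + ((1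 : ℂ)/6) * x 2 * x 3 ^ 3 * x 4 ^ 3 + ((-1 : ℂ)/4) * x 2 * x 3 ^ 4 * x 5 ^ 2 + ((1 : ℂ)/6) * x 2 * x 3 ^ 4 * x 4 * x 5 + ((-1 : ℂ)/4) * x 2 * x 3 ^ 4 * x 4 ^ 2 + ((-1 : ℂ)/6) * x 2 * x 3 ^ 5 * x 5 + ((-1 : ℂ)/6) * x 2 * x 3 ^ 5 * x 4 + ((1 : ℂ)/6) * x 2 * x 3 ^ 6 + ((11 : ℂ)/12) * x 2 ^ 2 * x 5 ^ 5 + ((-1 : ℂ)/4) * x 2 ^ 2 * x 4 * x 5 ^ 4 + ((-1 : ℂ)/4) * x 2 ^ 2 * x 4 ^ 4 * x 5 + ((11 : ℂ)/12) * x 2 ^ 2 * x 4 ^ 5 + ((-1 : ℂ)/4) * x 2 ^ 2 * x 3 * x 5 ^ 4 + ((1 : ℂ)/2) * x 2 ^ 2 * x 3 * x 4 ^ 2 * x 5 ^ 2 + ((-1 : ℂ)/4) * x 2 ^ 2 * x 3 * x 4 ^ 4 + ((1 : ℂ)/2) * x 2 ^ 2 * x 3 ^ 2 * x 4 * x 5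 ^ 2 + ((1 : ℂ)/2) * x 2 ^ 2 * x 3 ^ 2 * x 4 ^ 2 * x 5 + ((-1 : ℂ)/4) * x 2 ^ 2 * x 3 ^ 4 * x 5 + ((-1 : ℂ)/4) * x 2 ^ 2 * x 3 ^ 4 * x 4 + ((11 : ℂ)/12) * x 2 ^ 2 * x 3 ^ 5 + ((1 : ℂ)/6) * x 2 ^ 3 * x 5 ^ 4 + ((1 : ℂ)/6) * x 2 ^ 3 * x 4 * x 5 ^ 3 + ((1 : ℂ)/6) * x 2 ^ 3 * x 4 ^ 3 * x 5 + ((1 : ℂ)/6) * x 2 ^ 3 * x 4 ^ 4 + ((1 : ℂ)/6) * x 2 ^ 3 * x 3 * x 5 ^ 3 + ((1 : ℂ)/6) * x 2 ^ 3 * x 3 * x 4 ^ 3 + ((1 : ℂ)/6) * x 2 ^ 3 * x 3 ^ 3 * x 5 + ((1 : ℂ)/6) * x 2 ^ 3 * x 3 ^ 3 * x 4 + ((1 : ℂ)/6) * x 2 ^ 3 * x 3 ^ 4 + ((1 : ℂ)/6) * x 2 ^ 4 * x 5 ^ 3 + ((-1 : ℂ)/4) * x 2 ^ 4 * x 4 *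 x 5 ^ 2 + ((-1 : ℂ)/4) * x 2 ^ 4 * x 4 ^ 2 * x 5 + ((1 : ℂ)/6) * x 2 ^ 4 * x 4 ^ 3 + ((-1 : ℂ)/4) * x 2 ^ 4 * x 3 * x 5 ^ 2 + ((1 : ℂ)/6) * x 2 ^ 4 * x 3 * x 4 * x 5 + ((-1 : ℂ)/4) * x 2 ^ 4 * x 3 * x 4 ^ 2 + ((-1 : ℂ)/4) * x 2 ^ 4 * x 3 ^ 2 * x 5 + ((-1 : ℂ)/4) * x 2 ^ 4 * x 3 ^ 2 * x 4 + ((1 : ℂ)/6) * x 2 ^ 4 * x 3 ^ 3 + ((11 : ℂ)/12) * x 2 ^ 5 * x 5 ^ 2 + ((-1 : ℂ)/6) * x 2 ^ 5 * x 4 * x 5 + ((11 : ℂ)/12) * x 2 ^ 5 * x 4 ^ 2 + ((-1 : ℂ)/6) * x 2 ^ 5 * x 3 * x 5 + ((-1 : ℂ)/6) * x 2 ^ 5 * x 3 * x 4 + ((11 : ℂ)/12) * x 2 ^ 5 * x 3 ^ 2 + ((1 : ℂ)/6) * x 2 ^ 6 * x 5 + ((1 : ℂ)/6) * x 2 ^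 6 * x 4 + ((1 : ℂ)/6) * x 2 ^ 6 * x 3 + ((-1 : ℂ)/4) * x 2 ^ 7 + ((1 : ℂ)/6) * x 1 * x 5 ^ 6 + ((-1 : ℂ)/6) * x 1 * x 4 * x 5 ^ 5 + ((-1 : ℂ)/4) * x 1 * x 4 ^ 2 * x 5 ^ 4 + ((1 : ℂ)/6) * x 1 * x 4 ^ 3 * x 5 ^ 3 + ((-1 : ℂ)/4) * x 1 * x 4 ^ 4 * x 5 ^ 2 + ((-1 : ℂ)/6) * x 1 * x 4 ^ 5 * x 5 + ((1 : ℂ)/6) * x 1 * x 4 ^ 6 + ((-1 : ℂ)/6) * x 1 * x 3 * x 5 ^ 5 + ((1 : ℂ)/6) * x 1 * x 3 * x 4 * x 5 ^ 4 + ((1 : ℂ)/6) * x 1 * x 3 * x 4 ^ 4 * x 5 + ((-1 : ℂ)/6) * x 1 * x 3 * x 4 ^ 5 + ((-1 : ℂ)/4) * x 1 * x 3 ^ 2 * x 5 ^ 4 + ((1 : ℂ)/2) * x 1 * x 3 ^ 2 * x 4 ^ 2 * x 5 ^ 2 + ((-1 : ℂ)/4) * x 1 * x 3 ^ 2 * x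 4 ^ 4 + ((1 : ℂ)/6) * x 1 * x 3 ^ 3 * x 5 ^ 3 + ((1 : ℂ)/6) * x 1 * x 3 ^ 3 * x 4 ^ 3 + ((-1 : ℂ)/4) * x 1 * x 3 ^ 4 * x 5 ^ 2 + ((1 : ℂ)/6) * x 1 * x 3 ^ 4 * x 4 * x 5 + ((-1 : ℂ)/4) * x 1 * x 3 ^ 4 * x 4 ^ 2 + ((-1 : ℂ)/6) * x 1 * x 3 ^ 5 * x 5 + ((-1 : ℂ)/6) * x 1 * x 3 ^ 5 * x 4 + ((1 : ℂ)/6) * x 1 * x 3 ^ 6 + ((-1 : ℂ)/6) * x 1 * x 2 * x 5 ^ 5 + ((1 : ℂ)/6) * x 1 * x 2 * x 4 * x 5 ^ 4 + ((1 : ℂ)/6) * x 1 * x 2 * x 4 ^ 4 * x 5 + ((-1 : ℂ)/6) * x 1 * x 2 * x 4 ^ 5 + ((1 : ℂ)/6) * x 1 * x 2 * x 3 * x 5 ^ 4 + ((-1 : ℂ)/3) * x 1 * x 2 * x 3 * x 4 ^ 2 * x 5 ^ 2 + ((1 : ℂ)/6) * x 1 * x 2 * x 3 * x 4 ^ 4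 + ((-1 : ℂ)/3) * x 1 * x 2 * x 3 ^ 2 * x 4 * x 5 ^ 2 + ((-1 : ℂ)/3) * x 1 * x 2 * x 3 ^ 2 * x 4 ^ 2 * x 5 + ((1 : ℂ)/6) * x 1 * x 2 * x 3 ^ 4 * x 5 + ((1 : ℂ)/6) * x 1 * x 2 * x 3 ^ 4 * x 4 + ((-1 : ℂ)/6) * x 1 * x 2 * x 3 ^ 5 + ((-1 : ℂ)/4) * x 1 * x 2 ^ 2 * x 5 ^ 4 + ((1 : ℂ)/2) * x 1 * x 2 ^ 2 * x 4 ^ 2 * x 5 ^ 2 + ((-1 : ℂ)/4) * x 1 * x 2 ^ 2 * x 4 ^ 4 + ((-1 : ℂ)/3) * x 1 * x 2 ^ 2 * x 3 * x 4 * x 5 ^ 2 + ((-1 : ℂ)/3) * x 1 * x 2 ^ 2 * x 3 * x 4 ^ 2 * x 5 + ((1 : ℂ)/2) * x 1 * x 2 ^ 2 * x 3 ^ 2 * x 5 ^ 2 + ((-1 : ℂ)/3) * x 1 * x 2 ^ 2 * x 3 ^ 2 * x 4 * x 5 + ((1 : ℂ)/2) * x 1 * x 2 ^ 2 * x 3 ^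 2 * x 4 ^ 2 + ((-1 : ℂ)/4) * x 1 * x 2 ^ 2 * x 3 ^ 4 + ((1 : ℂ)/6) * x 1 * x 2 ^ 3 * x 5 ^ 3 + ((1 : ℂ)/6) * x 1 * x 2 ^ 3 * x 4 ^ 3 + ((1 : ℂ)/6) * x 1 * x 2 ^ 3 * x 3 ^ 3 + ((-1 : ℂ)/4) * x 1 * x 2 ^ 4 * x 5 ^ 2 + ((1 : ℂ)/6) * x 1 * x 2 ^ 4 * x 4 * x 5 + ((-1 : ℂ)/4) * x 1 * x 2 ^ 4 * x 4 ^ 2 + ((1 : ℂ)/6) * x 1 * x 2 ^ 4 * x 3 * x 5 + ((1 : ℂ)/6) * x 1 * x 2 ^ 4 * x 3 * x 4 + ((-1 : ℂ)/4) * x 1 * x 2 ^ 4 * x 3 ^ 2 + ((-1 : ℂ)/6) * x 1 * x 2 ^ 5 * x 5 + ((-1 : ℂ)/6) * x 1 * x 2 ^ 5 * x 4 + ((-1 : ℂ)/6) * x 1 * x 2 ^ 5 * x 3 + ((1 : ℂ)/6) * x 1 * x 2 ^ 6 + ((11 : ℂ)/12) * x 1 ^ 2 * x 5 ^ 5 +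 ((-1 : ℂ)/4) * x 1 ^ 2 * x 4 * x 5 ^ 4 + ((-1 : ℂ)/4) * x 1 ^ 2 * x 4 ^ 4 * x 5 + ((11 : ℂ)/12) * x 1 ^ 2 * x 4 ^ 5 + ((-1 : ℂ)/4) * x 1 ^ 2 * x 3 * x 5 ^ 4 + ((1 : ℂ)/2) * x 1 ^ 2 * x 3 * x 4 ^ 2 * x 5 ^ 2 + ((-1 : ℂ)/4) * x 1 ^ 2 * x 3 * x 4 ^ 4 + ((1 : ℂ)/2) * x 1 ^ 2 * x 3 ^ 2 * x 4 * x 5 ^ 2 + ((1 : ℂ)/2) * x 1 ^ 2 * x 3 ^ 2 * x 4 ^ 2 * x 5 + ((-1 : ℂ)/4) * x 1 ^ 2 * x 3 ^ 4 * x 5 + ((-1 : ℂ)/4) * x 1 ^ 2 * x 3 ^ 4 * x 4 + ((11 : ℂ)/12) * x 1 ^ 2 * x 3 ^ 5 + ((-1 : ℂ)/4) * x 1 ^ 2 * x 2 * x 5 ^ 4 + ((1 : ℂ)/2) * x 1 ^ 2 * x 2 * x 4 ^ 2 * x 5 ^ 2 + ((-1 : ℂ)/4) * x 1 ^ 2 *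 x 2 * x 4 ^ 4 + ((-1 : ℂ)/3) * x 1 ^ 2 * x 2 * x 3 * x 4 * x 5 ^ 2 + ((-1 : ℂ)/3) * x 1 ^ 2 * x 2 * x 3 * x 4 ^ 2 * x 5 + ((1 : ℂ)/2) * x 1 ^ 2 * x 2 * x 3 ^ 2 * x 5 ^ 2 + ((-1 : ℂ)/3) * x 1 ^ 2 * x 2 * x 3 ^ 2 * x 4 * x 5 + ((1 : ℂ)/2) * x 1 ^ 2 * x 2 * x 3 ^ 2 * x 4 ^ 2 + ((-1 : ℂ)/4) * x 1 ^ 2 * x 2 * x 3 ^ 4 + ((1 : ℂ)/2) * x 1 ^ 2 * x 2 ^ 2 * x 4 * x 5 ^ 2 + ((1 : ℂ)/2) * x 1 ^ 2 * x 2 ^ 2 * x 4 ^ 2 * x 5 + ((1 : ℂ)/2) * x 1 ^ 2 * x 2 ^ 2 * x 3 * x 5 ^ 2 + ((-1 : ℂ)/3) * x 1 ^ 2 * x 2 ^ 2 * x 3 * x 4 * x 5 + ((1 : ℂ)/2) * x 1 ^ 2 * x 2 ^ 2 * x 3 * x 4 ^ 2 + ((1 : ℂ)/2) * x 1 ^ 2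 * x 2 ^ 2 * x 3 ^ 2 * x 5 + ((1 : ℂ)/2) * x 1 ^ 2 * x 2 ^ 2 * x 3 ^ 2 * x 4 + ((-1 : ℂ)/4) * x 1 ^ 2 * x 2 ^ 4 * x 5 + ((-1 : ℂ)/4) * x 1 ^ 2 * x 2 ^ 4 * x 4 + ((-1 : ℂ)/4) * x 1 ^ 2 * x 2 ^ 4 * x 3 + ((11 : ℂ)/12) * x 1 ^ 2 * x 2 ^ 5 + ((1 : ℂ)/6) * x 1 ^ 3 * x 5 ^ 4 + ((1 : ℂ)/6) * x 1 ^ 3 * x 4 * x 5 ^ 3 + ((1 : ℂ)/6) * x 1 ^ 3 * x 4 ^ 3 * x 5 + ((1 : ℂ)/6) * x 1 ^ 3 * x 4 ^ 4 + ((1 : ℂ)/6) * x 1 ^ 3 * x 3 * x 5 ^ 3 + ((1 : ℂ)/6) * x 1 ^ 3 * x 3 * x 4 ^ 3 + ((1 : ℂ)/6) * x 1 ^ 3 * x 3 ^ 3 * x 5 + ((1 : ℂ)/6) * x 1 ^ 3 * x 3 ^ 3 * x 4 + ((1 : ℂ)/6) * x 1 ^ 3 * x 3 ^ 4 + ((1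 : ℂ)/6) * x 1 ^ 3 * x 2 * x 5 ^ 3 + ((1 : ℂ)/6) * x 1 ^ 3 * x 2 * x 4 ^ 3 + ((1 : ℂ)/6) * x 1 ^ 3 * x 2 * x 3 ^ 3 + ((1 : ℂ)/6) * x 1 ^ 3 * x 2 ^ 3 * x 5 + ((1 : ℂ)/6) * x 1 ^ 3 * x 2 ^ 3 * x 4 + ((1 : ℂ)/6) * x 1 ^ 3 * x 2 ^ 3 * x 3 + ((1 : ℂ)/6) * x 1 ^ 3 * x 2 ^ 4 + ((1 : ℂ)/6) * x 1 ^ 4 * x 5 ^ 3 + ((-1 : ℂ)/4) * x 1 ^ 4 * x 4 * x 5 ^ 2 + ((-1 : ℂ)/4) * x 1 ^ 4 * x 4 ^ 2 * x 5 + ((1 : ℂ)/6) * x 1 ^ 4 * x 4 ^ 3 + ((-1 : ℂ)/4) * x 1 ^ 4 * x 3 * x 5 ^ 2 + ((1 : ℂ)/6) * x 1 ^ 4 * x 3 * x 4 * x 5 + ((-1 : ℂ)/4) * x 1 ^ 4 * x 3 * x 4 ^ 2 + ((-1 : ℂ)/4) * x 1 ^ 4 * x 3 ^ 2 * x 5 +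 ((-1 : ℂ)/4) * x 1 ^ 4 * x 3 ^ 2 * x 4 + ((1 : ℂ)/6) * x 1 ^ 4 * x 3 ^ 3 + ((-1 : ℂ)/4) * x 1 ^ 4 * x 2 * x 5 ^ 2 + ((1 : ℂ)/6) * x 1 ^ 4 * x 2 * x 4 * x 5 + ((-1 : ℂ)/4) * x 1 ^ 4 * x 2 * x 4 ^ 2 + ((1 : ℂ)/6) * x 1 ^ 4 * x 2 * x 3 * x 5 + ((1 : ℂ)/6) * x 1 ^ 4 * x 2 * x 3 * x 4 + ((-1 : ℂ)/4) * x 1 ^ 4 * x 2 * x 3 ^ 2 + ((-1 : ℂ)/4) * x 1 ^ 4 * x 2 ^ 2 * x 5 + ((-1 : ℂ)/4) * x 1 ^ 4 * x 2 ^ 2 * x 4 + ((-1 : ℂ)/4) * x 1 ^ 4 * x 2 ^ 2 * x 3 + ((1 : ℂ)/6) * x 1 ^ 4 * x 2 ^ 3 + ((11 : ℂ)/12) * x 1 ^ 5 * x 5 ^ 2 + ((-1 : ℂ)/6) * x 1 ^ 5 * x 4 * x 5 + ((11 : ℂ)/12) * x 1 ^ 5 * x 4 ^ 2 + ((-1 :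 ℂ)/6) * x 1 ^ 5 * x 3 * x 5 + ((-1 : ℂ)/6) * x 1 ^ 5 * x 3 * x 4 + ((11 : ℂ)/12) * x 1 ^ 5 * x 3 ^ 2 + ((-1 : ℂ)/6) * x 1 ^ 5 * x 2 * x 5 + ((-1 : ℂ)/6) * x 1 ^ 5 * x 2 * x 4 + ((-1 : ℂ)/6) * x 1 ^ 5 * x 2 * x 3 + ((11 : ℂ)/12) * x 1 ^ 5 * x 2 ^ 2 + ((1 : ℂ)/6) * x 1 ^ 6 * x 5 + ((1 : ℂ)/6) * x 1 ^ 6 * x 4 + ((1 : ℂ)/6) * x 1 ^ 6 * x 3 + ((1 : ℂ)/6) * x 1 ^ 6 * x 2 + ((-1 : ℂ)/4) * x 1 ^ 7 + ((-1 : ℂ)/4) * x 0 * x 5 ^ 6 + ((1 : ℂ)/12) * x 0 * x 4 * x 5 ^ 5 + ((-2 : ℂ)/3) * x 0 * x 4 ^ 3 * x 5 ^ 3 + ((1 : ℂ)/12) * x 0 * x 4 ^ 5 * x 5 + ((-1 : ℂ)/4) * x 0 * x 4 ^ 6 + ((1 : ℂ)/12) * x 0 * x 3 * x 5 ^ 5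 + ((1 : ℂ)/4) * x 0 * x 3 * x 4 ^ 2 * x 5 ^ 3 + ((1 : ℂ)/4) * x 0 * x 3 * x 4 ^ 3 * x 5 ^ 2 + ((1 : ℂ)/12) * x 0 * x 3 * x 4 ^ 5 + ((1 : ℂ)/4) * x 0 * x 3 ^ 2 * x 4 * x 5 ^ 3 + ((1 : ℂ)/2) * x 0 * x 3 ^ 2 * x 4 ^ 2 * x 5 ^ 2 + ((1 : ℂ)/4) * x 0 * x 3 ^ 2 * x 4 ^ 3 * x 5 + ((-2 : ℂ)/3) * x 0 * x 3 ^ 3 * x 5 ^ 3 + ((1 : ℂ)/4) * x 0 * x 3 ^ 3 * x 4 * x 5 ^ 2 + ((1 : ℂ)/4) * x 0 * x 3 ^ 3 * x 4 ^ 2 * x 5 + ((-2 : ℂ)/3) * x 0 * x 3 ^ 3 * x 4 ^ 3 + ((1 : ℂ)/12) * x 0 * x 3 ^ 5 * x 5 + ((1 : ℂ)/12) * x 0 * x 3 ^ 5 * x 4 + ((-1 : ℂ)/4) * x 0 * x 3 ^ 6 + ((1 : ℂ)/12) * x 0 * x 2 * x 5 ^ 5 + ((1 : ℂ)/4) * x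 0 * x 2 * x 4 ^ 2 * x 5 ^ 3 + ((1 : ℂ)/4) * x 0 * x 2 * x 4 ^ 3 * x 5 ^ 2 + ((1 : ℂ)/12) * x 0 * x 2 * x 4 ^ 5 + ((-1 : ℂ)/6) * x 0 * x 2 * x 3 * x 4 * x 5 ^ 3 + ((-1 : ℂ)/3) * x 0 * x 2 * x 3 * x 4 ^ 2 * x 5 ^ 2 + ((-1 : ℂ)/6) * x 0 * x 2 * x 3 * x 4 ^ 3 * x 5 + ((1 : ℂ)/4) * x 0 * x 2 * x 3 ^ 2 * x 5 ^ 3 + ((-1 : ℂ)/3) * x 0 * x 2 * x 3 ^ 2 * x 4 * x 5 ^ 2 + ((-1 : ℂ)/3) * x 0 * x 2 * x 3 ^ 2 * x 4 ^ 2 * x 5 + ((1 : ℂ)/4) * x 0 * x 2 * x 3 ^ 2 * x 4 ^ 3 + ((1 : ℂ)/4) * x 0 * x 2 * x 3 ^ 3 * x 5 ^ 2 + ((-1 : ℂ)/6) * x 0 * x 2 * x 3 ^ 3 * x 4 * x 5 + ((1 : ℂ)/4) * x 0 * x 2 * x 3 ^ 3 * x 4 ^ 2 + ((1 : ℂ)/12)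 * x 0 * x 2 * x 3 ^ 5 + ((1 : ℂ)/4) * x 0 * x 2 ^ 2 * x 4 * x 5 ^ 3 + ((1 : ℂ)/2) * x 0 * x 2 ^ 2 * x 4 ^ 2 * x 5 ^ 2 + ((1 : ℂ)/4) * x 0 * x 2 ^ 2 * x 4 ^ 3 * x 5 + ((1 : ℂ)/4) * x 0 * x 2 ^ 2 * x 3 * x 5 ^ 3 + ((-1 : ℂ)/3) * x 0 * x 2 ^ 2 * x 3 * x 4 * x 5 ^ 2 + ((-1 : ℂ)/3) * x 0 * x 2 ^ 2 * x 3 * x 4 ^ 2 * x 5 + ((1 : ℂ)/4) * x 0 * x 2 ^ 2 * x 3 * x 4 ^ 3 + ((1 : ℂ)/2) * x 0 * x 2 ^ 2 * x 3 ^ 2 * x 5 ^ 2 + ((-1 : ℂ)/3) * x 0 * x 2 ^ 2 * x 3 ^ 2 * x 4 * x 5 + ((1 : ℂ)/2) * x 0 * x 2 ^ 2 * x 3 ^ 2 * x 4 ^ 2 + ((1 : ℂ)/4) * x 0 * x 2 ^ 2 * x 3 ^ 3 * x 5 + ((1 : ℂ)/4) * x 0 * x 2 ^ 2 * x 3 ^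 3 * x 4 + ((-2 : ℂ)/3) * x 0 * x 2 ^ 3 * x 5 ^ 3 + ((1 : ℂ)/4) * x 0 * x 2 ^ 3 * x 4 * x 5 ^ 2 + ((1 : ℂ)/4) * x 0 * x 2 ^ 3 * x 4 ^ 2 * x 5 + ((-2 : ℂ)/3) * x 0 * x 2 ^ 3 * x 4 ^ 3 + ((1 : ℂ)/4) * x 0 * x 2 ^ 3 * x 3 * x 5 ^ 2 + ((-1 : ℂ)/6) * x 0 * x 2 ^ 3 * x 3 * x 4 * x 5 + ((1 : ℂ)/4) * x 0 * x 2 ^ 3 * x 3 * x 4 ^ 2 + ((1 : ℂ)/4) * x 0 * x 2 ^ 3 * x 3 ^ 2 * x 5 + ((1 : ℂ)/4) * x 0 * x 2 ^ 3 * x 3 ^ 2 * x 4 + ((-2 : ℂ)/3) * x 0 * x 2 ^ 3 * x 3 ^ 3 + ((1 : ℂ)/12) * x 0 * x 2 ^ 5 * x 5 + ((1 : ℂ)/12) * x 0 * x 2 ^ 5 * x 4 + ((1 : ℂ)/12) * x 0 * x 2 ^ 5 * x 3 + ((-1 : ℂ)/4) * x 0 * x 2 ^ 6 + ((1 : ℂ)/12)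 * x 0 * x 1 * x 5 ^ 5 + ((1 : ℂ)/4) * x 0 * x 1 * x 4 ^ 2 * x 5 ^ 3 + ((1 : ℂ)/4) * x 0 * x 1 * x 4 ^ 3 * x 5 ^ 2 + ((1 : ℂ)/12) * x 0 * x 1 * x 4 ^ 5 + ((-1 : ℂ)/6) * x 0 * x 1 * x 3 * x 4 * x 5 ^ 3 + ((-1 : ℂ)/3) * x 0 * x 1 * x 3 * x 4 ^ 2 * x 5 ^ 2 + ((-1 : ℂ)/6) * x 0 * x 1 * x 3 * x 4 ^ 3 * x 5 + ((1 : ℂ)/4) * x 0 * x 1 * x 3 ^ 2 * x 5 ^ 3 + ((-1 : ℂ)/3) * x 0 * x 1 * x 3 ^ 2 * x 4 * x 5 ^ 2 + ((-1 : ℂ)/3) * x 0 * x 1 * x 3 ^ 2 * x 4 ^ 2 * x 5 + ((1 : ℂ)/4) * x 0 * x 1 * x 3 ^ 2 * x 4 ^ 3 + ((1 : ℂ)/4) * x 0 * x 1 * x 3 ^ 3 * x 5 ^ 2 + ((-1 : ℂ)/6) * x 0 * x 1 * x 3 ^ 3 * x 4 * x 5 + ((1 : ℂ)/4) * x 0 *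 x 1 * x 3 ^ 3 * x 4 ^ 2 + ((1 : ℂ)/12) * x 0 * x 1 * x 3 ^ 5 + ((-1 : ℂ)/6) * x 0 * x 1 * x 2 * x 4 * x 5 ^ 3 + ((-1 : ℂ)/3) * x 0 * x 1 * x 2 * x 4 ^ 2 * x 5 ^ 2 + ((-1 : ℂ)/6) * x 0 * x 1 * x 2 * x 4 ^ 3 * x 5 + ((-1 : ℂ)/6) * x 0 * x 1 * x 2 * x 3 * x 5 ^ 3 + ((2 : ℂ)/3) * x 0 * x 1 * x 2 * x 3 * x 4 * x 5 ^ 2 + ((2 : ℂ)/3) * x 0 * x 1 * x 2 * x 3 * x 4 ^ 2 * x 5 + ((-1 : ℂ)/6) * x 0 * x 1 * x 2 * x 3 * x 4 ^ 3 + ((-1 : ℂ)/3) * x 0 * x 1 * x 2 * x 3 ^ 2 * x 5 ^ 2 + ((2 : ℂ)/3) * x 0 * x 1 * x 2 * x 3 ^ 2 * x 4 * x 5 + ((-1 : ℂ)/3) * x 0 * x 1 * x 2 * x 3 ^ 2 * x 4 ^ 2 + ((-1 : ℂ)/6) * x 0 * x 1 * x 2 * x 3 ^ 3 * x 5 + ((-1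 : ℂ)/6) * x 0 * x 1 * x 2 * x 3 ^ 3 * x 4 + ((1 : ℂ)/4) * x 0 * x 1 * x 2 ^ 2 * x 5 ^ 3 + ((-1 : ℂ)/3) * x 0 * x 1 * x 2 ^ 2 * x 4 * x 5 ^ 2 + ((-1 : ℂ)/3) * x 0 * x 1 * x 2 ^ 2 * x 4 ^ 2 * x 5 + ((1 : ℂ)/4) * x 0 * x 1 * x 2 ^ 2 * x 4 ^ 3 + ((-1 : ℂ)/3) * x 0 * x 1 * x 2 ^ 2 * x 3 * x 5 ^ 2 + ((2 : ℂ)/3) * x 0 * x 1 * x 2 ^ 2 * x 3 * x 4 * x 5 + ((-1 : ℂ)/3) * x 0 * x 1 * x 2 ^ 2 * x 3 * x 4 ^ 2 + ((-1 : ℂ)/3) * x 0 * x 1 * x 2 ^ 2 * x 3 ^ 2 * x 5 + ((-1 : ℂ)/3) * x 0 * x 1 * x 2 ^ 2 * x 3 ^ 2 * x 4 + ((1 : ℂ)/4) * x 0 * x 1 * x 2 ^ 2 * x 3 ^ 3 + ((1 : ℂ)/4) * x 0 * x 1 * x 2 ^ 3 * x 5 ^ 2 + ((-1 : ℂ)/6)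 * x 0 * x 1 * x 2 ^ 3 * x 4 * x 5 + ((1 : ℂ)/4) * x 0 * x 1 * x 2 ^ 3 * x 4 ^ 2 + ((-1 : ℂ)/6) * x 0 * x 1 * x 2 ^ 3 * x 3 * x 5 + ((-1 : ℂ)/6) * x 0 * x 1 * x 2 ^ 3 * x 3 * x 4 + ((1 : ℂ)/4) * x 0 * x 1 * x 2 ^ 3 * x 3 ^ 2 + ((1 : ℂ)/12) * x 0 * x 1 * x 2 ^ 5 + ((1 : ℂ)/4) * x 0 * x 1 ^ 2 * x 4 * x 5 ^ 3 + ((1 : ℂ)/2) * x 0 * x 1 ^ 2 * x 4 ^ 2 * x 5 ^ 2 + ((1 : ℂ)/4) * x 0 * x 1 ^ 2 * x 4 ^ 3 * x 5 + ((1 : ℂ)/4) * x 0 * x 1 ^ 2 * x 3 * x 5 ^ 3 + ((-1 : ℂ)/3) * x 0 * x 1 ^ 2 * x 3 * x 4 * x 5 ^ 2 + ((-1 : ℂ)/3) * x 0 * x 1 ^ 2 * x 3 * x 4 ^ 2 * x 5 + ((1 : ℂ)/4) * x 0 * x 1 ^ 2 * x 3 * x 4 ^ 3 + ((1 : ℂ)/2)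 * x 0 * x 1 ^ 2 * x 3 ^ 2 * x 5 ^ 2 + ((-1 : ℂ)/3) * x 0 * x 1 ^ 2 * x 3 ^ 2 * x 4 * x 5 + ((1 : ℂ)/2) * x 0 * x 1 ^ 2 * x 3 ^ 2 * x 4 ^ 2 + ((1 : ℂ)/4) * x 0 * x 1 ^ 2 * x 3 ^ 3 * x 5 + ((1 : ℂ)/4) * x 0 * x 1 ^ 2 * x 3 ^ 3 * x 4 + ((1 : ℂ)/4) * x 0 * x 1 ^ 2 * x 2 * x 5 ^ 3 + ((-1 : ℂ)/3) * x 0 * x 1 ^ 2 * x 2 * x 4 * x 5 ^ 2 + ((-1 : ℂ)/3) * x 0 * x 1 ^ 2 * x 2 * x 4 ^ 2 * x 5 + ((1 : ℂ)/4) * x 0 * x 1 ^ 2 * x 2 * x 4 ^ 3 + ((-1 : ℂ)/3) * x 0 * x 1 ^ 2 * x 2 * x 3 * x 5 ^ 2 + ((2 : ℂ)/3) * x 0 * x 1 ^ 2 * x 2 * x 3 * x 4 * x 5 + ((-1 : ℂ)/3) * x 0 * x 1 ^ 2 * x 2 * x 3 * x 4 ^ 2 + ((-1 : ℂ)/3)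 * x 0 * x 1 ^ 2 * x 2 * x 3 ^ 2 * x 5 + ((-1 : ℂ)/3) * x 0 * x 1 ^ 2 * x 2 * x 3 ^ 2 * x 4 + ((1 : ℂ)/4) * x 0 * x 1 ^ 2 * x 2 * x 3 ^ 3 + ((1 : ℂ)/2) * x 0 * x 1 ^ 2 * x 2 ^ 2 * x 5 ^ 2 + ((-1 : ℂ)/3) * x 0 * x 1 ^ 2 * x 2 ^ 2 * x 4 * x 5 + ((1 : ℂ)/2) * x 0 * x 1 ^ 2 * x 2 ^ 2 * x 4 ^ 2 + ((-1 : ℂ)/3) * x 0 * x 1 ^ 2 * x 2 ^ 2 * x 3 * x 5 + ((-1 : ℂ)/3) * x 0 * x 1 ^ 2 * x 2 ^ 2 * x 3 * x 4 + ((1 : ℂ)/2) * x 0 * x 1 ^ 2 * x 2 ^ 2 * x 3 ^ 2 + ((1 : ℂ)/4) * x 0 * x 1 ^ 2 * x 2 ^ 3 * x 5 + ((1 : ℂ)/4) * x 0 * x 1 ^ 2 * x 2 ^ 3 * x 4 + ((1 : ℂ)/4) * x 0 * x 1 ^ 2 * x 2 ^ 3 * x 3 + ((-2 : ℂ)/3)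 * x 0 * x 1 ^ 3 * x 5 ^ 3 + ((1 : ℂ)/4) * x 0 * x 1 ^ 3 * x 4 * x 5 ^ 2 + ((1 : ℂ)/4) * x 0 * x 1 ^ 3 * x 4 ^ 2 * x 5 + ((-2 : ℂ)/3) * x 0 * x 1 ^ 3 * x 4 ^ 3 + ((1 : ℂ)/4) * x 0 * x 1 ^ 3 * x 3 * x 5 ^ 2 + ((-1 : ℂ)/6) * x 0 * x 1 ^ 3 * x 3 * x 4 * x 5 + ((1 : ℂ)/4) * x 0 * x 1 ^ 3 * x 3 * x 4 ^ 2 + ((1 : ℂ)/4) * x 0 * x 1 ^ 3 * x 3 ^ 2 * x 5 + ((1 : ℂ)/4) * x 0 * x 1 ^ 3 * x 3 ^ 2 * x 4 + ((-2 : ℂ)/3) * x 0 * x 1 ^ 3 * x 3 ^ 3 + ((1 : ℂ)/4) * x 0 * x 1 ^ 3 * x 2 * x 5 ^ 2 + ((-1 : ℂ)/6) * x 0 * x 1 ^ 3 * x 2 * x 4 * x 5 + ((1 : ℂ)/4) * x 0 * x 1 ^ 3 * x 2 * x 4 ^ 2 + ((-1 : ℂ)/6) * x 0 * x 1 ^ 3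 * x 2 * x 3 * x 5 + ((-1 : ℂ)/6) * x 0 * x 1 ^ 3 * x 2 * x 3 * x 4 + ((1 : ℂ)/4) * x 0 * x 1 ^ 3 * x 2 * x 3 ^ 2 + ((1 : ℂ)/4) * x 0 * x 1 ^ 3 * x 2 ^ 2 * x 5 + ((1 : ℂ)/4) * x 0 * x 1 ^ 3 * x 2 ^ 2 * x 4 + ((1 : ℂ)/4) * x 0 * x 1 ^ 3 * x 2 ^ 2 * x 3 + ((-2 : ℂ)/3) * x 0 * x 1 ^ 3 * x 2 ^ 3 + ((1 : ℂ)/12) * x 0 * x 1 ^ 5 * x 5 + ((1 : ℂ)/12) * x 0 * x 1 ^ 5 * x 4 + ((1 : ℂ)/12) * x 0 * x 1 ^ 5 * x 3 + ((1 : ℂ)/12) * x 0 * x 1 ^ 5 * x 2 + ((-1 : ℂ)/4) * x 0 * x 1 ^ 6 + ((-1 : ℂ)/12) * x 0 ^ 2 * x 4 * x 5 ^ 4 + ((-11 : ℂ)/12) * x 0 ^ 2 * x 4 ^ 2 * x 5 ^ 3 + ((-11 : ℂ)/12) * x 0 ^ 2 * x 4 ^ 3 * x 5 ^ 2 + ((-1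 : ℂ)/12) * x 0 ^ 2 * x 4 ^ 4 * x 5 + ((-1 : ℂ)/12) * x 0 ^ 2 * x 3 * x 5 ^ 4 + ((1 : ℂ)/6) * x 0 ^ 2 * x 3 * x 4 * x 5 ^ 3 + ((1 : ℂ)/2) * x 0 ^ 2 * x 3 * x 4 ^ 2 * x 5 ^ 2 + ((1 : ℂ)/6) * x 0 ^ 2 * x 3 * x 4 ^ 3 * x 5 + ((-1 : ℂ)/12) * x 0 ^ 2 * x 3 * x 4 ^ 4 + ((-11 : ℂ)/12) * x 0 ^ 2 * x 3 ^ 2 * x 5 ^ 3 + ((1 : ℂ)/2) * x 0 ^ 2 * x 3 ^ 2 * x 4 * x 5 ^ 2 + ((1 : ℂ)/2) * x 0 ^ 2 * x 3 ^ 2 * x 4 ^ 2 * x 5 + ((-11 : ℂ)/12) * x 0 ^ 2 * x 3 ^ 2 * x 4 ^ 3 + ((-11 : ℂ)/12) * x 0 ^ 2 * x 3 ^ 3 * x 5 ^ 2 + ((1 : ℂ)/6) * x 0 ^ 2 * x 3 ^ 3 * x 4 * x 5 + ((-11 : ℂ)/12) * x 0 ^ 2 * x 3 ^ 3 * x 4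 ^ 2 + ((-1 : ℂ)/12) * x 0 ^ 2 * x 3 ^ 4 * x 5 + ((-1 : ℂ)/12) * x 0 ^ 2 * x 3 ^ 4 * x 4 + ((-1 : ℂ)/12) * x 0 ^ 2 * x 2 * x 5 ^ 4 + ((1 : ℂ)/6) * x 0 ^ 2 * x 2 * x 4 * x 5 ^ 3 + ((1 : ℂ)/2) * x 0 ^ 2 * x 2 * x 4 ^ 2 * x 5 ^ 2 + ((1 : ℂ)/6) * x 0 ^ 2 * x 2 * x 4 ^ 3 * x 5 + ((-1 : ℂ)/12) * x 0 ^ 2 * x 2 * x 4 ^ 4 + ((1 : ℂ)/6) * x 0 ^ 2 * x 2 * x 3 * x 5 ^ 3 + ((-1 : ℂ)/3) * x 0 ^ 2 * x 2 * x 3 * x 4 * x 5 ^ 2 + ((-1 : ℂ)/3) * x 0 ^ 2 * x 2 * x 3 * x 4 ^ 2 * x 5 + ((1 : ℂ)/6) * x 0 ^ 2 * x 2 * x 3 * x 4 ^ 3 + ((1 : ℂ)/2) * x 0 ^ 2 * x 2 * x 3 ^ 2 * x 5 ^ 2 + ((-1 : ℂ)/3) * x 0 ^ 2 * x 2 * x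 3 ^ 2 * x 4 * x 5 + ((1 : ℂ)/2) * x 0 ^ 2 * x 2 * x 3 ^ 2 * x 4 ^ 2 + ((1 : ℂ)/6) * x 0 ^ 2 * x 2 * x 3 ^ 3 * x 5 + ((1 : ℂ)/6) * x 0 ^ 2 * x 2 * x 3 ^ 3 * x 4 + ((-1 : ℂ)/12) * x 0 ^ 2 * x 2 * x 3 ^ 4 + ((-11 : ℂ)/12) * x 0 ^ 2 * x 2 ^ 2 * x 5 ^ 3 + ((1 : ℂ)/2) * x 0 ^ 2 * x 2 ^ 2 * x 4 * x 5 ^ 2 + ((1 : ℂ)/2) * x 0 ^ 2 * x 2 ^ 2 * x 4 ^ 2 * x 5 + ((-11 : ℂ)/12) * x 0 ^ 2 * x 2 ^ 2 * x 4 ^ 3 + ((1 : ℂ)/2) * x 0 ^ 2 * x 2 ^ 2 * x 3 * x 5 ^ 2 + ((-1 : ℂ)/3) * x 0 ^ 2 * x 2 ^ 2 * x 3 * x 4 * x 5 + ((1 : ℂ)/2) * x 0 ^ 2 * x 2 ^ 2 * x 3 * x 4 ^ 2 + ((1 : ℂ)/2) * x 0 ^ 2 * x 2 ^ 2 * x 3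 ^ 2 * x 5 + ((1 : ℂ)/2) * x 0 ^ 2 * x 2 ^ 2 * x 3 ^ 2 * x 4 + ((-11 : ℂ)/12) * x 0 ^ 2 * x 2 ^ 2 * x 3 ^ 3 + ((-11 : ℂ)/12) * x 0 ^ 2 * x 2 ^ 3 * x 5 ^ 2 + ((1 : ℂ)/6) * x 0 ^ 2 * x 2 ^ 3 * x 4 * x 5 + ((-11 : ℂ)/12) * x 0 ^ 2 * x 2 ^ 3 * x 4 ^ 2 + ((1 : ℂ)/6) * x 0 ^ 2 * x 2 ^ 3 * x 3 * x 5 + ((1 : ℂ)/6) * x 0 ^ 2 * x 2 ^ 3 * x 3 * x 4 + ((-11 : ℂ)/12) * x 0 ^ 2 * x 2 ^ 3 * x 3 ^ 2 + ((-1 : ℂ)/12) * x 0 ^ 2 * x 2 ^ 4 * x 5 + ((-1 : ℂ)/12) * x 0 ^ 2 * x 2 ^ 4 * x 4 + ((-1 : ℂ)/12) * x 0 ^ 2 * x 2 ^ 4 * x 3 + ((-1 : ℂ)/12) * x 0 ^ 2 * x 1 * x 5 ^ 4 + ((1 : ℂ)/6) * x 0 ^ 2 * x 1 * x 4 * x 5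 ^ 3 + ((1 : ℂ)/2) * x 0 ^ 2 * x 1 * x 4 ^ 2 * x 5 ^ 2 + ((1 : ℂ)/6) * x 0 ^ 2 * x 1 * x 4 ^ 3 * x 5 + ((-1 : ℂ)/12) * x 0 ^ 2 * x 1 * x 4 ^ 4 + ((1 : ℂ)/6) * x 0 ^ 2 * x 1 * x 3 * x 5 ^ 3 + ((-1 : ℂ)/3) * x 0 ^ 2 * x 1 * x 3 * x 4 * x 5 ^ 2 + ((-1 : ℂ)/3) * x 0 ^ 2 * x 1 * x 3 * x 4 ^ 2 * x 5 + ((1 : ℂ)/6) * x 0 ^ 2 * x 1 * x 3 * x 4 ^ 3 + ((1 : ℂ)/2) * x 0 ^ 2 * x 1 * x 3 ^ 2 * x 5 ^ 2 + ((-1 : ℂ)/3) * x 0 ^ 2 * x 1 * x 3 ^ 2 * x 4 * x 5 + ((1 : ℂ)/2) * x 0 ^ 2 * x 1 * x 3 ^ 2 * x 4 ^ 2 + ((1 : ℂ)/6) * x 0 ^ 2 * x 1 * x 3 ^ 3 * x 5 + ((1 : ℂ)/6) * x 0 ^ 2 * x 1 * x 3 ^ 3 * x 4 + ((-1 : ℂ)/12)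 * x 0 ^ 2 * x 1 * x 3 ^ 4 + ((1 : ℂ)/6) * x 0 ^ 2 * x 1 * x 2 * x 5 ^ 3 + ((-1 : ℂ)/3) * x 0 ^ 2 * x 1 * x 2 * x 4 * x 5 ^ 2 + ((-1 : ℂ)/3) * x 0 ^ 2 * x 1 * x 2 * x 4 ^ 2 * x 5 + ((1 : ℂ)/6) * x 0 ^ 2 * x 1 * x 2 * x 4 ^ 3 + ((-1 : ℂ)/3) * x 0 ^ 2 * x 1 * x 2 * x 3 * x 5 ^ 2 + ((2 : ℂ)/3) * x 0 ^ 2 * x 1 * x 2 * x 3 * x 4 * x 5 + ((-1 : ℂ)/3) * x 0 ^ 2 * x 1 * x 2 * x 3 * x 4 ^ 2 + ((-1 : ℂ)/3) * x 0 ^ 2 * x 1 * x 2 * x 3 ^ 2 * x 5 + ((-1 : ℂ)/3) * x 0 ^ 2 * x 1 * x 2 * x 3 ^ 2 * x 4 + ((1 : ℂ)/6) * x 0 ^ 2 * x 1 * x 2 * x 3 ^ 3 + ((1 : ℂ)/2) * x 0 ^ 2 * x 1 * x 2 ^ 2 * x 5 ^ 2 + ((-1 : ℂ)/3) * x 0 ^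 2 * x 1 * x 2 ^ 2 * x 4 * x 5 + ((1 : ℂ)/2) * x 0 ^ 2 * x 1 * x 2 ^ 2 * x 4 ^ 2 + ((-1 : ℂ)/3) * x 0 ^ 2 * x 1 * x 2 ^ 2 * x 3 * x 5 + ((-1 : ℂ)/3) * x 0 ^ 2 * x 1 * x 2 ^ 2 * x 3 * x 4 + ((1 : ℂ)/2) * x 0 ^ 2 * x 1 * x 2 ^ 2 * x 3 ^ 2 + ((1 : ℂ)/6) * x 0 ^ 2 * x 1 * x 2 ^ 3 * x 5 + ((1 : ℂ)/6) * x 0 ^ 2 * x 1 * x 2 ^ 3 * x 4 + ((1 : ℂ)/6) * x 0 ^ 2 * x 1 * x 2 ^ 3 * x 3 + ((-1 : ℂ)/12) * x 0 ^ 2 * x 1 * x 2 ^ 4 + ((-11 : ℂ)/12) * x 0 ^ 2 * x 1 ^ 2 * x 5 ^ 3 + ((1 : ℂ)/2) * x 0 ^ 2 * x 1 ^ 2 * x 4 * x 5 ^ 2 + ((1 : ℂ)/2) * x 0 ^ 2 * x 1 ^ 2 * x 4 ^ 2 * x 5 + ((-11 : ℂ)/12) * x 0 ^ 2 * x 1 ^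 2 * x 4 ^ 3 + ((1 : ℂ)/2) * x 0 ^ 2 * x 1 ^ 2 * x 3 * x 5 ^ 2 + ((-1 : ℂ)/3) * x 0 ^ 2 * x 1 ^ 2 * x 3 * x 4 * x 5 + ((1 : ℂ)/2) * x 0 ^ 2 * x 1 ^ 2 * x 3 * x 4 ^ 2 + ((1 : ℂ)/2) * x 0 ^ 2 * x 1 ^ 2 * x 3 ^ 2 * x 5 + ((1 : ℂ)/2) * x 0 ^ 2 * x 1 ^ 2 * x 3 ^ 2 * x 4 + ((-11 : ℂ)/12) * x 0 ^ 2 * x 1 ^ 2 * x 3 ^ 3 + ((1 : ℂ)/2) * x 0 ^ 2 * x 1 ^ 2 * x 2 * x 5 ^ 2 + ((-1 : ℂ)/3) * x 0 ^ 2 * x 1 ^ 2 * x 2 * x 4 * x 5 + ((1 : ℂ)/2) * x 0 ^ 2 * x 1 ^ 2 * x 2 * x 4 ^ 2 + ((-1 : ℂ)/3) * x 0 ^ 2 * x 1 ^ 2 * x 2 * x 3 * x 5 + ((-1 : ℂ)/3) * x 0 ^ 2 * x 1 ^ 2 * x 2 * x 3 * x 4 + ((1 : ℂ)/2) * x 0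 ^ 2 * x 1 ^ 2 * x 2 * x 3 ^ 2 + ((1 : ℂ)/2) * x 0 ^ 2 * x 1 ^ 2 * x 2 ^ 2 * x 5 + ((1 : ℂ)/2) * x 0 ^ 2 * x 1 ^ 2 * x 2 ^ 2 * x 4 + ((1 : ℂ)/2) * x 0 ^ 2 * x 1 ^ 2 * x 2 ^ 2 * x 3 + ((-11 : ℂ)/12) * x 0 ^ 2 * x 1 ^ 2 * x 2 ^ 3 + ((-11 : ℂ)/12) * x 0 ^ 2 * x 1 ^ 3 * x 5 ^ 2 + ((1 : ℂ)/6) * x 0 ^ 2 * x 1 ^ 3 * x 4 * x 5 + ((-11 : ℂ)/12) * x 0 ^ 2 * x 1 ^ 3 * x 4 ^ 2 + ((1 : ℂ)/6) * x 0 ^ 2 * x 1 ^ 3 * x 3 * x 5 + ((1 : ℂ)/6) * x 0 ^ 2 * x 1 ^ 3 * x 3 * x 4 + ((-11 : ℂ)/12) * x 0 ^ 2 * x 1 ^ 3 * x 3 ^ 2 + ((1 : ℂ)/6) * x 0 ^ 2 * x 1 ^ 3 * x 2 * x 5 + ((1 : ℂ)/6) * x 0 ^ 2 * x 1 ^ 3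 * x 2 * x 4 + ((1 : ℂ)/6) * x 0 ^ 2 * x 1 ^ 3 * x 2 * x 3 + ((-11 : ℂ)/12) * x 0 ^ 2 * x 1 ^ 3 * x 2 ^ 2 + ((-1 : ℂ)/12) * x 0 ^ 2 * x 1 ^ 4 * x 5 + ((-1 : ℂ)/12) * x 0 ^ 2 * x 1 ^ 4 * x 4 + ((-1 : ℂ)/12) * x 0 ^ 2 * x 1 ^ 4 * x 3 + ((-1 : ℂ)/12) * x 0 ^ 2 * x 1 ^ 4 * x 2)) * h1 + (b^4 * ((-1 : ℂ) * x 5 ^ 5 + ((1 : ℂ)/12) * x 4 * x 5 ^ 4 + ((-1 : ℂ)/12) * x 4 ^ 2 * x 5 ^ 3 + ((-1 : ℂ)/12) * x 4 ^ 3 * x 5 ^ 2 + ((1 : ℂ)/12) * x 4 ^ 4 * x 5 + (-1 : ℂ) * x 4 ^ 5 + ((1 : ℂ)/12) * x 3 * x 5 ^ 4 + ((-1 : ℂ)/6) * x 3 * x 4 * x 5 ^ 3 + ((-1 : ℂ)/2) * x 3 * x 4 ^ 2 * x 5 ^ 2 + ((-1 : ℂ)/6) * x 3 * x 4 ^ 3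 * x 5 + ((1 : ℂ)/12) * x 3 * x 4 ^ 4 + ((-1 : ℂ)/12) * x 3 ^ 2 * x 5 ^ 3 + ((-1 : ℂ)/2) * x 3 ^ 2 * x 4 * x 5 ^ 2 + ((-1 : ℂ)/2) * x 3 ^ 2 * x 4 ^ 2 * x 5 + ((-1 : ℂ)/12) * x 3 ^ 2 * x 4 ^ 3 + ((-1 : ℂ)/12) * x 3 ^ 3 * x 5 ^ 2 + ((-1 : ℂ)/6) * x 3 ^ 3 * x 4 * x 5 + ((-1 : ℂ)/12) * x 3 ^ 3 * x 4 ^ 2 + ((1 : ℂ)/12) * x 3 ^ 4 * x 5 + ((1 : ℂ)/12) * x 3 ^ 4 * x 4 + (-1 : ℂ) * x 3 ^ 5 + ((1 : ℂ)/12) * x 2 * x 5 ^ 4 + ((-1 : ℂ)/6) * x 2 * x 4 * x 5 ^ 3 + ((-1 : ℂ)/2) * x 2 * x 4 ^ 2 * x 5 ^ 2 + ((-1 : ℂ)/6) * x 2 * x 4 ^ 3 * x 5 + ((1 : ℂ)/12) * x 2 * x 4 ^ 4 + ((-1 : ℂ)/6) * x 2 * x 3 * x 5 ^ 3 + ((1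 : ℂ)/3) * x 2 * x 3 * x 4 * x 5 ^ 2 + ((1 : ℂ)/3) * x 2 * x 3 * x 4 ^ 2 * x 5 + ((-1 : ℂ)/6) * x 2 * x 3 * x 4 ^ 3 + ((-1 : ℂ)/2) * x 2 * x 3 ^ 2 * x 5 ^ 2 + ((1 : ℂ)/3) * x 2 * x 3 ^ 2 * x 4 * x 5 + ((-1 : ℂ)/2) * x 2 * x 3 ^ 2 * x 4 ^ 2 + ((-1 : ℂ)/6) * x 2 * x 3 ^ 3 * x 5 + ((-1 : ℂ)/6) * x 2 * x 3 ^ 3 * x 4 + ((1 : ℂ)/12) * x 2 * x 3 ^ 4 + ((-1 : ℂ)/12) * x 2 ^ 2 * x 5 ^ 3 + ((-1 : ℂ)/2) * x 2 ^ 2 * x 4 * x 5 ^ 2 + ((-1 : ℂ)/2) * x 2 ^ 2 * x 4 ^ 2 * x 5 + ((-1 : ℂ)/12) * x 2 ^ 2 * x 4 ^ 3 + ((-1 : ℂ)/2) * x 2 ^ 2 * x 3 * x 5 ^ 2 + ((1 : ℂ)/3) * x 2 ^ 2 * x 3 * x 4 * x 5 + ((-1 : ℂ)/2) * x 2 ^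 2 * x 3 * x 4 ^ 2 + ((-1 : ℂ)/2) * x 2 ^ 2 * x 3 ^ 2 * x 5 + ((-1 : ℂ)/2) * x 2 ^ 2 * x 3 ^ 2 * x 4 + ((-1 : ℂ)/12) * x 2 ^ 2 * x 3 ^ 3 + ((-1 : ℂ)/12) * x 2 ^ 3 * x 5 ^ 2 + ((-1 : ℂ)/6) * x 2 ^ 3 * x 4 * x 5 + ((-1 : ℂ)/12) * x 2 ^ 3 * x 4 ^ 2 + ((-1 : ℂ)/6) * x 2 ^ 3 * x 3 * x 5 + ((-1 : ℂ)/6) * x 2 ^ 3 * x 3 * x 4 + ((-1 : ℂ)/12) * x 2 ^ 3 * x 3 ^ 2 + ((1 : ℂ)/12) * x 2 ^ 4 * x 5 + ((1 : ℂ)/12) * x 2 ^ 4 * x 4 + ((1 : ℂ)/12) * x 2 ^ 4 * x 3 + (-1 : ℂ) * x 2 ^ 5 + ((1 : ℂ)/12) * x 1 * x 5 ^ 4 + ((-1 : ℂ)/6) * x 1 * x 4 * x 5 ^ 3 + ((-1 : ℂ)/2) * x 1 * x 4 ^ 2 * x 5 ^ 2 + ((-1 : ℂ)/6) * x 1 *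 x 4 ^ 3 * x 5 + ((1 : ℂ)/12) * x 1 * x 4 ^ 4 + ((-1 : ℂ)/6) * x 1 * x 3 * x 5 ^ 3 + ((1 : ℂ)/3) * x 1 * x 3 * x 4 * x 5 ^ 2 + ((1 : ℂ)/3) * x 1 * x 3 * x 4 ^ 2 * x 5 + ((-1 : ℂ)/6) * x 1 * x 3 * x 4 ^ 3 + ((-1 : ℂ)/2) * x 1 * x 3 ^ 2 * x 5 ^ 2 + ((1 : ℂ)/3) * x 1 * x 3 ^ 2 * x 4 * x 5 + ((-1 : ℂ)/2) * x 1 * x 3 ^ 2 * x 4 ^ 2 + ((-1 : ℂ)/6) * x 1 * x 3 ^ 3 * x 5 + ((-1 : ℂ)/6) * x 1 * x 3 ^ 3 * x 4 + ((1 : ℂ)/12) * x 1 * x 3 ^ 4 + ((-1 : ℂ)/6) * x 1 * x 2 * x 5 ^ 3 + ((1 : ℂ)/3) * x 1 * x 2 * x 4 * x 5 ^ 2 + ((1 : ℂ)/3) * x 1 * x 2 * x 4 ^ 2 * x 5 + ((-1 : ℂ)/6) * x 1 * x 2 * x 4 ^ 3 + ((1 : ℂ)/3) * x 1 * x 2 *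 x 3 * x 5 ^ 2 + ((-2 : ℂ)/3) * x 1 * x 2 * x 3 * x 4 * x 5 + ((1 : ℂ)/3) * x 1 * x 2 * x 3 * x 4 ^ 2 + ((1 : ℂ)/3) * x 1 * x 2 * x 3 ^ 2 * x 5 + ((1 : ℂ)/3) * x 1 * x 2 * x 3 ^ 2 * x 4 + ((-1 : ℂ)/6) * x 1 * x 2 * x 3 ^ 3 + ((-1 : ℂ)/2) * x 1 * x 2 ^ 2 * x 5 ^ 2 + ((1 : ℂ)/3) * x 1 * x 2 ^ 2 * x 4 * x 5 + ((-1 : ℂ)/2) * x 1 * x 2 ^ 2 * x 4 ^ 2 + ((1 : ℂ)/3) * x 1 * x 2 ^ 2 * x 3 * x 5 + ((1 : ℂ)/3) * x 1 * x 2 ^ 2 * x 3 * x 4 + ((-1 : ℂ)/2) * x 1 * x 2 ^ 2 * x 3 ^ 2 + ((-1 : ℂ)/6) * x 1 * x 2 ^ 3 * x 5 + ((-1 : ℂ)/6) * x 1 * x 2 ^ 3 * x 4 + ((-1 : ℂ)/6) * x 1 * x 2 ^ 3 * x 3 + ((1 : ℂ)/12) * x 1 * x 2 ^ 4 + ((-1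 : ℂ)/12) * x 1 ^ 2 * x 5 ^ 3 + ((-1 : ℂ)/2) * x 1 ^ 2 * x 4 * x 5 ^ 2 + ((-1 : ℂ)/2) * x 1 ^ 2 * x 4 ^ 2 * x 5 + ((-1 : ℂ)/12) * x 1 ^ 2 * x 4 ^ 3 + ((-1 : ℂ)/2) * x 1 ^ 2 * x 3 * x 5 ^ 2 + ((1 : ℂ)/3) * x 1 ^ 2 * x 3 * x 4 * x 5 + ((-1 : ℂ)/2) * x 1 ^ 2 * x 3 * x 4 ^ 2 + ((-1 : ℂ)/2) * x 1 ^ 2 * x 3 ^ 2 * x 5 + ((-1 : ℂ)/2) * x 1 ^ 2 * x 3 ^ 2 * x 4 + ((-1 : ℂ)/12) * x 1 ^ 2 * x 3 ^ 3 + ((-1 : ℂ)/2) * x 1 ^ 2 * x 2 * x 5 ^ 2 + ((1 : ℂ)/3) * x 1 ^ 2 * x 2 * x 4 * x 5 + ((-1 : ℂ)/2) * x 1 ^ 2 * x 2 * x 4 ^ 2 + ((1 : ℂ)/3) * x 1 ^ 2 * x 2 * x 3 * x 5 + ((1 : ℂ)/3) * x 1 ^ 2 * x 2 * x 3 * x 4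 + ((-1 : ℂ)/2) * x 1 ^ 2 * x 2 * x 3 ^ 2 + ((-1 : ℂ)/2) * x 1 ^ 2 * x 2 ^ 2 * x 5 + ((-1 : ℂ)/2) * x 1 ^ 2 * x 2 ^ 2 * x 4 + ((-1 : ℂ)/2) * x 1 ^ 2 * x 2 ^ 2 * x 3 + ((-1 : ℂ)/12) * x 1 ^ 2 * x 2 ^ 3 + ((-1 : ℂ)/12) * x 1 ^ 3 * x 5 ^ 2 + ((-1 : ℂ)/6) * x 1 ^ 3 * x 4 * x 5 + ((-1 : ℂ)/12) * x 1 ^ 3 * x 4 ^ 2 + ((-1 : ℂ)/6) * x 1 ^ 3 * x 3 * x 5 + ((-1 : ℂ)/6) * x 1 ^ 3 * x 3 * x 4 + ((-1 : ℂ)/12) * x 1 ^ 3 * x 3 ^ 2 + ((-1 : ℂ)/6) * x 1 ^ 3 * x 2 * x 5 + ((-1 : ℂ)/6) * x 1 ^ 3 * x 2 * x 4 + ((-1 : ℂ)/6) * x 1 ^ 3 * x 2 * x 3 + ((-1 : ℂ)/12) * x 1 ^ 3 * x 2 ^ 2 + ((1 : ℂ)/12) * x 1 ^ 4 * x 5 +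 ((1 : ℂ)/12) * x 1 ^ 4 * x 4 + ((1 : ℂ)/12) * x 1 ^ 4 * x 3 + ((1 : ℂ)/12) * x 1 ^ 4 * x 2 + (-1 : ℂ) * x 1 ^ 5 + ((1 : ℂ)/2) * x 0 * x 5 ^ 4 + (-1 : ℂ) * x 0 * x 4 ^ 2 * x 5 ^ 2 + ((1 : ℂ)/2) * x 0 * x 4 ^ 4 + (-1 : ℂ) * x 0 * x 3 ^ 2 * x 5 ^ 2 + (-1 : ℂ) * x 0 * x 3 ^ 2 * x 4 ^ 2 + ((1 : ℂ)/2) * x 0 * x 3 ^ 4 + (-1 : ℂ) * x 0 * x 2 ^ 2 * x 5 ^ 2 + (-1 : ℂ) * x 0 * x 2 ^ 2 * x 4 ^ 2 + (-1 : ℂ) * x 0 * x 2 ^ 2 * x 3 ^ 2 + ((1 : ℂ)/2) * x 0 * x 2 ^ 4 + (-1 : ℂ) * x 0 * x 1 ^ 2 * x 5 ^ 2 + (-1 : ℂ) * x 0 * x 1 ^ 2 * x 4 ^ 2 + (-1 : ℂ) * x 0 * x 1 ^ 2 * x 3 ^ 2 + (-1 : ℂ) * x 0 * x 1 ^ 2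 * x 2 ^ 2 + ((1 : ℂ)/2) * x 0 * x 1 ^ 4 + ((5 : ℂ)/4) * x 0 ^ 2 * x 5 ^ 3 + ((5 : ℂ)/4) * x 0 ^ 2 * x 4 ^ 3 + ((5 : ℂ)/4) * x 0 ^ 2 * x 3 ^ 3 + ((5 : ℂ)/4) * x 0 ^ 2 * x 2 ^ 3 + ((5 : ℂ)/4) * x 0 ^ 2 * x 1 ^ 3 + (1 : ℂ) * x 0 ^ 3 * x 5 ^ 2 + (1 : ℂ) * x 0 ^ 3 * x 4 ^ 2 + (1 : ℂ) * x 0 ^ 3 * x 3 ^ 2 + (1 : ℂ) * x 0 ^ 3 * x 2 ^ 2 + (1 : ℂ) * x 0 ^ 3 * x 1 ^ 2 + ((-5 : ℂ)/4) * x 0 ^ 5)) * h3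

lemma node_to_sing {y : Fin 6 → ℂ} {p : Projectivization ℂ (Fin 6 → ℂ)}
    (h : NodeOnHyp y p) : SingOnSection y p := by
  obtain ⟨A, hcard, hsum, rfl⟩ := h
  refine ⟨eps A, eps_ne_zero A, rfl, ?_, ?_, ?_, ?_⟩
  · rw [sum_eps, hcard]; norm_num
  · rw [Finset.sum_congr rfl (fun k _ => eps_cube A k), sum_eps, hcard]; norm_num
  · rw [← hsum]; exact Finset.sum_congr rfl fun k _ => mul_comm _ _
  · rw [Fintype.not_linearIndependent_iff]
    refine ⟨![1, -1, 0], ?_, 0, by norm_num⟩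
    funext k
    simp [Fin.sum_univ_three, eps_sq A k]

lemma sing_to_node {y : Fin 6 → ℂ} (hy0 : y ≠ 0) (hysum : (∑ k, y k) = 0)
    (hCR : (∑ k, (y k) ^ 2) ^ 2 ≠ 4 * (∑ k, (y k) ^ 4))
    {p : Projectivization ℂ (Fin 6 → ℂ)} (h : SingOnSection y p) : NodeOnHyp y p := by
  obtain ⟨x, hx, rfl, hx1, hx3, hxy, hdep⟩ := h
  rw [Fintype.not_linearIndependent_iff] at hdep
  obtain ⟨g, hg, i0, hi0⟩ := hdep
  have hg' : ∀ k, g 0 + g 1 * x k ^ 2 + g 2 * y k = 0 := by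
    intro k
    have := congrFun hg k
    simpa [Fin.sum_univ_three] using this
  by_cases hg2 : g 2 = 0
  · -- constant square case: x is (a multiple of) a node
    have hg1 : g 1 ≠ 0 := by
      intro hg1
      have h0 := hg' 0
      rw [hg1, hg2] at h0
      simp at h0
      fin_cases i0 <;> simp_all
    obtain ⟨k0, hk0⟩ := Function.ne_iff.mp hx
    simp only [Pi.zero_apply] at hk0
    set s := x k0 with hs
    have hsq : ∀ k, x k ^ 2 = s ^ 2 := by
      intro k
      have ha := hg' k
      have hb := hg' k0
      rw [hg2] at ha hb
      have : g 1 * (x k ^ 2 - s ^ 2) = 0 := by linear_combination ha - hb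
      rcases mul_eq_zero.mp this with h | h
      · exact absurd h hg1
      · linear_combination h
    have hpm : ∀ k, x k = s ∨ x k = -s := by
      intro k
      have : (x k - s) * (x k + s) = 0 := by linear_combination hsq k
      rcases mul_eq_zero.mp this with h | h
      · left; linear_combination h
      · right; linear_combination h
    set A : Finset (Fin 6) := Finset.univ.filter (fun k => x k = s) with hA
    have hmem : ∀ k, k ∈ A ↔ x k = s := by
      intro k; simp [hA]
    have hxA : x = fun k => s * eps A k := by
      funext k
      by_cases hk : k ∈ A
      · rw [(hmem k).mp hk]; simp [eps, hk]
      · rcases hpm k with h | h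
        · exact absurd ((hmem k).mpr h) hk
        · rw [h]; simp [eps, hk]
    have hsum' : s * (2 * (A.card : ℂ) - 6) = 0 := by
      calc s * (2 * (A.card : ℂ) - 6) = ∑ k, s * eps A k := by rw [← sum_eps, Finset.mul_sum]
        _ = ∑ k, x k := Finset.sum_congr rfl fun k _ => (congrFun hxA k).symm
        _ = 0 := hx1
    have hcards : (2 * (A.card : ℂ) - 6) = 0 := by
      rcases mul_eq_zero.mp hsum' with h | h
      · exact absurd h hk0
      · exact h
    have hcard : A.card = 3 := by
      have : (A.card : ℂ) = ((3 : ℕ) : ℂ) := by push_cast; linear_combination hcards / 2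
      exact_mod_cast this
    have hnode : (∑ k, eps A k * y k) = 0 := by
      have : s * ∑ k, eps A k * y k = 0 := by
        rw [Finset.mul_sum, ← hxy, hxA]
        exact Finset.sum_congr rfl fun k _ => by ring
      rcases mul_eq_zero.mp this with h | h
      · exact absurd h hk0
      · exact h
    refine ⟨A, hcard, hnode, ?_⟩
    rw [Projectivization.mk_eq_mk_iff']
    exact ⟨s, by rw [hxA]; funext k; simp⟩
  · -- y = a + b x²  ⇒ contradiction with CR
    exfalso
    set a : ℂ := -(g 0) / g 2 with ha
    set b : ℂ := -(g 1) / g 2 with hb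
    have hy : ∀ k, y k = a + b * x k ^ 2 := by
      intro k
      have hab : a + b * x k ^ 2 = (-(g 0) + -(g 1) * x k ^ 2) / g 2 := by rw [ha, hb]; ring
      rw [hab, eq_div_iff hg2]
      linear_combination hg' k
    have hasum : 6 * a + b * (∑ j, (x j) ^ 2) = 0 := by
      have : (∑ k, y k) = 6 * a + b * (∑ j, (x j) ^ 2) := by
        rw [Finset.sum_congr rfl (fun k _ => hy k), Finset.sum_add_distrib, ← Finset.mul_sum,
          Finset.sum_const]
        simp only [Finset.card_univ, Fintype.card_fin, nsmul_eq_mul, Nat.cast_ofNat]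
      rw [← this, hysum]
    have hv : ∀ k, y k = b * ((x k) ^ 2 - (∑ j, (x j) ^ 2) / 6) := by
      intro k
      rw [hy k]
      have : a = -(b * (∑ j, (x j) ^ 2)) / 6 := by linear_combination hasum / 6
      rw [this]; ring
    have e2 : (∑ k, (y k) ^ 2) = ∑ k, (b * ((x k)^2 - (∑ j, (x j)^2)/6))^2 :=
      Finset.sum_congr rfl fun k _ => by rw [hv k]
    have e4 : (∑ k, (y k) ^ 4) = ∑ k, (b * ((x k)^2 - (∑ j, (x j)^2)/6))^4 :=
      Finset.sum_congr rfl fun k _ => by rw [hv k]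
    apply hCR
    rw [e2, e4]
    exact CR_eq x b hx1 hx3

lemma sing_set_eq_node_set {y : Fin 6 → ℂ} (hy0 : y ≠ 0) (hysum : (∑ k, y k) = 0)
    (hCR : (∑ k, (y k) ^ 2) ^ 2 ≠ 4 * (∑ k, (y k) ^ 4)) :
    {p | SingOnSection y p} = {p | NodeOnHyp y p} :=
  Set.ext fun _ => ⟨sing_to_node hy0 hysum hCR, node_to_sing⟩

-- ============ integer proxy for node condition ============

def zsum (z : Fin 6 → ℤ) (A : Finset (Fin 6)) : ℤ := ∑ k, (if k ∈ A then z k else - z k)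

lemma node_sum_cast (z : Fin 6 → ℤ) (A : Finset (Fin 6)) :
    (∑ k, eps A k * ((z k : ℂ))) = ((zsum z A : ℤ) : ℂ) := by
  rw [zsum]
  push_cast
  refine Finset.sum_congr rfl fun k _ => ?_
  by_cases h : k ∈ A <;> simp [eps, h]

lemma node_iff_int (z : Fin 6 → ℤ) (p : Projectivization ℂ (Fin 6 → ℂ)) :
    NodeOnHyp (fun k => ((z k : ℂ))) p ↔
      ∃ A : Finset (Fin 6), A.card = 3 ∧ zsum z A = 0 ∧
        p = Projectivization.mk ℂ (eps A) (eps_ne_zero A) := by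
  unfold NodeOnHyp
  refine exists_congr fun A => and_congr_right fun _ => and_congr_left fun _ => ?_
  rw [node_sum_cast]
  exact_mod_cast Int.cast_eq_zero (α := ℂ)

-- ============ counting for the r = 2 example ============

lemma count2 : ({p | NodeOnHyp (fun k => ((![-2,-2,0,1,1,2] k : ℤ) : ℂ)) p}).ncard = 2 := by
  have hclass : ∀ A : Finset (Fin 6),
      (A.card = 3 ∧ zsum ![-2,-2,0,1,1,2] A = 0) ↔
        (A = {0,2,5} ∨ A = {1,3,4} ∨ A = {1,2,5} ∨ A = {0,3,4}) := by decide
  have hset : {p | NodeOnHyp (fun k => ((![-2,-2,0,1,1,2] k : ℤ) : ℂ)) p} =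
      {Projectivization.mk ℂ (eps {0,2,5}) (eps_ne_zero _),
       Projectivization.mk ℂ (eps {1,2,5}) (eps_ne_zero _)} := by
    ext p
    simp only [Set.mem_setOf_eq, node_iff_int, Set.mem_insert_iff, Set.mem_singleton_iff]
    constructor
    · rintro ⟨A, hc, hz, rfl⟩
      rcases (hclass A).mp ⟨hc, hz⟩ with rfl | rfl | rfl | rfl
      · exact Or.inl rfl
      · refine Or.inl ?_
        have : ({1,3,4} : Finset (Fin 6)) = ({0,2,5} : Finset (Fin 6))ᶜ := by decide
        rw [this, mk_eps_compl]
      · exact Or.inr rfl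
      · refine Or.inr ?_
        have : ({0,3,4} : Finset (Fin 6)) = ({1,2,5} : Finset (Fin 6))ᶜ := by decide
        rw [this, mk_eps_compl]
    · rintro (rfl | rfl)
      · exact ⟨{0,2,5}, by decide, by decide, rfl⟩
      · exact ⟨{1,2,5}, by decide, by decide, rfl⟩
  rw [hset]
  refine Set.ncard_pair ?_
  rw [Ne, mk_eps_eq_iff]
  decide

lemma count3 : ({p | NodeOnHyp (fun k => ((![-2,-1,0,1,1,1] k : ℤ) : ℂ)) p}).ncard = 3 := by
  have hclass : ∀ A : Finset (Fin 6),
      (A.card = 3 ∧ zsum ![-2,-1,0,1,1,1] A = 0) ↔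
        (A = {0,3,4} ∨ A = {1,2,5} ∨ A = {0,3,5} ∨ A = {1,2,4} ∨
         A = {0,4,5} ∨ A = {1,2,3}) := by decide
  have hset : {p | NodeOnHyp (fun k => ((![-2,-1,0,1,1,1] k : ℤ) : ℂ)) p} =
      {Projectivization.mk ℂ (eps {0,3,4}) (eps_ne_zero _),
       Projectivization.mk ℂ (eps {0,3,5}) (eps_ne_zero _),
       Projectivization.mk ℂ (eps {0,4,5}) (eps_ne_zero _)} := by
    ext p
    simp only [Set.mem_setOf_eq, node_iff_int, Set.mem_insert_iff, Set.mem_singleton_iff]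
    constructor
    · rintro ⟨A, hc, hz, rfl⟩
      rcases (hclass A).mp ⟨hc, hz⟩ with rfl | rfl | rfl | rfl | rfl | rfl
      · exact Or.inl rfl
      · refine Or.inl ?_
        have : ({1,2,5} : Finset (Fin 6)) = ({0,3,4} : Finset (Fin 6))ᶜ := by decide
        rw [this, mk_eps_compl]
      · exact Or.inr (Or.inl rfl)
      · refine Or.inr (Or.inl ?_)
        have : ({1,2,4} : Finset (Fin 6)) = ({0,3,5} : Finset (Fin 6))ᶜ := by decide
        rw [this, mk_eps_compl]
      · exact Or.inr (Or.inr rfl)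
      · refine Or.inr (Or.inr ?_)
        have : ({1,2,3} : Finset (Fin 6)) = ({0,4,5} : Finset (Fin 6))ᶜ := by decide
        rw [this, mk_eps_compl]
    · rintro (rfl | rfl | rfl)
      · exact ⟨{0,3,4}, by decide, by decide, rfl⟩
      · exact ⟨{0,3,5}, by decide, by decide, rfl⟩
      · exact ⟨{0,4,5}, by decide, by decide, rfl⟩
  rw [hset]
  rw [Set.ncard_insert_of_notMem, Set.ncard_pair]
  · rw [Ne, mk_eps_eq_iff]; decide
  · simp only [Set.mem_insert_iff, Set.mem_singleton_iff, not_or]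
    refine ⟨?_, ?_⟩ <;> · rw [mk_eps_eq_iff]; decide


-- ============ generic eij facts ============

lemma eij_apply (i j : Fin 6) (hij : i ≠ j) (k : Fin 6) :
    eij i j k = if k = i then 1 else if k = j then -1 else 0 := by
  unfold eij
  simp only [Pi.sub_apply, Pi.single_apply]
  split_ifs with h1 h2 <;> simp_all

lemma sum_ite_two (i j : Fin 6) (hij : i ≠ j) (g h : Fin 6 → ℂ) :
    (∑ k, (if k = i then g k else if k = j then h k else 0)) = g i + h j := by
  have : ∀ k, (if k = i then g k else if k = j then h k else 0) =
      (if k = i then g k else 0) + (if k = j then h k else 0) := by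
    intro k
    split_ifs with h1 h2 <;> simp_all
  rw [Finset.sum_congr rfl fun k _ => this k, Finset.sum_add_distrib]
  simp [Finset.sum_ite_eq' Finset.univ i g, Finset.sum_ite_eq' Finset.univ j h]

lemma sum_mul_eij (i j : Fin 6) (hij : i ≠ j) (f : Fin 6 → ℂ) :
    (∑ k, f k * eij i j k) = f i - f j := by
  have : ∀ k, f k * eij i j k = (if k = i then f k else if k = j then -f k else 0) := by
    intro k
    rw [eij_apply i j hij]
    split_ifs <;> ring
  rw [Finset.sum_congr rfl fun k _ => this k, sum_ite_two i j hij]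
  ring

lemma third_elem {A : Finset (Fin 6)} (hA : A.card = 3) {i j : Fin 6} (hij : i ≠ j)
    (hi : i ∈ A) (hj : j ∈ A) : ∃ m, m ≠ i ∧ m ≠ j ∧ A = {i, j, m} := by
  have hji : j ∈ A.erase i := Finset.mem_erase.mpr ⟨hij.symm, hj⟩
  have h1 : ((A.erase i).erase j).card = 1 := by
    rw [Finset.card_erase_of_mem hji, Finset.card_erase_of_mem hi, hA]
  obtain ⟨m, hm⟩ := Finset.card_eq_one.mp h1
  have hmA : m ∈ (A.erase i).erase j := hm ▸ Finset.mem_singleton_self m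
  have h2 := Finset.mem_erase.mp hmA
  have hmj : m ≠ j := h2.1
  have hmi : m ≠ i := (Finset.mem_erase.mp h2.2).1
  refine ⟨m, hmi, hmj, ?_⟩
  have e1 : insert j ((A.erase i).erase j) = A.erase i := Finset.insert_erase hji
  have e2 : insert i (A.erase i) = A := Finset.insert_erase hi
  rw [← e2, ← e1, hm]

lemma card_three {i j m : Fin 6} (hij : i ≠ j) (hmi : m ≠ i) (hmj : m ≠ j) :
    ({i, j, m} : Finset (Fin 6)).card = 3 := by
  rw [Finset.card_insert_of_notMem (by simp [hij, hmi.symm]),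
    Finset.card_insert_of_notMem (by simp [hmj.symm]), Finset.card_singleton]

lemma count_eij (i j : Fin 6) (hij : i ≠ j) :
    ({p | NodeOnHyp (eij i j) p}).ncard = 4 := by
  have hset : {p | NodeOnHyp (eij i j) p} =
      (fun m => Projectivization.mk ℂ (eps {i, j, m}) (eps_ne_zero _)) ''
        {m : Fin 6 | m ≠ i ∧ m ≠ j} := by
    ext p
    simp only [Set.mem_setOf_eq, Set.mem_image]
    constructor
    · rintro ⟨A, hc, hz, rfl⟩
      rw [sum_mul_eij i j hij] at hz
      have hiff : i ∈ A ↔ j ∈ A := by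
        by_cases hi : i ∈ A <;> by_cases hj : j ∈ A
        · simp [hi, hj]
        · exfalso; simp only [eps, if_pos hi, if_neg hj] at hz; norm_num at hz
        · exfalso; simp only [eps, if_neg hi, if_pos hj] at hz; norm_num at hz
        · simp [hi, hj]
      by_cases hi : i ∈ A
      · obtain ⟨m, hmi, hmj, rfl⟩ := third_elem hc hij hi (hiff.mp hi)
        exact ⟨m, ⟨hmi, hmj⟩, rfl⟩
      · have hi' : i ∈ Aᶜ := Finset.mem_compl.mpr hi
        have hj' : j ∈ Aᶜ := Finset.mem_compl.mpr (fun h => hi (hiff.mpr h))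
        have hcc : Aᶜ.card = 3 := by simp [Finset.card_compl, hc]
        obtain ⟨m, hmi, hmj, hAc⟩ := third_elem hcc hij hi' hj'
        refine ⟨m, ⟨hmi, hmj⟩, ?_⟩
        show Projectivization.mk ℂ (eps {i, j, m}) (eps_ne_zero _) =
          Projectivization.mk ℂ (eps A) (eps_ne_zero A)
        rw [← hAc]
        exact mk_eps_compl A
    · rintro ⟨m, ⟨hmi, hmj⟩, rfl⟩
      refine ⟨{i, j, m}, card_three hij hmi hmj, ?_, rfl⟩
      rw [sum_mul_eij i j hij]
      have h1 : eps {i, j, m} i = 1 := by simp [eps]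
      have h2 : eps {i, j, m} j = 1 := by simp [eps]
      rw [h1, h2, sub_self]
  have hinj : Set.InjOn (fun m => Projectivization.mk ℂ (eps {i, j, m}) (eps_ne_zero _))
      {m : Fin 6 | m ≠ i ∧ m ≠ j} := by
    intro m hm m' hm' he
    simp only [Set.mem_setOf_eq] at hm hm'
    rw [mk_eps_eq_iff] at he
    rcases he with he | he
    · have hmem : m ∈ ({i, j, m'} : Finset (Fin 6)) := he ▸ (by simp)
      rcases Finset.mem_insert.mp hmem with h | h
      · exact absurd h hm.1
      · rcases Finset.mem_insert.mp h with h | h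
        · exact absurd h hm.2
        · exact Finset.mem_singleton.mp h
    · exfalso
      have hmem : i ∈ ({i, j, m'} : Finset (Fin 6))ᶜ := he ▸ (by simp)
      exact Finset.mem_compl.mp hmem (by simp)
  rw [hset, Set.ncard_image_of_injOn hinj]
  have hcoe : {m : Fin 6 | m ≠ i ∧ m ≠ j} = ↑(({i, j} : Finset (Fin 6))ᶜ) := by
    ext m
    simp [not_or, and_comm]
  rw [hcoe, Set.ncard_coe_finset, Finset.card_compl,
    Finset.card_insert_of_notMem (by simp [hij]), Finset.card_singleton]
  decide

-- ============ bundles ============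

lemma four_nodal (i j : Fin 6) (hij : i ≠ j) :
    eij i j ≠ 0 ∧
      (∑ k, eij i j k) = 0 ∧
      (∑ k, (eij i j k) ^ 2) ^ 2 ≠ 4 * (∑ k, (eij i j k) ^ 4) ∧
      {p | NodeOnHyp (eij i j) p}.ncard = 4 ∧
      {p | SingOnSection (eij i j) p}.ncard = 4 := by
  have hne : eij i j ≠ 0 := by
    intro h
    have := congrFun h i
    rw [eij_apply i j hij] at this
    simp at this
  have hsum : (∑ k, eij i j k) = 0 := by
    have : ∀ k, eij i j k = (if k = i then (1:ℂ) else if k = j then -1 else 0) :=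
      eij_apply i j hij
    rw [Finset.sum_congr rfl fun k _ => this k,
      sum_ite_two i j hij (fun _ => (1:ℂ)) (fun _ => (-1:ℂ))]
    ring
  have hsq : (∑ k, (eij i j k) ^ 2) = 2 := by
    have : ∀ k, (eij i j k) ^ 2 = (if k = i then (1:ℂ) else if k = j then 1 else 0) := by
      intro k
      rw [eij_apply i j hij]
      split_ifs <;> ring
    rw [Finset.sum_congr rfl fun k _ => this k,
      sum_ite_two i j hij (fun _ => (1:ℂ)) (fun _ => (1:ℂ))]
    ring
  have hfour : (∑ k, (eij i j k) ^ 4) = 2 := by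
    have : ∀ k, (eij i j k) ^ 4 = (if k = i then (1:ℂ) else if k = j then 1 else 0) := by
      intro k
      rw [eij_apply i j hij]
      split_ifs <;> ring
    rw [Finset.sum_congr rfl fun k _ => this k,
      sum_ite_two i j hij (fun _ => (1:ℂ)) (fun _ => (1:ℂ))]
    ring
  have hCR : (∑ k, (eij i j k) ^ 2) ^ 2 ≠ 4 * (∑ k, (eij i j k) ^ 4) := by
    rw [hsq, hfour]
    norm_num
  refine ⟨hne, hsum, hCR, count_eij i j hij, ?_⟩
  rw [sing_set_eq_node_set hne hsum hCR]
  exact count_eij i j hij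


/-- for each `r ∈ {2,3,4}` there is a hyperplane `H_y`, with `[y]` not on
the Castelnuovo–Richmond quartic, containing exactly `r` of the 10 nodes, so that the
cubic surface `Σ₃ ∩ H_y` has exactly `r` singular points; for `r = 4` one may take
`y = e_i - e_j` for any `i ≠ j`. -/
theorem r_nodal_hyperplane_sections :
    (∀ r : ℕ, r = 2 ∨ r = 3 ∨ r = 4 →
      ∃ y : Fin 6 → ℂ, y ≠ 0 ∧ (∑ k, y k) = 0 ∧
        (∑ k, (y k) ^ 2) ^ 2 ≠ 4 * (∑ k, (y k) ^ 4) ∧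
        {p | NodeOnHyp y p}.ncard = r ∧
        {p | SingOnSection y p}.ncard = r) ∧
    (∀ i j : Fin 6, i ≠ j →
      eij i j ≠ 0 ∧
      (∑ k, eij i j k) = 0 ∧
      (∑ k, (eij i j k) ^ 2) ^ 2 ≠ 4 * (∑ k, (eij i j k) ^ 4) ∧
      {p | NodeOnHyp (eij i j) p}.ncard = 4 ∧
      {p | SingOnSection (eij i j) p}.ncard = 4) := by
  have e25 : ((![-2,-2,0,1,1,2] : Fin 6 → ℤ) 5) = 2 := rfl
  have e35 : ((![-2,-1,0,1,1,1] : Fin 6 → ℤ) 5) = 1 := rfl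
  constructor
  · intro r hr
    rcases hr with rfl | rfl | rfl
    · refine ⟨fun k => ((![-2,-2,0,1,1,2] k : ℤ) : ℂ), ?_, ?_, ?_, ?_, ?_⟩
      · intro h
        have := congrFun h 5
        norm_num [e25] at this
      · norm_num [Fin.sum_univ_six, e25, show (![-2,-2,0,1,1,2] : Fin 6 → ℤ) 2 = 0 from rfl, show (![-2,-2,0,1,1,2] : Fin 6 → ℤ) 3 = 1 from rfl, show (![-2,-2,0,1,1,2] : Fin 6 → ℤ) 4 = 1 from rfl]
      · norm_num [Fin.sum_univ_six, e25, show (![-2,-2,0,1,1,2] : Fin 6 → ℤ) 2 = 0 from rfl, show (![-2,-2,0,1,1,2] : Fin 6 → ℤ) 3 = 1 from rfl, show (![-2,-2,0,1,1,2] : Fin 6 → ℤ) 4 = 1 from rfl]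
      · exact count2
      · rw [sing_set_eq_node_set ?hne ?hsum ?hcr]
        case hne => intro h; have := congrFun h 5; norm_num [e25] at this
        case hsum => norm_num [Fin.sum_univ_six, e25, show (![-2,-2,0,1,1,2] : Fin 6 → ℤ) 2 = 0 from rfl, show (![-2,-2,0,1,1,2] : Fin 6 → ℤ) 3 = 1 from rfl, show (![-2,-2,0,1,1,2] : Fin 6 → ℤ) 4 = 1 from rfl]
        case hcr => norm_num [Fin.sum_univ_six, e25, show (![-2,-2,0,1,1,2] : Fin 6 → ℤ) 2 = 0 from rfl, show (![-2,-2,0,1,1,2] : Fin 6 → ℤ) 3 = 1 from rfl, show (![-2,-2,0,1,1,2] : Fin 6 → ℤ) 4 = 1 from rfl]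
        exact count2
    · refine ⟨fun k => ((![-2,-1,0,1,1,1] k : ℤ) : ℂ), ?_, ?_, ?_, ?_, ?_⟩
      · intro h
        have := congrFun h 0
        norm_num at this
      · norm_num [Fin.sum_univ_six, e35, show (![-2,-1,0,1,1,1] : Fin 6 → ℤ) 2 = 0 from rfl, show (![-2,-1,0,1,1,1] : Fin 6 → ℤ) 3 = 1 from rfl, show (![-2,-1,0,1,1,1] : Fin 6 → ℤ) 4 = 1 from rfl]
      · norm_num [Fin.sum_univ_six, e35, show (![-2,-1,0,1,1,1] : Fin 6 → ℤ) 2 = 0 from rfl, show (![-2,-1,0,1,1,1] : Fin 6 → ℤ) 3 = 1 from rfl, show (![-2,-1,0,1,1,1] : Fin 6 → ℤ) 4 = 1 from rfl]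
      · exact count3
      · rw [sing_set_eq_node_set ?hne ?hsum ?hcr]
        case hne => intro h; have := congrFun h 0; norm_num at this
        case hsum => norm_num [Fin.sum_univ_six, e35, show (![-2,-1,0,1,1,1] : Fin 6 → ℤ) 2 = 0 from rfl, show (![-2,-1,0,1,1,1] : Fin 6 → ℤ) 3 = 1 from rfl, show (![-2,-1,0,1,1,1] : Fin 6 → ℤ) 4 = 1 from rfl]
        case hcr => norm_num [Fin.sum_univ_six, e35, show (![-2,-1,0,1,1,1] : Fin 6 → ℤ) 2 = 0 from rfl, show (![-2,-1,0,1,1,1] : Fin 6 → ℤ) 3 = 1 from rfl, show (![-2,-1,0,1,1,1] : Fin 6 → ℤ) 4 = 1 from rfl]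
        exact count3
    · obtain ⟨h1, h2, h3, h4, h5⟩ := four_nodal 0 1 (by decide)
      exact ⟨eij 0 1, h1, h2, h3, h4, h5⟩
  · exact four_nodal
end

section
/- Let y ∈ ℂ⁶ ∖ {0} with Σ_k y_k = 0 and (Σ_k y_k²)² = 4 Σ_k y_k⁴, and suppose Σ_k ε^A_k y_k ≠ 0 for every 3-element subset A ⊆ {0,…,5} (i.e. [y] lies on the Castelnuovo–Richmond quartic but on none of the 10 hyperplanes dual to the nodes). Then the cubic surface Σ₃ ∩ H_y has exactly one singular point. -/
set_option maxHeartbeats 4000000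

open scoped BigOperators

namespace SegreAux

noncomputable def q2v (y : Fin 6 → ℂ) : ℂ := y 0^2+y 1^2+y 2^2+y 3^2+y 4^2+y 5^2
noncomputable def q3v (y : Fin 6 → ℂ) : ℂ := y 0^3+y 1^3+y 2^3+y 3^3+y 4^3+y 5^3
noncomputable def e5v (y : Fin 6 → ℂ) : ℂ :=
  y 1*y 2*y 3*y 4*y 5 + y 0*y 2*y 3*y 4*y 5 + y 0*y 1*y 3*y 4*y 5
  + y 0*y 1*y 2*y 4*y 5 + y 0*y 1*y 2*y 3*y 5 + y 0*y 1*y 2*y 3*y 4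
noncomputable def e6v (y : Fin 6 → ℂ) : ℂ := y 0*y 1*y 2*y 3*y 4*y 5
noncomputable def SX (y : Fin 6 → ℂ) (k : Fin 6) : ℂ := 12*(y k)^3 - 3*q2v y*(y k) - 2*q3v y
noncomputable def alv (y : Fin 6 → ℂ) : ℂ := -144*e6v y + 4*(q3v y)^2
noncomputable def bev (y : Fin 6 → ℂ) : ℂ := 144*e5v y + 12*q2v y*q3v y

private lemma master' (a b c d e f : ℂ) (h1 : a+b+c+d+e+f = 0)
    (h2 : (a^2+b^2+c^2+d^2+e^2+f^2)^2 = 4*(a^4+b^4+c^4+d^4+e^4+f^4)) :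
    (12*a^3 - 3*(a^2+b^2+c^2+d^2+e^2+f^2)*a - 2*(a^3+b^3+c^3+d^3+e^3+f^3))^2 =
      (-144*(a*b*c*d*e*f) + 4*(a^3+b^3+c^3+d^3+e^3+f^3)^2)
      + (144*(b*c*d*e*f + a*c*d*e*f + a*b*d*e*f + a*b*c*e*f + a*b*c*d*f + a*b*c*d*e)
         + 12*(a^2+b^2+c^2+d^2+e^2+f^2)*(a^3+b^3+c^3+d^3+e^3+f^3))*a := by
  linear_combination (-9*a^2) * h2 + (-18*a^2*f^3 + 18*a^2*e*f^2 + 18*a^2*e^2*f - 18*a^2*e^3 + 18*a^2*d*f^2 - 36*a^2*d*e*f + 18*a^2*d*e^2 + 18*a^2*d^2*f + 18*a^2*d^2*e - 18*a^2*d^3 + 18*a^2*c*f^2 - 36*a^2*c*e*f + 18*a^2*c*e^2 - 36*a^2*c*d*f - 36*a^2*c*d*e + 18*a^2*c*d^2 + 18*a^2*c^2*f + 18*a^2*c^2*e + 18*a^2*c^2*d - 18*a^2*c^3 + 18*a^2*b*f^2 - 36*a^2*b*e*f + 18*a^2*b*e^2 - 36*a^2*b*d*f - 36*a^2*b*d*e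 + 18*a^2*b*d^2 - 36*a^2*b*c*f - 36*a^2*b*c*e - 36*a^2*b*c*d + 18*a^2*b*c^2 + 18*a^2*b^2*f + 18*a^2*b^2*e + 18*a^2*b^2*d + 18*a^2*b^2*c - 18*a^2*b^3 - 30*a^3*f^2 + 12*a^3*e*f - 30*a^3*e^2 + 12*a^3*d*f + 12*a^3*d*e - 30*a^3*d^2 + 12*a^3*c*f + 12*a^3*c*e + 12*a^3*c*d - 30*a^3*c^2 + 12*a^3*b*f + 12*a^3*b*e + 12*a^3*b*d + 12*a^3*b*c - 30*a^3*b^2 - 6*a^4*f - 6*a^4*e - 6*a^4*d - 6*a^4*c - 6*a^4*b + 6*a^5) * h1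

section
variable (y : Fin 6 → ℂ)

private lemma L1 (hs : y 0+y 1+y 2+y 3+y 4+y 5 = 0)
    (hc : (y 0^2+y 1^2+y 2^2+y 3^2+y 4^2+y 5^2)^2 = 4*(y 0^4+y 1^4+y 2^4+y 3^4+y 4^4+y 5^4)) :
    ∀ k, (SX y k)^2 = alv y + bev y * y k := by
  have g0 : (SX y 0)^2 = alv y + bev y * y 0 := by
    simp only [SX, alv, bev, q2v, q3v, e5v, e6v]
    linear_combination master' (y 0) (y 1) (y 2) (y 3) (y 4) (y 5) (by linear_combination hs) (by linear_combination hc)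
  have g1 : (SX y 1)^2 = alv y + bev y * y 1 := by
    simp only [SX, alv, bev, q2v, q3v, e5v, e6v]
    linear_combination master' (y 1) (y 0) (y 2) (y 3) (y 4) (y 5) (by linear_combination hs) (by linear_combination hc)
  have g2 : (SX y 2)^2 = alv y + bev y * y 2 := by
    simp only [SX, alv, bev, q2v, q3v, e5v, e6v]
    linear_combination master' (y 2) (y 0) (y 1) (y 3) (y 4) (y 5) (by linear_combination hs) (by linear_combination hc)
  have g3 : (SX y 3)^2 = alv y + bev y * y 3 := by
    simp only [SX, alv, bev, q2v, q3v, e5v, e6v]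
    linear_combination master' (y 3) (y 0) (y 1) (y 2) (y 4) (y 5) (by linear_combination hs) (by linear_combination hc)
  have g4 : (SX y 4)^2 = alv y + bev y * y 4 := by
    simp only [SX, alv, bev, q2v, q3v, e5v, e6v]
    linear_combination master' (y 4) (y 0) (y 1) (y 2) (y 3) (y 5) (by linear_combination hs) (by linear_combination hc)
  have g5 : (SX y 5)^2 = alv y + bev y * y 5 := by
    simp only [SX, alv, bev, q2v, q3v, e5v, e6v]
    linear_combination master' (y 5) (y 0) (y 1) (y 2) (y 3) (y 4) (by linear_combination hs) (by linear_combination hc)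
  intro k
  fin_cases k
  exacts [g0, g1, g2, g3, g4, g5]

private lemma L2 (hs : y 0+y 1+y 2+y 3+y 4+y 5 = 0) : (∑ k, SX y k) = 0 := by
  simp only [Fin.sum_univ_six, SX, q2v, q3v]
  linear_combination (-3*(y 0^2+y 1^2+y 2^2+y 3^2+y 4^2+y 5^2)) * hs

private lemma L3 (hs : y 0+y 1+y 2+y 3+y 4+y 5 = 0)
    (hc : (y 0^2+y 1^2+y 2^2+y 3^2+y 4^2+y 5^2)^2 = 4*(y 0^4+y 1^4+y 2^4+y 3^4+y 4^4+y 5^4)) :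
    (∑ k, y k * SX y k) = 0 := by
  simp only [Fin.sum_univ_six, SX, q2v, q3v]
  linear_combination (-3) * hc + (-2*(y 0^3+y 1^3+y 2^3+y 3^3+y 4^3+y 5^3)) * hs

private lemma L4 (hs : y 0+y 1+y 2+y 3+y 4+y 5 = 0)
    (hc : (y 0^2+y 1^2+y 2^2+y 3^2+y 4^2+y 5^2)^2 = 4*(y 0^4+y 1^4+y 2^4+y 3^4+y 4^4+y 5^4)) :
    (∑ k, (SX y k)^3) = 0 := by
  have h1 := L1 y hs hc
  have h2 := L2 y hs
  have h3 := L3 y hs hc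
  simp only [Fin.sum_univ_six] at h2 h3 ⊢
  linear_combination (SX y 0) * (h1 0) + (SX y 1) * (h1 1) + (SX y 2) * (h1 2)
    + (SX y 3) * (h1 3) + (SX y 4) * (h1 4) + (SX y 5) * (h1 5)
    + (alv y) * h2 + (bev y) * h3

end
section
variable (y : Fin 6 → ℂ)

private lemma sum_eps_eq (A : Finset (Fin 6)) :
    (∑ k, eps A k * y k) = 2*(∑ k ∈ A, y k) - ∑ k, y k := by
  have h1 : ∑ k ∈ A, eps A k * y k = ∑ k ∈ A, y k :=
    Finset.sum_congr rfl (fun k hk => by simp [eps, hk])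
  have h2 : ∑ k ∈ Aᶜ, eps A k * y k = -∑ k ∈ Aᶜ, y k := by
    rw [← Finset.sum_neg_distrib]
    exact Finset.sum_congr rfl (fun k hk => by simp [eps, Finset.mem_compl.mp hk])
  have h3 := Finset.sum_add_sum_compl A (fun k => eps A k * y k)
  have h4 := Finset.sum_add_sum_compl A y
  linear_combination (-1) * h3 + h1 + h2 - h4

private lemma L5 (hs : y 0+y 1+y 2+y 3+y 4+y 5 = 0)
    (hnA : ∀ A : Finset (Fin 6), A.card = 3 → (∑ k ∈ A, y k) ≠ 0)
    (x : Fin 6 → ℂ) (α : ℂ) (hrel : ∀ k, (x k)^2 = α)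
    (hx1 : (∑ k, x k) = 0) (hx2 : (∑ k, y k * x k) = 0) : x = 0 := by
  simp only [Fin.sum_univ_six] at hx1 hx2
  have h1 := hx1; have h2 := hx2
  have hpm : ∀ k, x k = x 0 ∨ x k = -x 0 := by
    intro k
    have hsq : (x k - x 0)*(x k + x 0) = 0 := by linear_combination (hrel k) - (hrel 0)
    rcases mul_eq_zero.mp hsq with h | h
    · exact Or.inl (by linear_combination h)
    · exact Or.inr (by linear_combination h)
  suffices h0 : x 0 = 0 by
    funext k
    rcases hpm k with h | h <;> rw [h, h0] <;> simp
  by_contra h0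
  obtain e1 | e1 := hpm 1 <;> obtain e2 | e2 := hpm 2 <;> obtain e3 | e3 := hpm 3 <;>
    obtain e4 | e4 := hpm 4 <;> obtain e5 | e5 := hpm 5
  · exact h0 (by linear_combination (h1 - e1 - e2 - e3 - e4 - e5) / 6)
  · exact h0 (by linear_combination (h1 - e1 - e2 - e3 - e4 - e5) / 4)
  · exact h0 (by linear_combination (h1 - e1 - e2 - e3 - e4 - e5) / 4)
  · exact h0 (by linear_combination (h1 - e1 - e2 - e3 - e4 - e5) / 2)
  · exact h0 (by linear_combination (h1 - e1 - e2 - e3 - e4 - e5) / 4)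
  · exact h0 (by linear_combination (h1 - e1 - e2 - e3 - e4 - e5) / 2)
  · exact h0 (by linear_combination (h1 - e1 - e2 - e3 - e4 - e5) / 2)
  · have hA : y 0 + (y 1 + y 2) ≠ 0 := by
      have h := hnA {0, 1, 2} (by decide)
      rwa [Finset.sum_insert (by decide), Finset.sum_insert (by decide),
        Finset.sum_singleton] at h
    have h2' : (y 0 + (y 1 + y 2)) * (2 * x 0) = 0 := by
      linear_combination h2 + (x 0) * hs - (y 1)*e1 - (y 2)*e2 - (y 3)*e3 - (y 4)*e4 - (y 5)*e5
    rcases mul_eq_zero.mp h2' with h | h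
    · exact hA h
    · exact h0 (by linear_combination h / 2)
  · exact h0 (by linear_combination (h1 - e1 - e2 - e3 - e4 - e5) / 4)
  · exact h0 (by linear_combination (h1 - e1 - e2 - e3 - e4 - e5) / 2)
  · exact h0 (by linear_combination (h1 - e1 - e2 - e3 - e4 - e5) / 2)
  · have hA : y 0 + (y 1 + y 3) ≠ 0 := by
      have h := hnA {0, 1, 3} (by decide)
      rwa [Finset.sum_insert (by decide), Finset.sum_insert (by decide),
        Finset.sum_singleton] at h
    have h2' : (y 0 + (y 1 + y 3)) * (2 * x 0) = 0 := by
      linear_combination h2 + (x 0) * hs - (y 1)*e1 - (y 2)*e2 - (y 3)*e3 - (y 4)*e4 - (y 5)*e5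
    rcases mul_eq_zero.mp h2' with h | h
    · exact hA h
    · exact h0 (by linear_combination h / 2)
  · exact h0 (by linear_combination (h1 - e1 - e2 - e3 - e4 - e5) / 2)
  · have hA : y 0 + (y 1 + y 4) ≠ 0 := by
      have h := hnA {0, 1, 4} (by decide)
      rwa [Finset.sum_insert (by decide), Finset.sum_insert (by decide),
        Finset.sum_singleton] at h
    have h2' : (y 0 + (y 1 + y 4)) * (2 * x 0) = 0 := by
      linear_combination h2 + (x 0) * hs - (y 1)*e1 - (y 2)*e2 - (y 3)*e3 - (y 4)*e4 - (y 5)*e5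
    rcases mul_eq_zero.mp h2' with h | h
    · exact hA h
    · exact h0 (by linear_combination h / 2)
  · have hA : y 0 + (y 1 + y 5) ≠ 0 := by
      have h := hnA {0, 1, 5} (by decide)
      rwa [Finset.sum_insert (by decide), Finset.sum_insert (by decide),
        Finset.sum_singleton] at h
    have h2' : (y 0 + (y 1 + y 5)) * (2 * x 0) = 0 := by
      linear_combination h2 + (x 0) * hs - (y 1)*e1 - (y 2)*e2 - (y 3)*e3 - (y 4)*e4 - (y 5)*e5
    rcases mul_eq_zero.mp h2' with h | h
    · exact hA h
    · exact h0 (by linear_combination h / 2)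
  · exact h0 (by linear_combination (h1 - e1 - e2 - e3 - e4 - e5) / -2)
  · exact h0 (by linear_combination (h1 - e1 - e2 - e3 - e4 - e5) / 4)
  · exact h0 (by linear_combination (h1 - e1 - e2 - e3 - e4 - e5) / 2)
  · exact h0 (by linear_combination (h1 - e1 - e2 - e3 - e4 - e5) / 2)
  · have hA : y 0 + (y 2 + y 3) ≠ 0 := by
      have h := hnA {0, 2, 3} (by decide)
      rwa [Finset.sum_insert (by decide), Finset.sum_insert (by decide),
        Finset.sum_singleton] at h
    have h2' : (y 0 + (y 2 + y 3)) * (2 * x 0) = 0 := by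
      linear_combination h2 + (x 0) * hs - (y 1)*e1 - (y 2)*e2 - (y 3)*e3 - (y 4)*e4 - (y 5)*e5
    rcases mul_eq_zero.mp h2' with h | h
    · exact hA h
    · exact h0 (by linear_combination h / 2)
  · exact h0 (by linear_combination (h1 - e1 - e2 - e3 - e4 - e5) / 2)
  · have hA : y 0 + (y 2 + y 4) ≠ 0 := by
      have h := hnA {0, 2, 4} (by decide)
      rwa [Finset.sum_insert (by decide), Finset.sum_insert (by decide),
        Finset.sum_singleton] at h
    have h2' : (y 0 + (y 2 + y 4)) * (2 * x 0) = 0 := by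
      linear_combination h2 + (x 0) * hs - (y 1)*e1 - (y 2)*e2 - (y 3)*e3 - (y 4)*e4 - (y 5)*e5
    rcases mul_eq_zero.mp h2' with h | h
    · exact hA h
    · exact h0 (by linear_combination h / 2)
  · have hA : y 0 + (y 2 + y 5) ≠ 0 := by
      have h := hnA {0, 2, 5} (by decide)
      rwa [Finset.sum_insert (by decide), Finset.sum_insert (by decide),
        Finset.sum_singleton] at h
    have h2' : (y 0 + (y 2 + y 5)) * (2 * x 0) = 0 := by
      linear_combination h2 + (x 0) * hs - (y 1)*e1 - (y 2)*e2 - (y 3)*e3 - (y 4)*e4 - (y 5)*e5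
    rcases mul_eq_zero.mp h2' with h | h
    · exact hA h
    · exact h0 (by linear_combination h / 2)
  · exact h0 (by linear_combination (h1 - e1 - e2 - e3 - e4 - e5) / -2)
  · exact h0 (by linear_combination (h1 - e1 - e2 - e3 - e4 - e5) / 2)
  · have hA : y 0 + (y 3 + y 4) ≠ 0 := by
      have h := hnA {0, 3, 4} (by decide)
      rwa [Finset.sum_insert (by decide), Finset.sum_insert (by decide),
        Finset.sum_singleton] at h
    have h2' : (y 0 + (y 3 + y 4)) * (2 * x 0) = 0 := by
      linear_combination h2 + (x 0) * hs - (y 1)*e1 - (y 2)*e2 - (y 3)*e3 - (y 4)*e4 - (y 5)*e5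
    rcases mul_eq_zero.mp h2' with h | h
    · exact hA h
    · exact h0 (by linear_combination h / 2)
  · have hA : y 0 + (y 3 + y 5) ≠ 0 := by
      have h := hnA {0, 3, 5} (by decide)
      rwa [Finset.sum_insert (by decide), Finset.sum_insert (by decide),
        Finset.sum_singleton] at h
    have h2' : (y 0 + (y 3 + y 5)) * (2 * x 0) = 0 := by
      linear_combination h2 + (x 0) * hs - (y 1)*e1 - (y 2)*e2 - (y 3)*e3 - (y 4)*e4 - (y 5)*e5
    rcases mul_eq_zero.mp h2' with h | h
    · exact hA h
    · exact h0 (by linear_combination h / 2)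
  · exact h0 (by linear_combination (h1 - e1 - e2 - e3 - e4 - e5) / -2)
  · have hA : y 0 + (y 4 + y 5) ≠ 0 := by
      have h := hnA {0, 4, 5} (by decide)
      rwa [Finset.sum_insert (by decide), Finset.sum_insert (by decide),
        Finset.sum_singleton] at h
    have h2' : (y 0 + (y 4 + y 5)) * (2 * x 0) = 0 := by
      linear_combination h2 + (x 0) * hs - (y 1)*e1 - (y 2)*e2 - (y 3)*e3 - (y 4)*e4 - (y 5)*e5
    rcases mul_eq_zero.mp h2' with h | h
    · exact hA h
    · exact h0 (by linear_combination h / 2)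
  · exact h0 (by linear_combination (h1 - e1 - e2 - e3 - e4 - e5) / -2)
  · exact h0 (by linear_combination (h1 - e1 - e2 - e3 - e4 - e5) / -2)
  · exact h0 (by linear_combination (h1 - e1 - e2 - e3 - e4 - e5) / -4)

end

section
variable (y : Fin 6 → ℂ)

private lemma L6 (hy : y ≠ 0) (hs : y 0+y 1+y 2+y 3+y 4+y 5 = 0)
    (hc : (y 0^2+y 1^2+y 2^2+y 3^2+y 4^2+y 5^2)^2 = 4*(y 0^4+y 1^4+y 2^4+y 3^4+y 4^4+y 5^4))
    (hnA : ∀ A : Finset (Fin 6), A.card = 3 → (∑ k ∈ A, y k) ≠ 0) :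
    SX y ≠ 0 := by
  intro hX
  have hXk : ∀ k, 12*(y k)^3 - 3*q2v y*(y k) - 2*q3v y = 0 := by
    intro k; have := congrFun hX k; simpa [SX] using this
  by_cases hall : ∀ k, y k = y 0
  · have hy0 : y 0 = 0 := by
      linear_combination (hs - hall 1 - hall 2 - hall 3 - hall 4 - hall 5) / 6
    exact hy (funext fun k => by simp [hall k, hy0])
  push_neg at hall
  obtain ⟨i, hi⟩ := hall
  by_cases h2 : ∀ k, y k = y 0 ∨ y k = y i
  · -- two-value case
    have hzero : y 0 = 0 → y i = 0 → False := fun ha hb =>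
      hy (funext fun k => by rcases h2 k with h | h <;> simp [h, ha, hb])
    set f := Finset.univ.filter (fun k => y k = y 0) with hf
    set fc := Finset.univ.filter (fun k => ¬ y k = y 0) with hfcdef
    set n := f.card with hn
    have hcard : f.card + fc.card = 6 := by
      rw [hf, hfcdef, Finset.card_filter_add_card_filter_not]; simp
    have hmem0 : (0 : Fin 6) ∈ f := by simp [hf]
    have hmemi : i ∈ fc := by simp [hfcdef, hi]
    have hfc : ∀ k ∈ fc, y k = y i := by
      intro k hk
      rcases h2 k with h | h
      · exact absurd h (by simpa [hfcdef] using hk)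
      · exact h
    have hfccard : fc.card = 6 - n := by omega
    have hpow : ∀ m : ℕ, (∑ k, (y k)^m) = (n:ℂ)*(y 0)^m + ((6-n:ℕ):ℂ)*(y i)^m := by
      intro m
      rw [← Finset.sum_filter_add_sum_filter_not Finset.univ (fun k => y k = y 0)
        (fun k => (y k)^m)]
      congr 1
      · rw [Finset.sum_congr rfl (fun k hk => by rw [(Finset.mem_filter.mp hk).2]),
          Finset.sum_const, nsmul_eq_mul]
      · rw [Finset.sum_congr rfl (fun k hk => by rw [hfc k hk]),
          Finset.sum_const, nsmul_eq_mul, hfccard]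
    have hA1 : (n:ℂ)*(y 0) + ((6-n:ℕ):ℂ)*(y i) = 0 := by
      have := hpow 1
      simp only [pow_one] at this
      rw [← this, Fin.sum_univ_six]; exact hs
    have hA2 : ((n:ℂ)*(y 0)^2 + ((6-n:ℕ):ℂ)*(y i)^2)^2
        = 4*((n:ℂ)*(y 0)^4 + ((6-n:ℕ):ℂ)*(y i)^4) := by
      rw [← hpow 2, ← hpow 4, Fin.sum_univ_six, Fin.sum_univ_six]; exact hc
    have hn6 : n ≤ 6 := by omega
    interval_cases n
    · exact absurd hmem0 (by rw [Finset.card_eq_zero.mp hn.symm]; simp)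
    · push_cast at hA1 hA2
      have h0i : y 0 = -5*(y i) := by linear_combination hA1
      rw [h0i] at hA2
      have h4 : (y i)^4 = 0 := by linear_combination (-1/1620 : ℂ)*hA2
      have hi0 : y i = 0 := by
        have := pow_eq_zero_iff (n := 4) (by norm_num) |>.mp h4
        exact this
      exact hzero (by rw [h0i, hi0]; ring) hi0
    · push_cast at hA1
      have hf2 : 0 < f.card := by omega
      obtain ⟨i0, hi0⟩ := Finset.card_pos.mp hf2
      have hfc4 : 1 < fc.card := by omega
      obtain ⟨j0, hj0, k0, hk0, hjk⟩ := Finset.one_lt_card.mp hfc4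
      have vi0 : y i0 = y 0 := (Finset.mem_filter.mp hi0).2
      have vj0 : y j0 = y i := hfc j0 hj0
      have vk0 : y k0 = y i := hfc k0 hk0
      have hij0 : i0 ≠ j0 := fun h =>
        (Finset.mem_filter.mp hj0).2 (by rw [← h]; exact vi0)
      have hik0 : i0 ≠ k0 := fun h =>
        (Finset.mem_filter.mp hk0).2 (by rw [← h]; exact vi0)
      have hA := hnA {i0, j0, k0} (by
        rw [Finset.card_insert_of_notMem (by simp [hij0, hik0]),
          Finset.card_insert_of_notMem (by simp [hjk]), Finset.card_singleton])
      rw [Finset.sum_insert (by simp [hij0, hik0]), Finset.sum_insert (by simp [hjk]),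
        Finset.sum_singleton] at hA
      exact hA (by rw [vi0, vj0, vk0]; linear_combination hA1/2)
    · push_cast at hA1 hA2
      have hyi : y i = -(y 0) := by linear_combination hA1/3
      rw [hyi] at hA2
      have h4 : (y 0)^4 = 0 := by linear_combination hA2/12
      have h00 : y 0 = 0 := pow_eq_zero_iff (n := 4) (by norm_num) |>.mp h4
      exact hzero h00 (by rw [hyi, h00]; ring)
    · push_cast at hA1
      have hfc2 : 0 < fc.card := by omega
      obtain ⟨j0, hj0⟩ := Finset.card_pos.mp hfc2
      have hf4 : 1 < f.card := by omega
      obtain ⟨i0, hi0, k0, hk0, hik⟩ := Finset.one_lt_card.mp hf4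
      have vi0 : y i0 = y 0 := (Finset.mem_filter.mp hi0).2
      have vk0 : y k0 = y 0 := (Finset.mem_filter.mp hk0).2
      have vj0 : y j0 = y i := hfc j0 hj0
      have hji0 : j0 ≠ i0 := fun h =>
        (Finset.mem_filter.mp hj0).2 (by rw [h]; exact vi0)
      have hjk0 : j0 ≠ k0 := fun h =>
        (Finset.mem_filter.mp hj0).2 (by rw [h]; exact vk0)
      have hA := hnA {j0, i0, k0} (by
        rw [Finset.card_insert_of_notMem (by simp [hji0, hjk0]),
          Finset.card_insert_of_notMem (by simp [hik]), Finset.card_singleton])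
      rw [Finset.sum_insert (by simp [hji0, hjk0]), Finset.sum_insert (by simp [hik]),
        Finset.sum_singleton] at hA
      exact hA (by rw [vi0, vj0, vk0]; linear_combination hA1/2)
    · push_cast at hA1 hA2
      have hyi : y i = -5*(y 0) := by linear_combination hA1
      rw [hyi] at hA2
      have h4 : (y 0)^4 = 0 := by linear_combination (-1/1620 : ℂ)*hA2
      have h00 : y 0 = 0 := pow_eq_zero_iff (n := 4) (by norm_num) |>.mp h4
      exact hzero h00 (by rw [hyi, h00]; ring)
    · have huniv : f = Finset.univ := Finset.eq_univ_of_card _ (by rw [← hn]; simp)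
      have hiu : i ∈ f := huniv.symm ▸ Finset.mem_univ i
      exact hi (Finset.mem_filter.mp hiu).2
  · -- three distinct values
    push_neg at h2
    obtain ⟨j, hj1, hj2⟩ := h2
    have c1 := hXk 0
    have c2 := hXk i
    have c3 := hXk j
    have hne0i : y 0 - y i ≠ 0 := sub_ne_zero_of_ne (Ne.symm hi)
    have hneij : y i - y j ≠ 0 := sub_ne_zero_of_ne (Ne.symm hj2)
    have hne0j : y 0 - y j ≠ 0 := sub_ne_zero_of_ne (Ne.symm hj1)
    have d12 : (y 0 - y i)*(12*((y 0)^2 + (y 0)*(y i) + (y i)^2) - 3*q2v y) = 0 := by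
      linear_combination c1 - c2
    have h12 : 12*((y 0)^2 + (y 0)*(y i) + (y i)^2) - 3*q2v y = 0 :=
      (mul_eq_zero.mp d12).resolve_left hne0i
    have d23 : (y i - y j)*(12*((y i)^2 + (y i)*(y j) + (y j)^2) - 3*q2v y) = 0 := by
      linear_combination c2 - c3
    have h23 : 12*((y i)^2 + (y i)*(y j) + (y j)^2) - 3*q2v y = 0 :=
      (mul_eq_zero.mp d23).resolve_left hneij
    have d13 : (y 0 - y j)*(y 0 + y i + y j) = 0 := by
      linear_combination (h12 - h23)/12
    have habc : y 0 + y i + y j = 0 := (mul_eq_zero.mp d13).resolve_left hne0j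
    have hi0 : i ≠ 0 := fun h => hi (by rw [h])
    have hj0 : j ≠ 0 := fun h => hj1 (by rw [h])
    have hji : j ≠ i := fun h => hj2 (by rw [h])
    have h0i : (0 : Fin 6) ≠ i := Ne.symm hi0
    have h0j : (0 : Fin 6) ≠ j := Ne.symm hj0
    have hij : i ≠ j := Ne.symm hji
    have hA := hnA {0, i, j} (by
      rw [Finset.card_insert_of_notMem (by simp [h0i, h0j]),
        Finset.card_insert_of_notMem (by simp [hij]), Finset.card_singleton])
    rw [Finset.sum_insert (by simp [h0i, h0j]), Finset.sum_insert (by simp [hij]),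
      Finset.sum_singleton] at hA
    exact hA (by linear_combination habc)

private lemma L7 (hy : y ≠ 0) (hs : y 0+y 1+y 2+y 3+y 4+y 5 = 0)
    (hc : (y 0^2+y 1^2+y 2^2+y 3^2+y 4^2+y 5^2)^2 = 4*(y 0^4+y 1^4+y 2^4+y 3^4+y 4^4+y 5^4))
    (hnA : ∀ A : Finset (Fin 6), A.card = 3 → (∑ k ∈ A, y k) ≠ 0) :
    bev y ≠ 0 := by
  intro hb
  apply L6 y hy hs hc hnA
  apply L5 y hs hnA (SX y) (alv y)
  · intro k; rw [L1 y hs hc k, hb]; ring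
  · exact L2 y hs
  · exact L3 y hs hc

end
section
variable (y : Fin 6 → ℂ)

private lemma pairz (i j : Fin 6) (h1 : SX y i + SX y j = 0)
    (h2 : y i * SX y i + y j * SX y j = 0) : SX y i = 0 ∧ SX y j = 0 := by
  by_cases hyy : y i = y j
  · have hXX : SX y i = SX y j := by simp only [SX]; rw [hyy]
    have h0 : SX y i = 0 := by linear_combination (h1 + hXX)/2
    exact ⟨h0, by linear_combination h1 - h0⟩
  · have h3 : SX y i * (y i - y j) = 0 := by linear_combination h2 - y j * h1
    have hXi : SX y i = 0 := (mul_eq_zero.mp h3).resolve_right (sub_ne_zero_of_ne hyy)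
    exact ⟨hXi, by linear_combination h1 - hXi⟩

private lemma smallz (hs : y 0+y 1+y 2+y 3+y 4+y 5 = 0)
    (hc : (y 0^2+y 1^2+y 2^2+y 3^2+y 4^2+y 5^2)^2 = 4*(y 0^4+y 1^4+y 2^4+y 3^4+y 4^4+y 5^4))
    (S : Finset (Fin 6)) (hScard : S.card ≤ 3)
    (h1 : ∑ k ∈ S, SX y k = 0) (h2 : ∑ k ∈ S, y k * SX y k = 0) :
    ∀ k ∈ S, SX y k = 0 := by
  have hL1 := L1 y hs hc
  have h03 : S.card = 0 ∨ S.card = 1 ∨ S.card = 2 ∨ S.card = 3 := by omega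
  rcases h03 with h | h | h | h
  · intro k hk; rw [Finset.card_eq_zero.mp h] at hk; simp at hk
  · obtain ⟨a, ha⟩ := Finset.card_eq_one.mp h
    rw [ha, Finset.sum_singleton] at h1
    intro k hk; rw [ha, Finset.mem_singleton] at hk; rw [hk]; exact h1
  · obtain ⟨a, b, hab, hS⟩ := Finset.card_eq_two.mp h
    rw [hS, Finset.sum_insert (by simp [hab]), Finset.sum_singleton] at h1 h2
    have hp := pairz y a b h1 h2
    intro k hk; rw [hS] at hk
    rcases Finset.mem_insert.mp hk with h' | h'
    · rw [h']; exact hp.1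
    · rw [Finset.mem_singleton.mp h']; exact hp.2
  · obtain ⟨a, b, c, hab, hac, hbc, hS⟩ := Finset.card_eq_three.mp h
    rw [hS, Finset.sum_insert (by simp [hab, hac]), Finset.sum_insert (by simp [hbc]),
      Finset.sum_singleton] at h1 h2
    have hcube : (SX y a)^3 + (SX y b)^3 + (SX y c)^3 = 0 := by
      linear_combination (SX y a) * (hL1 a) + (SX y b) * (hL1 b) + (SX y c) * (hL1 c)
        + (alv y) * h1 + (bev y) * h2
    have habc0 : SX y a * SX y b * SX y c = 0 := by
      have h3 : (3:ℂ) * (SX y a * SX y b * SX y c) = 0 := by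
        linear_combination hcube - ((SX y a)^2 + (SX y b)^2 + (SX y c)^2
          - SX y a * SX y b - SX y b * SX y c - SX y a * SX y c) * h1
      exact (mul_eq_zero.mp h3).resolve_left (by norm_num)
    have htrio : SX y a = 0 ∧ SX y b = 0 ∧ SX y c = 0 := by
      rcases mul_eq_zero.mp habc0 with hab0 | hc0
      · rcases mul_eq_zero.mp hab0 with ha0 | hb0
        · have hp := pairz y b c (by linear_combination h1 - ha0)
            (by linear_combination h2 - y a * ha0)
          exact ⟨ha0, hp.1, hp.2⟩
        · have hp := pairz y a c (by linear_combination h1 - hb0)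
            (by linear_combination h2 - y b * hb0)
          exact ⟨hp.1, hb0, hp.2⟩
      · have hp := pairz y a b (by linear_combination h1 - hc0)
          (by linear_combination h2 - y c * hc0)
        exact ⟨hp.1, hp.2, hc0⟩
    intro k hk; rw [hS] at hk
    simp only [Finset.mem_insert, Finset.mem_singleton] at hk
    rcases hk with h' | h' | h' <;> rw [h']
    · exact htrio.1
    · exact htrio.2.1
    · exact htrio.2.2

end

open Polynomial in
private lemma pairf : ∀ (n : ℕ) (S : Finset (Fin 6)) (u w : Fin 6 → ℂ), S.card = n →
    (∀ i ∈ S, u i ≠ 0) →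
    (∏ i ∈ S, (X - C (u i))) = (∏ i ∈ S, (X + C (u i))) →
    (∀ i j, u i = -u j → w i = w j) →
    ∃ B : Finset (Fin 6), B ⊆ S ∧ 2 * B.card = S.card ∧
      ∑ i ∈ B, w i = ∑ i ∈ S \ B, w i := by
  intro n
  induction n using Nat.strong_induction_on with
  | _ n IH =>
    intro S u w hcard hne hpoly hw
    rcases Finset.eq_empty_or_nonempty S with rfl | ⟨i, hi⟩
    · exact ⟨∅, by simp, by simp, by simp⟩
    · have hev := congrArg (Polynomial.eval (u i)) hpoly
      rw [Polynomial.eval_prod, Polynomial.eval_prod] at hev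
      simp only [Polynomial.eval_sub, Polynomial.eval_add, Polynomial.eval_X,
        Polynomial.eval_C] at hev
      have hz : ∏ j ∈ S, (u i - u j) = 0 := Finset.prod_eq_zero hi (sub_self _)
      have hz2 : ∏ j ∈ S, (u i + u j) = 0 := hev ▸ hz
      obtain ⟨j, hj, hij0⟩ := Finset.prod_eq_zero_iff.mp hz2
      have huj : u j = - u i := by linear_combination hij0
      have hij : i ≠ j := by
        rintro rfl; exact hne i hi (by linear_combination hij0/2)
      have hjS : j ∈ S.erase i := Finset.mem_erase.mpr ⟨Ne.symm hij, hj⟩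
      set S' := (S.erase i).erase j with hS'
      have hkey : ((X : ℂ[X]) - C (u i)) * (X - C (u j)) = (X + C (u i)) * (X + C (u j)) := by
        rw [huj, map_neg]; ring
      have e1 : ∏ k ∈ S, (X - C (u k))
          = (X - C (u i)) * ((X - C (u j)) * ∏ k ∈ S', (X - C (u k))) := by
        rw [← Finset.mul_prod_erase S (fun k => X - C (u k)) hi,
          ← Finset.mul_prod_erase (S.erase i) (fun k => X - C (u k)) hjS]
      have e2 : ∏ k ∈ S, (X + C (u k))
          = (X + C (u i)) * ((X + C (u j)) * ∏ k ∈ S', (X + C (u k))) := by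
        rw [← Finset.mul_prod_erase S (fun k => X + C (u k)) hi,
          ← Finset.mul_prod_erase (S.erase i) (fun k => X + C (u k)) hjS]
      have hne2 : ((X : ℂ[X]) - C (u i)) * (X - C (u j)) ≠ 0 :=
        mul_ne_zero (X_sub_C_ne_zero _) (X_sub_C_ne_zero _)
      have hbig : ((X : ℂ[X]) - C (u i)) * (X - C (u j)) * ∏ k ∈ S', (X - C (u k))
          = ((X : ℂ[X]) - C (u i)) * (X - C (u j)) * ∏ k ∈ S', (X + C (u k)) := by
        rw [mul_assoc, ← e1, hpoly, e2, ← mul_assoc, ← hkey]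
      have hpoly' : ∏ k ∈ S', (X - C (u k)) = ∏ k ∈ S', (X + C (u k)) :=
        mul_left_cancel₀ hne2 hbig
      have hS'sub : S' ⊆ S := (Finset.erase_subset _ _).trans (Finset.erase_subset _ _)
      have hcard1 : S'.card + 1 = (S.erase i).card := Finset.card_erase_add_one hjS
      have hcard2 : (S.erase i).card + 1 = S.card := Finset.card_erase_add_one hi
      have hne' : ∀ k ∈ S', u k ≠ 0 := fun k hk => hne k (hS'sub hk)
      obtain ⟨B', hB'sub, hB'card, hB'sum⟩ :=
        IH S'.card (by omega) S' u w rfl hne' hpoly' hw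
      have hiB' : i ∉ B' := fun h =>
        Finset.notMem_erase i S (Finset.mem_of_mem_erase (hB'sub h))
      have hjS'0 : j ∉ S' := Finset.notMem_erase j _
      have hjB' : j ∉ B' := fun h => hjS'0 (hB'sub h)
      refine ⟨insert i B', ?_, ?_, ?_⟩
      · exact Finset.insert_subset_iff.mpr ⟨hi, hB'sub.trans hS'sub⟩
      · rw [Finset.card_insert_of_notMem hiB']; omega
      · have hsd : S \ insert i B' = insert j (S' \ B') := by
          ext k
          simp only [Finset.mem_sdiff, Finset.mem_insert, hS', Finset.mem_erase, not_or]
          constructor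
          · rintro ⟨hkS, hki, hkB⟩
            by_cases hkj : k = j
            · exact Or.inl hkj
            · exact Or.inr ⟨⟨hkj, hki, hkS⟩, hkB⟩
          · rintro (rfl | ⟨⟨hkj, hki, hkS⟩, hkB⟩)
            · exact ⟨hj, Ne.symm hij, hjB'⟩
            · exact ⟨hkS, hki, hkB⟩
        have hww : w i = w j := hw i j (by rw [huj]; ring)
        have hjSB : j ∉ S' \ B' := fun h => hjS'0 (Finset.mem_sdiff.mp h).1
        rw [Finset.sum_insert hiB', hsd, Finset.sum_insert hjSB, hww, hB'sum]

section
variable (y : Fin 6 → ℂ)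

private lemma L8 (hy : y ≠ 0) (hs : y 0+y 1+y 2+y 3+y 4+y 5 = 0)
    (hc : (y 0^2+y 1^2+y 2^2+y 3^2+y 4^2+y 5^2)^2 = 4*(y 0^4+y 1^4+y 2^4+y 3^4+y 4^4+y 5^4))
    (hnA : ∀ A : Finset (Fin 6), A.card = 3 → (∑ k ∈ A, y k) ≠ 0)
    (x : Fin 6 → ℂ) (hx0 : x ≠ 0)
    (h1 : (∑ k, x k) = 0) (hxy : (∑ k, y k * x k) = 0)
    (α β : ℂ) (hrel : ∀ k, (x k)^2 = α + β * y k) :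
    ∃ c : ℂ, c ≠ 0 ∧ x = c • SX y := by
  have hbe := L7 y hy hs hc hnA
  have hL1 := L1 y hs hc
  have hL2 := L2 y hs
  have hL3 := L3 y hs hc
  have hL4 := L4 y hs hc
  by_cases hβ : β = 0
  · exact absurd (L5 y hs hnA x α (fun k => by rw [hrel k, hβ]; ring) h1 hxy) hx0
  obtain ⟨t, ht2⟩ : ∃ t : ℂ, t^2 = bev y / β := IsAlgClosed.exists_pow_nat_eq _ (by norm_num)
  have htne : t ≠ 0 := by
    intro h
    rw [h] at ht2
    have : bev y / β = 0 := by rw [← ht2]; ring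
    exact hbe ((div_eq_zero_iff.mp this).resolve_right hβ)
  have hβ'' : t^2 * β = bev y := by rw [ht2]; field_simp
  set μ := t^2 * α with hμdef
  have hz2 : ∀ k, (t * x k)^2 = μ + bev y * y k := fun k => by
    linear_combination (t^2) * (hrel k) + (y k) * hβ''
  have hzsum : (∑ k, t * x k) = 0 := by rw [← Finset.mul_sum, h1, mul_zero]
  have hyzsum : (∑ k, y k * (t * x k)) = 0 := by
    rw [Finset.sum_congr rfl (fun k _ => show y k * (t * x k) = t * (y k * x k) by ring),
      ← Finset.mul_sum, hxy, mul_zero]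
  by_cases hlam : μ - alv y = 0
  · -- tangency case: t•x = ± SX
    have hzx : ∀ k, (t * x k - SX y k) * (t * x k + SX y k) = 0 := fun k => by
      linear_combination (hz2 k) - (hL1 k) + hlam
    set P := Finset.univ.filter (fun k => t * x k = SX y k) with hPdef
    set Q := Finset.univ.filter (fun k => ¬ t * x k = SX y k) with hQdef
    have hQneg : ∀ k ∈ Q, t * x k = -SX y k := by
      intro k hk
      have hnk : ¬ t * x k = SX y k := by
        rw [hQdef] at hk; exact (Finset.mem_filter.mp hk).2
      rcases mul_eq_zero.mp (hzx k) with h | h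
      · exact absurd (by linear_combination h) hnk
      · linear_combination h
    have hPz : ∀ k ∈ P, t * x k = SX y k := by
      intro k hk; rw [hPdef] at hk; exact (Finset.mem_filter.mp hk).2
    -- sums over P and Q
    have hsplitS : (∑ k ∈ P, SX y k) + (∑ k ∈ Q, SX y k) = 0 := by
      rw [hPdef, hQdef, Finset.sum_filter_add_sum_filter_not]; exact hL2
    have hsplitSy : (∑ k ∈ P, y k * SX y k) + (∑ k ∈ Q, y k * SX y k) = 0 := by
      rw [hPdef, hQdef, Finset.sum_filter_add_sum_filter_not]; exact hL3
    have hsplitz : (∑ k ∈ P, SX y k) - (∑ k ∈ Q, SX y k) = 0 := by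
      have h0 : (∑ k ∈ P, t * x k) + (∑ k ∈ Q, t * x k) = 0 := by
        rw [hPdef, hQdef, Finset.sum_filter_add_sum_filter_not]; exact hzsum
      rw [Finset.sum_congr rfl hPz, Finset.sum_congr rfl
        (fun k hk => hQneg k hk)] at h0
      rw [Finset.sum_neg_distrib] at h0
      linear_combination h0
    have hsplitzy : (∑ k ∈ P, y k * SX y k) - (∑ k ∈ Q, y k * SX y k) = 0 := by
      have h0 : (∑ k ∈ P, y k * (t * x k)) + (∑ k ∈ Q, y k * (t * x k)) = 0 := by
        rw [hPdef, hQdef, Finset.sum_filter_add_sum_filter_not]; exact hyzsum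
      rw [Finset.sum_congr rfl (fun k hk => show y k * (t * x k) = y k * SX y k by
          rw [hPz k hk]),
        Finset.sum_congr rfl (fun k hk => show y k * (t * x k) = -(y k * SX y k) by
          rw [hQneg k hk]; ring), Finset.sum_neg_distrib] at h0
      linear_combination h0
    have hPS : (∑ k ∈ P, SX y k) = 0 := by linear_combination (hsplitS + hsplitz)/2
    have hQS : (∑ k ∈ Q, SX y k) = 0 := by linear_combination (hsplitS - hsplitz)/2
    have hPSy : (∑ k ∈ P, y k * SX y k) = 0 := by linear_combination (hsplitSy + hsplitzy)/2
    have hQSy : (∑ k ∈ Q, y k * SX y k) = 0 := by linear_combination (hsplitSy - hsplitzy)/2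
    have hcards : P.card + Q.card = 6 := by
      rw [hPdef, hQdef, Finset.card_filter_add_card_filter_not]; simp
    rcases le_or_gt P.card 3 with hle | hlt
    · have hvan := smallz y hs hc P hle hPS hPSy
      have hzS : ∀ k, t * x k = -SX y k := by
        intro k
        by_cases hk : t * x k = SX y k
        · have hkP : k ∈ P := by rw [hPdef]; exact Finset.mem_filter.mpr ⟨Finset.mem_univ k, hk⟩
          rw [hk, hvan k hkP]; ring
        · exact hQneg k (by rw [hQdef]; exact Finset.mem_filter.mpr ⟨Finset.mem_univ k, hk⟩)
      refine ⟨-t⁻¹, neg_ne_zero.mpr (inv_ne_zero htne), funext fun k => ?_⟩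
      have hk := hzS k
      have : x k = t⁻¹ * (t * x k) := by field_simp
      rw [Pi.smul_apply, smul_eq_mul, this, hk]; ring
    · have hQle : Q.card ≤ 3 := by omega
      have hvan := smallz y hs hc Q hQle hQS hQSy
      have hzS : ∀ k, t * x k = SX y k := by
        intro k
        by_cases hk : t * x k = SX y k
        · exact hk
        · have hkQ : k ∈ Q := by rw [hQdef]; exact Finset.mem_filter.mpr ⟨Finset.mem_univ k, hk⟩
          rw [hQneg k hkQ, hvan k hkQ]; ring
      refine ⟨t⁻¹, inv_ne_zero htne, funext fun k => ?_⟩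
      have hk := hzS k
      have : x k = t⁻¹ * (t * x k) := by field_simp
      rw [Pi.smul_apply, smul_eq_mul, this, hk]
  · -- bitangent case: contradiction with hnA
    exfalso
    set u : Fin 6 → ℂ := fun k => t * x k + SX y k with hudef
    set v : Fin 6 → ℂ := fun k => t * x k - SX y k with hvdef
    have hu : ∀ k, u k = t * x k + SX y k := fun k => by rw [hudef]
    have hv : ∀ k, v k = t * x k - SX y k := fun k => by rw [hvdef]
    have hprodk : ∀ k, u k * v k = μ - alv y := fun k => by
      rw [hu k, hv k]; linear_combination (hz2 k) - (hL1 k)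
    have hune : ∀ k, u k ≠ 0 := fun k h => hlam (by rw [← hprodk k, h]; ring)
    have hvk : ∀ k, v k ≠ 0 := fun k h => hlam (by rw [← hprodk k, h]; ring)
    -- expanded sums
    have E1 : x 0 + x 1 + x 2 + x 3 + x 4 + x 5 = 0 := by
      rw [← Fin.sum_univ_six (f := x)]; exact h1
    have EXY : y 0 * x 0 + y 1 * x 1 + y 2 * x 2 + y 3 * x 3 + y 4 * x 4 + y 5 * x 5 = 0 := by
      rw [← Fin.sum_univ_six (f := fun k => y k * x k)]; exact hxy
    have EL2 : SX y 0 + SX y 1 + SX y 2 + SX y 3 + SX y 4 + SX y 5 = 0 := by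
      rw [← Fin.sum_univ_six (f := SX y)]; exact hL2
    have EL3 : y 0 * SX y 0 + y 1 * SX y 1 + y 2 * SX y 2 + y 3 * SX y 3 + y 4 * SX y 4
        + y 5 * SX y 5 = 0 := by
      rw [← Fin.sum_univ_six (f := fun k => y k * SX y k)]; exact hL3
    have EL4 : (SX y 0)^3 + (SX y 1)^3 + (SX y 2)^3 + (SX y 3)^3 + (SX y 4)^3
        + (SX y 5)^3 = 0 := by
      rw [← Fin.sum_univ_six (f := fun k => (SX y k)^3)]; exact hL4
    have hu1 : u 0 + u 1 + u 2 + u 3 + u 4 + u 5 = 0 := by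
      rw [hu 0, hu 1, hu 2, hu 3, hu 4, hu 5]
      linear_combination t * E1 + EL2
    have hv1 : v 0 + v 1 + v 2 + v 3 + v 4 + v 5 = 0 := by
      rw [hv 0, hv 1, hv 2, hv 3, hv 4, hv 5]
      linear_combination t * E1 - EL2
    have hu3 : (u 0)^3 + (u 1)^3 + (u 2)^3 + (u 3)^3 + (u 4)^3 + (u 5)^3 = 0 := by
      rw [hu 0, hu 1, hu 2, hu 3, hu 4, hu 5]
      linear_combination (t*x 0 + 3*SX y 0)*(hz2 0) + (t*x 1 + 3*SX y 1)*(hz2 1)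
        + (t*x 2 + 3*SX y 2)*(hz2 2) + (t*x 3 + 3*SX y 3)*(hz2 3)
        + (t*x 4 + 3*SX y 4)*(hz2 4) + (t*x 5 + 3*SX y 5)*(hz2 5)
        + (3*t*x 0 + SX y 0)*(hL1 0) + (3*t*x 1 + SX y 1)*(hL1 1)
        + (3*t*x 2 + SX y 2)*(hL1 2) + (3*t*x 3 + SX y 3)*(hL1 3)
        + (3*t*x 4 + SX y 4)*(hL1 4) + (3*t*x 5 + SX y 5)*(hL1 5)
        + t*(μ + 3*alv y)*E1 + 4*(bev y)*t*EXY + (3*μ + alv y)*EL2 + 4*(bev y)*EL3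
    have he3 : u 0*u 1*u 2 + u 0*u 1*u 3 + u 0*u 1*u 4 + u 0*u 1*u 5 + u 0*u 2*u 3
        + u 0*u 2*u 4 + u 0*u 2*u 5 + u 0*u 3*u 4 + u 0*u 3*u 5 + u 0*u 4*u 5
        + u 1*u 2*u 3 + u 1*u 2*u 4 + u 1*u 2*u 5 + u 1*u 3*u 4 + u 1*u 3*u 5
        + u 1*u 4*u 5 + u 2*u 3*u 4 + u 2*u 3*u 5 + u 2*u 4*u 5 + u 3*u 4*u 5 = 0 := by
      linear_combination (((u 0+u 1+u 2+u 3+u 4+u 5)^2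
        - 3*((u 0)^2+(u 1)^2+(u 2)^2+(u 3)^2+(u 4)^2+(u 5)^2))/6) * hu1 + (1/3) * hu3
    have he5' : (μ - alv y) * (u 1*u 2*u 3*u 4*u 5 + u 0*u 2*u 3*u 4*u 5
        + u 0*u 1*u 3*u 4*u 5 + u 0*u 1*u 2*u 4*u 5 + u 0*u 1*u 2*u 3*u 5
        + u 0*u 1*u 2*u 3*u 4) = 0 := by
      linear_combination (-(u 1*u 2*u 3*u 4*u 5))*(hprodk 0) + (-(u 0*u 2*u 3*u 4*u 5))*(hprodk 1)
        + (-(u 0*u 1*u 3*u 4*u 5))*(hprodk 2) + (-(u 0*u 1*u 2*u 4*u 5))*(hprodk 3)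
        + (-(u 0*u 1*u 2*u 3*u 5))*(hprodk 4) + (-(u 0*u 1*u 2*u 3*u 4))*(hprodk 5)
        + (u 0*u 1*u 2*u 3*u 4*u 5)*hv1
    have he5 : u 1*u 2*u 3*u 4*u 5 + u 0*u 2*u 3*u 4*u 5 + u 0*u 1*u 3*u 4*u 5
        + u 0*u 1*u 2*u 4*u 5 + u 0*u 1*u 2*u 3*u 5 + u 0*u 1*u 2*u 3*u 4 = 0 :=
      (mul_eq_zero.mp he5').resolve_left hlam
    -- polynomial identity
    have hC1 : Polynomial.C (u 0) + Polynomial.C (u 1) + Polynomial.C (u 2)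
        + Polynomial.C (u 3) + Polynomial.C (u 4) + Polynomial.C (u 5) = (0 : Polynomial ℂ) := by
      have := congrArg Polynomial.C hu1
      simpa [map_add] using this
    have hC3 : (Polynomial.C (u 0))^3 + (Polynomial.C (u 1))^3 + (Polynomial.C (u 2))^3
        + (Polynomial.C (u 3))^3 + (Polynomial.C (u 4))^3 + (Polynomial.C (u 5))^3
        = (0 : Polynomial ℂ) := by
      have := congrArg Polynomial.C hu3
      simpa [map_add, map_pow] using this
    have hCe3 : Polynomial.C (u 0)*Polynomial.C (u 1)*Polynomial.C (u 2)
        + Polynomial.C (u 0)*Polynomial.C (u 1)*Polynomial.C (u 3)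
        + Polynomial.C (u 0)*Polynomial.C (u 1)*Polynomial.C (u 4)
        + Polynomial.C (u 0)*Polynomial.C (u 1)*Polynomial.C (u 5)
        + Polynomial.C (u 0)*Polynomial.C (u 2)*Polynomial.C (u 3)
        + Polynomial.C (u 0)*Polynomial.C (u 2)*Polynomial.C (u 4)
        + Polynomial.C (u 0)*Polynomial.C (u 2)*Polynomial.C (u 5)
        + Polynomial.C (u 0)*Polynomial.C (u 3)*Polynomial.C (u 4)
        + Polynomial.C (u 0)*Polynomial.C (u 3)*Polynomial.C (u 5)
        + Polynomial.C (u 0)*Polynomial.C (u 4)*Polynomial.C (u 5)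
        + Polynomial.C (u 1)*Polynomial.C (u 2)*Polynomial.C (u 3)
        + Polynomial.C (u 1)*Polynomial.C (u 2)*Polynomial.C (u 4)
        + Polynomial.C (u 1)*Polynomial.C (u 2)*Polynomial.C (u 5)
        + Polynomial.C (u 1)*Polynomial.C (u 3)*Polynomial.C (u 4)
        + Polynomial.C (u 1)*Polynomial.C (u 3)*Polynomial.C (u 5)
        + Polynomial.C (u 1)*Polynomial.C (u 4)*Polynomial.C (u 5)
        + Polynomial.C (u 2)*Polynomial.C (u 3)*Polynomial.C (u 4)
        + Polynomial.C (u 2)*Polynomial.C (u 3)*Polynomial.C (u 5)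
        + Polynomial.C (u 2)*Polynomial.C (u 4)*Polynomial.C (u 5)
        + Polynomial.C (u 3)*Polynomial.C (u 4)*Polynomial.C (u 5) = (0 : Polynomial ℂ) := by
      have := congrArg Polynomial.C he3
      simpa [map_add, map_mul] using this
    have hCe5 : Polynomial.C (u 1)*Polynomial.C (u 2)*Polynomial.C (u 3)*Polynomial.C (u 4)*Polynomial.C (u 5)
        + Polynomial.C (u 0)*Polynomial.C (u 2)*Polynomial.C (u 3)*Polynomial.C (u 4)*Polynomial.C (u 5)
        + Polynomial.C (u 0)*Polynomial.C (u 1)*Polynomial.C (u 3)*Polynomial.C (u 4)*Polynomial.C (u 5)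
        + Polynomial.C (u 0)*Polynomial.C (u 1)*Polynomial.C (u 2)*Polynomial.C (u 4)*Polynomial.C (u 5)
        + Polynomial.C (u 0)*Polynomial.C (u 1)*Polynomial.C (u 2)*Polynomial.C (u 3)*Polynomial.C (u 5)
        + Polynomial.C (u 0)*Polynomial.C (u 1)*Polynomial.C (u 2)*Polynomial.C (u 3)*Polynomial.C (u 4)
        = (0 : Polynomial ℂ) := by
      have := congrArg Polynomial.C he5
      simpa [map_add, map_mul] using this
    have hpoly' : (∏ i ∈ Finset.univ, (Polynomial.X - Polynomial.C (u i)))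
        = ∏ i ∈ Finset.univ, (Polynomial.X + Polynomial.C (u i)) := by
      rw [Fin.prod_univ_six, Fin.prod_univ_six]
      linear_combination (-2*(Polynomial.X : Polynomial ℂ)^5) * hC1
        + (-2*(Polynomial.X : Polynomial ℂ)^3) * hCe3
        + (-2*(Polynomial.X : Polynomial ℂ)) * hCe5
    have hwy : ∀ i j, u i = -u j → y i = y j := by
      intro i j hij
      have e : u j * v j = u j * (-(v i)) := by
        rw [hprodk j, ← hprodk i, hij]; ring
      have hvj : v j = -(v i) := mul_left_cancel₀ (hune j) e
      have d1 : u i - v i = 2 * SX y i := by rw [hu i, hv i]; ring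
      have d2 : u j - v j = 2 * SX y j := by rw [hu j, hv j]; ring
      have hSXs : SX y i + SX y j = 0 := by
        linear_combination (d1 + d2) * (-1/2) + (1/2) * hij + (-1/2) * hvj
      have hby : bev y * (y i - y j) = 0 := by
        linear_combination -(hL1 i) + hL1 j + (SX y i - SX y j) * hSXs
      have := (mul_eq_zero.mp hby).resolve_left hbe
      linear_combination this
    obtain ⟨B, hBsub, hBcard, hBsum⟩ := pairf 6 Finset.univ u y (by simp)
      (fun i _ => hune i) hpoly' hwy
    have hBcard3 : B.card = 3 := by
      have : (Finset.univ : Finset (Fin 6)).card = 6 := by simp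
      omega
    have hsum0 : (∑ k, y k) = 0 := by rw [Fin.sum_univ_six]; exact hs
    have hsd := Finset.sum_sdiff (f := y) hBsub
    have hBy : (∑ k ∈ B, y k) = 0 := by linear_combination (hBsum + hsd + hsum0)/2
    exact hnA B hBcard3 hBy

end
end SegreAux

/-- if `[y]` lies on the Castelnuovo–Richmond quartic but on none of the
10 hyperplanes dual to the nodes of the Segre cubic, then the cubic surface `Σ₃ ∩ H_y`
has exactly one singular point. -/
theorem tangent_section_one_singular_point (y : Fin 6 → ℂ) (hy : y ≠ 0)
    (hsum : (∑ k, y k) = 0)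
    (hcr : (∑ k, (y k) ^ 2) ^ 2 = 4 * (∑ k, (y k) ^ 4))
    (hnodes : ∀ A : Finset (Fin 6), A.card = 3 → (∑ k, eps A k * y k) ≠ 0) :
    {p | SingOnSection y p}.ncard = 1 := by
  have hs : y 0+y 1+y 2+y 3+y 4+y 5 = 0 := by
    rw [← Fin.sum_univ_six (f := y)]; exact hsum
  have hcx : (y 0^2+y 1^2+y 2^2+y 3^2+y 4^2+y 5^2)^2
      = 4*(y 0^4+y 1^4+y 2^4+y 3^4+y 4^4+y 5^4) := by
    have h := hcr
    rw [Fin.sum_univ_six (f := fun k => (y k)^2), Fin.sum_univ_six (f := fun k => (y k)^4)] at h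
    exact h
  have hnA : ∀ A : Finset (Fin 6), A.card = 3 → (∑ k ∈ A, y k) ≠ 0 := by
    intro A hA h0
    apply hnodes A hA
    rw [SegreAux.sum_eps_eq y A, h0, hsum]; ring
  have hXne := SegreAux.L6 y hy hs hcx hnA
  have hL1 := SegreAux.L1 y hs hcx
  have hmem : SingOnSection y (Projectivization.mk ℂ (SegreAux.SX y) hXne) := by
    refine ⟨SegreAux.SX y, hXne, rfl, SegreAux.L2 y hs, SegreAux.L4 y hs hcx,
      SegreAux.L3 y hs hcx, ?_⟩
    rw [Fintype.not_linearIndependent_iff]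
    refine ⟨![SegreAux.alv y, -1, SegreAux.bev y], ?_, 1, ?_⟩
    · rw [Fin.sum_univ_three]
      funext k
      simp only [Matrix.cons_val_zero, Matrix.cons_val_one, Matrix.head_cons,
        Matrix.cons_val_two, Matrix.tail_cons, Pi.add_apply, Pi.smul_apply,
        smul_eq_mul, Pi.one_apply, Pi.zero_apply]
      linear_combination - hL1 k
    · simp
  have huniq : ∀ p, SingOnSection y p → p = Projectivization.mk ℂ (SegreAux.SX y) hXne := by
    intro p hp
    obtain ⟨x, hx0, rfl, h1, h3, hxy, hdep⟩ := hp
    rw [Fintype.not_linearIndependent_iff] at hdep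
    obtain ⟨g, hgsum, i, hgi⟩ := hdep
    have hpt : ∀ k, g 0 + g 1 * (x k)^2 + g 2 * y k = 0 := by
      intro k
      have h := congrFun hgsum k
      rw [Fin.sum_univ_three] at h
      simpa [Matrix.cons_val_zero, Matrix.cons_val_one, Matrix.head_cons,
        Matrix.cons_val_two, Matrix.tail_cons, Pi.add_apply, Pi.smul_apply,
        smul_eq_mul, Pi.one_apply, Pi.zero_apply] using h
    by_cases hb : g 1 = 0
    · exfalso
      have hg0 : g 0 = 0 := by
        linear_combination (hpt 0 + hpt 1 + hpt 2 + hpt 3 + hpt 4 + hpt 5)/6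
          - (g 2)/6 * hs - (((x 0)^2+(x 1)^2+(x 2)^2+(x 3)^2+(x 4)^2+(x 5)^2)/6)*hb
      obtain ⟨k, hk⟩ := Function.ne_iff.mp hy
      have hyk : y k ≠ 0 := by simpa using hk
      have hg2 : g 2 = 0 := by
        have h2 : g 2 * y k = 0 := by linear_combination hpt k - (x k)^2*hb - hg0
        exact (mul_eq_zero.mp h2).resolve_right hyk
      fin_cases i
      exacts [hgi hg0, hgi hb, hgi hg2]
    · have hrel : ∀ k, (x k)^2 = (-(g 0)/g 1) + (-(g 2)/g 1) * y k := by
        intro k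
        field_simp
        linear_combination hpt k
      obtain ⟨c, hc0, hcx2⟩ := SegreAux.L8 y hy hs hcx hnA x hx0 h1 hxy _ _ hrel
      rw [Projectivization.mk_eq_mk_iff]
      exact ⟨Units.mk0 c hc0, by rw [hcx2]; rfl⟩
  have hset : {p | SingOnSection y p} = {Projectivization.mk ℂ (SegreAux.SX y) hXne} :=
    Set.eq_singleton_iff_unique_mem.mpr ⟨hmem, huniq⟩
  rw [hset]
  exact Set.ncard_singleton _
end

section
/- Let y ∈ ℂ⁶ ∖ {0} with Σ_k y_k = 0. There exist a linear form ℓ and a quadratic form q in ℂ[X₀,…,X₅] such that Σ_{t=0}^{5} X_t³ − ℓ·q lies in the ideal generated by Σ_{t=0}^{5} X_t and Σ_{t=0}^{5} y_t X_t (i.e. the cubic surface Σ₃ ∩ H_y is reducible) if and only if there is a fixed-point-free involution τ of {0,…,5} with y_{τ(k)} = y_k for all k (i.e. [y] lies on one of the 15 singular lines L_τ of the Castelnuovo–Richmond quartic). -/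
open scoped BigOperators
open MvPolynomial

/-- A fixed-point-free involution of `{0,…,5}`. -/
def FPF (τ : Equiv.Perm (Fin 6)) : Prop :=
  (∀ i, τ (τ i) = i) ∧ ∀ i, τ i ≠ i

open Module

section Aux

lemma degree_one_single {d : Fin 6 →₀ ℕ} (hd0 : (Finsupp.weight 1) d = 1) :
    ∃ t, d = Finsupp.single t 1 := by
  classical
  have hd : (Finsupp.sum d fun _ e => e) = 1 := by
    rw [Finsupp.weight_apply] at hd0
    simpa [Finsupp.sum] using hd0
  have huniv : ∑ t : Fin 6, d t = 1 := by
    rw [Finsupp.sum] at hd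
    rw [← Finset.sum_subset (Finset.subset_univ d.support)]
    · exact hd
    · intro x _ hx
      simpa using (Finsupp.notMem_support_iff.mp hx)
  obtain ⟨t, _, hne⟩ := Finset.exists_ne_zero_of_sum_ne_zero (by omega : ∑ t : Fin 6, d t ≠ 0)
  have hsplit := Finset.add_sum_erase Finset.univ d (Finset.mem_univ t)
  rw [huniv] at hsplit
  have hzero : ∑ s ∈ Finset.univ.erase t, d s = 0 := by omega
  have ht1 : d t = 1 := by omega
  refine ⟨t, Finsupp.ext fun s => ?_⟩
  rcases eq_or_ne s t with rfl | hst
  · simp [ht1]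
  · rw [Finsupp.single_apply, if_neg (by exact fun h => hst h.symm)]
    exact (Finset.sum_eq_zero_iff.mp hzero) s (Finset.mem_erase.mpr ⟨hst, Finset.mem_univ s⟩)

lemma eval_homog_one (l : MvPolynomial (Fin 6) ℂ) (hl : l.IsHomogeneous 1) (x : Fin 6 → ℂ) :
    eval x l = ∑ t, l.coeff (Finsupp.single t 1) * x t := by
  classical
  have hinj : Function.Injective (fun t : Fin 6 => (Finsupp.single t 1 : Fin 6 →₀ ℕ)) := by
    intro a b hab
    by_contra hne
    have := congrArg (fun f : Fin 6 →₀ ℕ => f a) hab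
    simp [Finsupp.single_apply, Ne.symm hne] at this
  have himage : ∀ t : Fin 6,
      eval x (monomial (Finsupp.single t 1) (l.coeff (Finsupp.single t 1))) =
      l.coeff (Finsupp.single t 1) * x t := by
    intro t; simp [eval_monomial, Finsupp.prod_single_index]
  conv_lhs => rw [l.as_sum]
  rw [map_sum]
  have hsub : l.support ⊆ (Finset.univ : Finset (Fin 6)).image
      (fun t => (Finsupp.single t 1 : Fin 6 →₀ ℕ)) := by
    intro d hd
    obtain ⟨t, rfl⟩ := degree_one_single (hl (mem_support_iff.mp hd))
    exact Finset.mem_image_of_mem _ (Finset.mem_univ t)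
  rw [Finset.sum_subset hsub]
  · rw [Finset.sum_image (fun a _ b _ h => hinj h)]
    exact Finset.sum_congr rfl fun t _ => himage t
  · intro d _ hd
    rw [notMem_support_iff.mp hd]
    simp

noncomputable def dotL (c : Fin 6 → ℂ) : (Fin 6 → ℂ) →ₗ[ℂ] ℂ where
  toFun x := ∑ t, c t * x t
  map_add' u v := by simp [mul_add, Finset.sum_add_distrib]
  map_smul' s x := by simp [Finset.mul_sum, mul_left_comm]

noncomputable def rowsL {k : ℕ} (v : Fin k → (Fin 6 → ℂ)) :
    (Fin 6 → ℂ) →ₗ[ℂ] (Fin k → ℂ) := LinearMap.pi (fun i => dotL (v i))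

noncomputable def outerL {m : ℕ} (vv : Fin 6 → (Fin m → ℂ)) :
    (Fin 6 → ℂ) →ₗ[ℂ] Matrix (Fin m) (Fin m) ℂ where
  toFun c := ∑ t, c t • Matrix.vecMulVec (vv t) (vv t)
  map_add' u v := by simp [add_smul, Finset.sum_add_distrib]
  map_smul' s x := by simp [smul_smul, Finset.smul_sum]

lemma outerL_apply {m : ℕ} (vv : Fin 6 → (Fin m → ℂ)) (c : Fin 6 → ℂ) (i j : Fin m) :
    outerL vv c i j = ∑ t, c t * (vv t i * vv t j) := by
  simp [outerL, Matrix.sum_apply, Matrix.vecMulVec_apply, mul_assoc]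

lemma outerL_single {m : ℕ} (vv : Fin 6 → (Fin m → ℂ)) (s : Fin 6) :
    outerL vv (Pi.single s 1) = Matrix.vecMulVec (vv s) (vv s) := by
  simp only [outerL, LinearMap.coe_mk, AddHom.coe_mk]
  rw [Finset.sum_eq_single s]
  · simp
  · intro t _ hts
    simp [Pi.single_apply, hts]
  · simp

lemma outer_aux {m : ℕ} (hm : 3 ≤ m) (W : Submodule ℂ (Fin 6 → ℂ))
    (h2 : ∀ u ∈ W, ∀ u' ∈ W, ∀ w ∈ W, ∑ t, u t * u' t * w t = 0)
    (u : Fin m → (Fin 6 → ℂ)) (idx : Fin m → Fin 6)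
    (hu : ∀ i, u i ∈ W)
    (hdual : ∀ i j, u i (idx j) = if i = j then 1 else 0) :
    m + m ≤ 6 ∧
      LinearMap.range (outerL (fun t i => u i t)) =
        Submodule.span ℂ (Set.range
          (fun i : Fin m => Matrix.vecMulVec (Pi.single i (1:ℂ)) (Pi.single i 1))) := by
  classical
  set vv : Fin 6 → Fin m → ℂ := fun t i => u i t with hvv
  set E : Fin m → Matrix (Fin m) (Fin m) ℂ :=
    fun i => Matrix.vecMulVec (Pi.single i (1:ℂ)) (Pi.single i 1) with hE
  have hLu : ∀ k, outerL vv (u k) = 0 := by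
    intro k
    ext i j
    rw [outerL_apply]
    simp only [Matrix.zero_apply]
    rw [← h2 (u i) (hu i) (u j) (hu j) (u k) (hu k)]
    apply Finset.sum_congr rfl
    intro t _
    ring
  have huind : LinearIndependent ℂ u := by
    rw [Fintype.linearIndependent_iff]
    intro g hg i
    have h := congrFun hg (idx i)
    simpa [Finset.sum_apply, hdual, Finset.sum_ite_eq'] using h
  have hkerge : m ≤ finrank ℂ (LinearMap.ker (outerL vv)) := by
    have hle : Submodule.span ℂ (Set.range u) ≤ LinearMap.ker (outerL vv) :=
      Submodule.span_le.mpr (Set.range_subset_iff.mpr fun i => LinearMap.mem_ker.mpr (hLu i))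
    have := Submodule.finrank_mono hle
    rwa [finrank_span_eq_card huind, Fintype.card_fin] at this
  have hvvidx : ∀ i, vv (idx i) = Pi.single i 1 := by
    intro i
    funext j
    rw [hvv]
    simp only []
    rw [hdual j i, Pi.single_apply]
  have hEmem : ∀ i, E i ∈ LinearMap.range (outerL vv) := by
    intro i
    refine ⟨Pi.single (idx i) 1, ?_⟩
    rw [outerL_single, hvvidx]
  have hspanle : Submodule.span ℂ (Set.range E) ≤ LinearMap.range (outerL vv) :=
    Submodule.span_le.mpr (Set.range_subset_iff.mpr hEmem)
  have hEind : LinearIndependent ℂ E := by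
    rw [Fintype.linearIndependent_iff]
    intro g hg i
    have h := congrFun (congrFun hg i) i
    simpa [hE, Matrix.sum_apply, Matrix.vecMulVec_apply, Pi.single_apply,
      Finset.sum_ite_eq'] using h
  have hrangege : m ≤ finrank ℂ (LinearMap.range (outerL vv)) := by
    have := Submodule.finrank_mono hspanle
    rwa [finrank_span_eq_card hEind, Fintype.card_fin] at this
  have hrn := LinearMap.finrank_range_add_finrank_ker (outerL vv)
  have h6 : finrank ℂ (Fin 6 → ℂ) = 6 := by simp
  rw [h6] at hrn
  refine ⟨by omega, ?_⟩
  symm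
  apply Submodule.eq_of_le_of_finrank_le hspanle
  rw [finrank_span_eq_card hEind, Fintype.card_fin]
  omega

lemma mem_ker_rowsL {k : ℕ} (v : Fin k → (Fin 6 → ℂ)) (x : Fin 6 → ℂ) :
    x ∈ LinearMap.ker (rowsL v) ↔ ∀ i, ∑ t, v i t * x t = 0 := by
  simp [rowsL, LinearMap.mem_ker, dotL, funext_iff, LinearMap.pi_apply]

lemma finrank_ker_rowsL {k : ℕ} (v : Fin k → (Fin 6 → ℂ)) :
    6 - k ≤ finrank ℂ (LinearMap.ker (rowsL v)) := by
  have h := LinearMap.finrank_range_add_finrank_ker (rowsL v)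
  have h2 : finrank ℂ (LinearMap.range (rowsL v)) ≤ k := by
    simpa using Submodule.finrank_le (LinearMap.range (rowsL v))
  have h3 : finrank ℂ (Fin 6 → ℂ) = 6 := by simp
  omega

lemma exists_ne_zero_ker {k : ℕ} (hk : k ≤ 5) (v : Fin k → (Fin 6 → ℂ)) :
    ∃ x ∈ LinearMap.ker (rowsL v), x ≠ 0 := by
  by_contra hc
  push_neg at hc
  have hbot : LinearMap.ker (rowsL v) = ⊥ := by
    rw [Submodule.eq_bot_iff]; exact fun x hx => hc x hx
  have := finrank_ker_rowsL v
  rw [hbot] at this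
  simp at this
  omega


lemma dot_single (a : Fin 6) (x : Fin 6 → ℂ) :
    ∑ t, (Pi.single a 1 : Fin 6 → ℂ) t * x t = x a := by
  simp [Pi.single_apply]
lemma ML (v : Fin 3 → (Fin 6 → ℂ)) (h1 : v 0 = fun _ => (1:ℂ))
    (h2 : ∀ u ∈ LinearMap.ker (rowsL v), ∀ u' ∈ LinearMap.ker (rowsL v),
       ∀ w ∈ LinearMap.ker (rowsL v), ∑ t, u t * u' t * w t = 0) :
    ∃ τ : Equiv.Perm (Fin 6), FPF τ ∧
      ∀ k, (Pi.single k 1 - Pi.single (τ k) 1 : Fin 6 → ℂ) ∈ LinearMap.ker (rowsL v) := by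
  classical
  set W := LinearMap.ker (rowsL v) with hW
  -- step 1 : p₀ with p₀ a = 1
  obtain ⟨w1, hw1W, hw1ne⟩ := exists_ne_zero_ker (by norm_num) v
  have ha : ∃ a, w1 a ≠ 0 := by
    by_contra hc; push_neg at hc; exact hw1ne (funext fun t => hc t)
  obtain ⟨a, haw⟩ := ha
  set p0 : Fin 6 → ℂ := (w1 a)⁻¹ • w1 with hp0
  have hp0W : p0 ∈ W := W.smul_mem _ hw1W
  have hp0a : p0 a = 1 := by
    simp [hp0, inv_mul_cancel₀ haw]
  -- step 2
  set v4 : Fin 4 → (Fin 6 → ℂ) := Fin.cons (Pi.single a 1) v with hv4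
  have hker4 : ∀ x, x ∈ LinearMap.ker (rowsL v4) ↔ (x ∈ W ∧ x a = 0) := by
    intro x
    rw [mem_ker_rowsL, hW, mem_ker_rowsL, Fin.forall_fin_succ]
    simp only [hv4, Fin.cons_zero, Fin.cons_succ]
    rw [dot_single]
    tauto
  obtain ⟨w2, hw2k, hw2ne⟩ := exists_ne_zero_ker (by norm_num) v4
  rw [hker4] at hw2k
  obtain ⟨hw2W, hw2a⟩ := hw2k
  have hb : ∃ b, w2 b ≠ 0 := by
    by_contra hc; push_neg at hc; exact hw2ne (funext fun t => hc t)
  obtain ⟨b, hbw⟩ := hb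
  have hba : b ≠ a := fun h => hbw (h ▸ hw2a)
  set q0 : Fin 6 → ℂ := (w2 b)⁻¹ • w2 with hq0
  have hq0W : q0 ∈ W := W.smul_mem _ hw2W
  have hq0a : q0 a = 0 := by simp [hq0, hw2a]
  have hq0b : q0 b = 1 := by simp [hq0, inv_mul_cancel₀ hbw]
  -- step 3
  set v5 : Fin 5 → (Fin 6 → ℂ) := Fin.cons (Pi.single b 1) v4 with hv5
  have hker5 : ∀ x, x ∈ LinearMap.ker (rowsL v5) ↔ (x ∈ W ∧ x a = 0 ∧ x b = 0) := by
    intro x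
    rw [mem_ker_rowsL, Fin.forall_fin_succ]
    simp only [hv5, Fin.cons_zero, Fin.cons_succ]
    rw [dot_single]
    have := (mem_ker_rowsL v4 x).symm
    rw [hker4] at this
    tauto
  obtain ⟨w3, hw3k, hw3ne⟩ := exists_ne_zero_ker (by norm_num) v5
  rw [hker5] at hw3k
  obtain ⟨hw3W, hw3a, hw3b⟩ := hw3k
  have hc : ∃ c, w3 c ≠ 0 := by
    by_contra hcc; push_neg at hcc; exact hw3ne (funext fun t => hcc t)
  obtain ⟨c, hcw⟩ := hc
  have hca : c ≠ a := fun h => hcw (h ▸ hw3a)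
  have hcb : c ≠ b := fun h => hcw (h ▸ hw3b)
  set r : Fin 6 → ℂ := (w3 c)⁻¹ • w3 with hr
  have hrW : r ∈ W := W.smul_mem _ hw3W
  have hra : r a = 0 := by simp [hr, hw3a]
  have hrb : r b = 0 := by simp [hr, hw3b]
  have hrc : r c = 1 := by simp [hr, inv_mul_cancel₀ hcw]
  -- step 4 : dual triple
  set q : Fin 6 → ℂ := q0 - q0 c • r with hq
  have hqW : q ∈ W := W.sub_mem hq0W (W.smul_mem _ hrW)
  have hqa : q a = 0 := by simp [hq, hq0a, hra]
  have hqb : q b = 1 := by simp [hq, hq0b, hrb]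
  have hqc : q c = 0 := by simp [hq, hrc]
  set p : Fin 6 → ℂ := p0 - p0 b • q - p0 c • r with hp
  have hpW : p ∈ W := W.sub_mem (W.sub_mem hp0W (W.smul_mem _ hqW)) (W.smul_mem _ hrW)
  have hpa : p a = 1 := by simp [hp, hp0a, hqa, hra]
  have hpb : p b = 0 := by simp [hp, hqb, hrb]
  have hpc : p c = 0 := by simp [hp, hqc, hrc]

  -- case split on existence of a fourth independent direction
  by_cases hK : ∃ w ∈ W, w a = 0 ∧ w b = 0 ∧ w c = 0 ∧ w ≠ 0
  · exfalso
    obtain ⟨w', hw'W, hw'a, hw'b, hw'c, hw'ne⟩ := hK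
    have hdex : ∃ d, w' d ≠ 0 := by
      by_contra hcc; push_neg at hcc; exact hw'ne (funext fun t => hcc t)
    obtain ⟨d, hdw⟩ := hdex
    set s : Fin 6 → ℂ := (w' d)⁻¹ • w' with hs
    have hsW : s ∈ W := W.smul_mem _ hw'W
    have hsa : s a = 0 := by simp [hs, hw'a]
    have hsb : s b = 0 := by simp [hs, hw'b]
    have hsc : s c = 0 := by simp [hs, hw'c]
    have hsd : s d = 1 := by simp [hs, inv_mul_cancel₀ hdw]
    set p' : Fin 6 → ℂ := p - p d • s with hp'
    set q' : Fin 6 → ℂ := q - q d • s with hq'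
    set r' : Fin 6 → ℂ := r - r d • s with hr'
    have hp'W : p' ∈ W := W.sub_mem hpW (W.smul_mem _ hsW)
    have hq'W : q' ∈ W := W.sub_mem hqW (W.smul_mem _ hsW)
    have hr'W : r' ∈ W := W.sub_mem hrW (W.smul_mem _ hsW)
    have c1 : p' a = 1 := by simp [hp', hpa, hsa]
    have c2 : p' b = 0 := by simp [hp', hpb, hsb]
    have c3 : p' c = 0 := by simp [hp', hpc, hsc]
    have c4 : p' d = 0 := by simp [hp', hsd]
    have c5 : q' a = 0 := by simp [hq', hqa, hsa]
    have c6 : q' b = 1 := by simp [hq', hqb, hsb]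
    have c7 : q' c = 0 := by simp [hq', hqc, hsc]
    have c8 : q' d = 0 := by simp [hq', hsd]
    have c9 : r' a = 0 := by simp [hr', hra, hsa]
    have c10 : r' b = 0 := by simp [hr', hrb, hsb]
    have c11 : r' c = 1 := by simp [hr', hrc, hsc]
    have c12 : r' d = 0 := by simp [hr', hsd]
    have haux := outer_aux (m := 4) (by norm_num) W h2 ![p', q', r', s] ![a, b, c, d]
      (by intro i; fin_cases i; exacts [hp'W, hq'W, hr'W, hsW])
      (by intro i j; fin_cases i <;> fin_cases j <;>
        simp [c1, c2, c3, c4, c5, c6, c7, c8, c9, c10, c11, c12, hsa, hsb, hsc, hsd,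
          Matrix.vecHead, Matrix.vecTail])
    omega
  · push_neg at hK
    have hspan : ∀ w ∈ W, w = w a • p + w b • q + w c • r := by
      intro w hw
      have hmem : w - w a • p - w b • q - w c • r ∈ W :=
        W.sub_mem (W.sub_mem (W.sub_mem hw (W.smul_mem _ hpW)) (W.smul_mem _ hqW))
          (W.smul_mem _ hrW)
      have h0 := hK _ hmem (by simp [hpa, hqa, hra]) (by simp [hpb, hqb, hrb])
        (by simp [hpc, hqc, hrc])
      have h0' : w - (w a • p + w b • q + w c • r) = 0 := by
        rw [show w - (w a • p + w b • q + w c • r)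
            = w - w a • p - w b • q - w c • r from by abel]
        exact h0
      exact (sub_eq_zero.mp h0')
    obtain ⟨-, hrangeEq⟩ := outer_aux (m := 3) (le_refl 3) W h2 ![p, q, r] ![a, b, c]
      (by intro i; fin_cases i; exacts [hpW, hqW, hrW])
      (by intro i j; fin_cases i <;> fin_cases j <;>
        simp [hpa, hpb, hpc, hqa, hqb, hqc, hra, hrb, hrc, Matrix.vecHead, Matrix.vecTail])
    have hprod : ∀ t, (p t = 0 ∨ q t = 0) ∧ (p t = 0 ∨ r t = 0) ∧ (q t = 0 ∨ r t = 0) := by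
      intro t
      have hmem : outerL (fun t i => ![p, q, r] i t) (Pi.single t 1) ∈
          LinearMap.range (outerL (fun t i => ![p, q, r] i t)) := ⟨_, rfl⟩
      rw [hrangeEq, Submodule.mem_span_range_iff_exists_fun] at hmem
      obtain ⟨g, hg⟩ := hmem
      rw [outerL_single] at hg
      have e01 := congrFun (congrFun hg 0) 1
      have e02 := congrFun (congrFun hg 0) 2
      have e12 := congrFun (congrFun hg 1) 2
      simp [Matrix.sum_apply, Matrix.vecMulVec_apply, Pi.single_apply] at e01 e02 e12
      refine ⟨by tauto, by tauto, by tauto⟩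
    have hrow0 : ∀ w ∈ W, ∑ t, w t = 0 := by
      intro w hw
      have := (mem_ker_rowsL v w).mp hw 0
      rw [h1] at this
      simpa using this
    have hcab : c ∉ ({a, b} : Finset (Fin 6)) := by simp [hca, hcb]
    have hbsing : b ∉ ({a} : Finset (Fin 6)) := by simp [hba]
    have habc_sub : ({c, b, a} : Finset (Fin 6)) ⊆ Finset.univ := Finset.subset_univ _
    set S : Finset (Fin 6) := Finset.univ \ {c, b, a} with hS
    have hsum_S : ∀ w ∈ W, ∑ t ∈ S, w t = - (w c + w b + w a) := by
      intro w hw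
      have hsd := Finset.sum_sdiff_eq_sub (f := w) habc_sub
      rw [hrow0 w hw, Finset.sum_insert (by simp [hcb, hca]),
        Finset.sum_insert (by simp [hba]), Finset.sum_singleton] at hsd
      rw [hS, hsd]
      ring
    have hsum_p : ∑ t ∈ S, p t = -1 := by
      rw [hsum_S p hpW, hpa, hpb, hpc]; ring
    have hsum_q : ∑ t ∈ S, q t = -1 := by
      rw [hsum_S q hqW, hqa, hqb, hqc]; ring
    have hsum_r : ∑ t ∈ S, r t = -1 := by
      rw [hsum_S r hrW, hra, hrb, hrc]; ring
    have hex : ∀ w : Fin 6 → ℂ, (∑ t ∈ S, w t = -1) → ∃ x ∈ S, w x ≠ 0 := by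
      intro w hwsum
      by_contra hcc
      push_neg at hcc
      rw [Finset.sum_eq_zero hcc] at hwsum
      exact absurd hwsum (by norm_num)
    obtain ⟨d, hdS, hpd⟩ := hex p hsum_p
    obtain ⟨e, heS, hqe⟩ := hex q hsum_q
    obtain ⟨f, hfS, hrf⟩ := hex r hsum_r
    have hqd : q d = 0 := (hprod d).1.resolve_left hpd
    have hrd : r d = 0 := (hprod d).2.1.resolve_left hpd
    have hpe : p e = 0 := (hprod e).1.resolve_right hqe
    have hre : r e = 0 := (hprod e).2.2.resolve_left hqe
    have hpf : p f = 0 := (hprod f).2.1.resolve_right hrf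
    have hqf : q f = 0 := (hprod f).2.2.resolve_right hrf
    have hde : d ≠ e := fun h => hqe (h ▸ hqd)
    have hdf : d ≠ f := fun h => hrf (h ▸ hrd)
    have hef : e ≠ f := fun h => hrf (h ▸ hre)
    simp only [hS, Finset.mem_sdiff, Finset.mem_univ, true_and, Finset.mem_insert,
      Finset.mem_singleton, not_or] at hdS heS hfS
    obtain ⟨hdc, hdb, hda⟩ := hdS
    obtain ⟨hec, heb, hea⟩ := heS
    obtain ⟨hfc, hfb, hfa⟩ := hfS
    have hSeq : ({d, e, f} : Finset (Fin 6)) = S := by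
      apply Finset.eq_of_subset_of_card_le
      · intro x hx
        simp only [Finset.mem_insert, Finset.mem_singleton] at hx
        rw [hS, Finset.mem_sdiff]
        rcases hx with rfl | rfl | rfl
        · exact ⟨Finset.mem_univ _, by simp [hdc, hdb, hda]⟩
        · exact ⟨Finset.mem_univ _, by simp [hec, heb, hea]⟩
        · exact ⟨Finset.mem_univ _, by simp [hfc, hfb, hfa]⟩
      · have hc3 : ({d, e, f} : Finset (Fin 6)).card = 3 := by
          rw [Finset.card_insert_of_notMem (by simp [hde, hdf]),
            Finset.card_insert_of_notMem (by simp [hef]), Finset.card_singleton]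
        have hSc : S.card = 3 := by
          rw [hS, Finset.card_sdiff_of_subset habc_sub,
            Finset.card_insert_of_notMem (by simp [hcb, hca]),
            Finset.card_insert_of_notMem (by simp [hba]), Finset.card_singleton]
          simp
        omega
    have hsum_def : ∀ w : Fin 6 → ℂ, ∑ t ∈ S, w t = w d + w e + w f := by
      intro w
      rw [← hSeq, Finset.sum_insert (by simp [hde, hdf]),
        Finset.sum_insert (by simp [hef]), Finset.sum_singleton]
      ring
    have hpd1 : p d = -1 := by
      have h := hsum_p
      rw [hsum_def, hpe, hpf] at h
      linear_combination h
    have hqe1 : q e = -1 := by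
      have h := hsum_q
      rw [hsum_def, hqd, hqf] at h
      linear_combination h
    have hrf1 : r f = -1 := by
      have h := hsum_r
      rw [hsum_def, hrd, hre] at h
      linear_combination h
    have htall : ∀ t : Fin 6, t = a ∨ t = b ∨ t = c ∨ t = d ∨ t = e ∨ t = f := by
      intro t
      by_cases g1 : t = a
      · exact Or.inl g1
      by_cases g2 : t = b
      · exact Or.inr (Or.inl g2)
      by_cases g3 : t = c
      · exact Or.inr (Or.inr (Or.inl g3))
      have htS : t ∈ S := by
        rw [hS, Finset.mem_sdiff]
        simp [g1, g2, g3]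
      rw [← hSeq] at htS
      simp only [Finset.mem_insert, Finset.mem_singleton] at htS
      rcases htS with h | h | h
      · exact Or.inr (Or.inr (Or.inr (Or.inl h)))
      · exact Or.inr (Or.inr (Or.inr (Or.inr (Or.inl h))))
      · exact Or.inr (Or.inr (Or.inr (Or.inr (Or.inr h))))
    have hab : a ≠ b := Ne.symm hba
    have hac : a ≠ c := Ne.symm hca
    have hbc : b ≠ c := Ne.symm hcb
    have had : a ≠ d := Ne.symm hda
    have hbd : b ≠ d := Ne.symm hdb
    have hcd : c ≠ d := Ne.symm hdc
    have hae : a ≠ e := Ne.symm hea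
    have hbe : b ≠ e := Ne.symm heb
    have hce : c ≠ e := Ne.symm hec
    have haf : a ≠ f := Ne.symm hfa
    have hbf : b ≠ f := Ne.symm hfb
    have hcf : c ≠ f := Ne.symm hfc
    have hed : e ≠ d := Ne.symm hde
    have hfd : f ≠ d := Ne.symm hdf
    have hfe : f ≠ e := Ne.symm hef
    have hp_eq : p = Pi.single a 1 - Pi.single d 1 := by
      funext t
      rcases htall t with rfl | rfl | rfl | rfl | rfl | rfl <;>
        simp [Pi.single_apply, hpa, hpb, hpc, hpd1, hpe, hpf,
          hab, hac, hbc, had, hbd, hcd, hae, hbe, hce, haf, hbf, hcf, hde, hdf, hef,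
          hba, hca, hcb, hda, hdb, hdc, hea, heb, hec, hfa, hfb, hfc, hed, hfd, hfe]
    have hq_eq : q = Pi.single b 1 - Pi.single e 1 := by
      funext t
      rcases htall t with rfl | rfl | rfl | rfl | rfl | rfl <;>
        simp [Pi.single_apply, hqa, hqb, hqc, hqd, hqe1, hqf,
          hab, hac, hbc, had, hbd, hcd, hae, hbe, hce, haf, hbf, hcf, hde, hdf, hef,
          hba, hca, hcb, hda, hdb, hdc, hea, heb, hec, hfa, hfb, hfc, hed, hfd, hfe]
    have hr_eq : r = Pi.single c 1 - Pi.single f 1 := by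
      funext t
      rcases htall t with rfl | rfl | rfl | rfl | rfl | rfl <;>
        simp [Pi.single_apply, hra, hrb, hrc, hrd, hre, hrf1,
          hab, hac, hbc, had, hbd, hcd, hae, hbe, hce, haf, hbf, hcf, hde, hdf, hef,
          hba, hca, hcb, hda, hdb, hdc, hea, heb, hec, hfa, hfb, hfc, hed, hfd, hfe]
    set τ : Equiv.Perm (Fin 6) := Equiv.swap a d * (Equiv.swap b e * Equiv.swap c f)
      with hτdef
    have happ : ∀ x, τ x = Equiv.swap a d (Equiv.swap b e (Equiv.swap c f x)) :=
      fun x => rfl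
    have hτa : τ a = d := by
      rw [happ, Equiv.swap_apply_of_ne_of_ne hac haf,
        Equiv.swap_apply_of_ne_of_ne hab hae, Equiv.swap_apply_left]
    have hτb : τ b = e := by
      rw [happ, Equiv.swap_apply_of_ne_of_ne hbc hbf, Equiv.swap_apply_left,
        Equiv.swap_apply_of_ne_of_ne hea hed]
    have hτc : τ c = f := by
      rw [happ, Equiv.swap_apply_left, Equiv.swap_apply_of_ne_of_ne hfb hfe,
        Equiv.swap_apply_of_ne_of_ne hfa hfd]
    have hτd : τ d = a := by
      rw [happ, Equiv.swap_apply_of_ne_of_ne hdc hdf,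
        Equiv.swap_apply_of_ne_of_ne hdb (Ne.symm hed), Equiv.swap_apply_right]
    have hτe : τ e = b := by
      rw [happ, Equiv.swap_apply_of_ne_of_ne hec (Ne.symm hfe), Equiv.swap_apply_right,
        Equiv.swap_apply_of_ne_of_ne hba hbd]
    have hτf : τ f = c := by
      rw [happ, Equiv.swap_apply_right, Equiv.swap_apply_of_ne_of_ne hcb hce,
        Equiv.swap_apply_of_ne_of_ne hca hcd]
    refine ⟨τ, ⟨?_, ?_⟩, ?_⟩
    · intro i
      rcases htall i with rfl | rfl | rfl | rfl | rfl | rfl <;>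
        simp only [hτa, hτb, hτc, hτd, hτe, hτf]
    · intro i
      rcases htall i with rfl | rfl | rfl | rfl | rfl | rfl <;>
        simp only [hτa, hτb, hτc, hτd, hτe, hτf] <;>
        first
        | exact hda | exact heb | exact hfc
        | exact Ne.symm hda | exact Ne.symm heb | exact Ne.symm hfc
        | exact had | exact hbe | exact hcf
    · have hmem1 : (Pi.single a 1 - Pi.single (τ a) 1 : Fin 6 → ℂ) ∈ W := by
        rw [hτa, ← hp_eq]; exact hpW
      have hmem2 : (Pi.single b 1 - Pi.single (τ b) 1 : Fin 6 → ℂ) ∈ W := by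
        rw [hτb, ← hq_eq]; exact hqW
      have hmem3 : (Pi.single c 1 - Pi.single (τ c) 1 : Fin 6 → ℂ) ∈ W := by
        rw [hτc, ← hr_eq]; exact hrW
      have hmem4 : (Pi.single d 1 - Pi.single (τ d) 1 : Fin 6 → ℂ) ∈ W := by
        rw [hτd, show (Pi.single d 1 - Pi.single a 1 : Fin 6 → ℂ) = -p from by
          rw [hp_eq]; abel]
        exact W.neg_mem hpW
      have hmem5 : (Pi.single e 1 - Pi.single (τ e) 1 : Fin 6 → ℂ) ∈ W := by
        rw [hτe, show (Pi.single e 1 - Pi.single b 1 : Fin 6 → ℂ) = -q from by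
          rw [hq_eq]; abel]
        exact W.neg_mem hqW
      have hmem6 : (Pi.single f 1 - Pi.single (τ f) 1 : Fin 6 → ℂ) ∈ W := by
        rw [hτf, show (Pi.single f 1 - Pi.single c 1 : Fin 6 → ℂ) = -r from by
          rw [hr_eq]; abel]
        exact W.neg_mem hrW
      intro k
      rcases htall k with rfl | rfl | rfl | rfl | rfl | rfl
      exacts [hmem1, hmem2, hmem3, hmem4, hmem5, hmem6]

lemma polarize (W : Submodule ℂ (Fin 6 → ℂ))
    (hF : ∀ x ∈ W, ∑ t, (x t)^3 = 0) :
    ∀ u ∈ W, ∀ u' ∈ W, ∀ w ∈ W, ∑ t, u t * u' t * w t = 0 := by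
  have B1 : ∀ u ∈ W, ∀ w ∈ W, ∑ t, (u t)^2 * w t = 0 := by
    intro u hu w hw
    have e1 := hF (u + w) (W.add_mem hu hw)
    have e2 := hF (u - w) (W.sub_mem hu hw)
    have e3 := hF w hw
    simp only [Pi.add_apply, Pi.sub_apply] at e1 e2
    have key : (6:ℂ) * ∑ t, (u t)^2 * w t
        = (∑ t, (u t + w t)^3) - (∑ t, (u t - w t)^3) - 2 * ∑ t, (w t)^3 := by
      rw [Finset.mul_sum, Finset.mul_sum, ← Finset.sum_sub_distrib, ← Finset.sum_sub_distrib]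
      exact Finset.sum_congr rfl fun t _ => by ring
    rw [e1, e2, e3] at key
    have h0 : (6:ℂ) * ∑ t, (u t)^2 * w t = 0 := by rw [key]; ring
    exact (mul_eq_zero.mp h0).resolve_left (by norm_num)
  intro u hu u' hu' w hw
  have f1 := B1 (u + u') (W.add_mem hu hu') w hw
  have f2 := B1 u hu w hw
  have f3 := B1 u' hu' w hw
  simp only [Pi.add_apply] at f1
  have key : (2:ℂ) * ∑ t, u t * u' t * w t
      = (∑ t, (u t + u' t)^2 * w t) - (∑ t, (u t)^2 * w t) - (∑ t, (u' t)^2 * w t) := by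
    rw [Finset.mul_sum, ← Finset.sum_sub_distrib, ← Finset.sum_sub_distrib]
    exact Finset.sum_congr rfl fun t _ => by ring
  rw [f1, f2, f3] at key
  have h0 : (2:ℂ) * ∑ t, u t * u' t * w t = 0 := by rw [key]; ring
  exact (mul_eq_zero.mp h0).resolve_left (by norm_num)
lemma sum_six {M : Type*} [AddCommMonoid M] (g : Fin 6 → M)
    (a a' b b' c c' : Fin 6)
    (hab : a ≠ a') (hac : a ≠ b) (had : a ≠ b') (hae : a ≠ c) (haf : a ≠ c')
    (hbc : a' ≠ b) (hbd : a' ≠ b') (hbe : a' ≠ c) (hbf : a' ≠ c')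
    (hcd : b ≠ b') (hce : b ≠ c) (hcf : b ≠ c')
    (hde : b' ≠ c) (hdf : b' ≠ c') (hef : c ≠ c') :
    ∑ t, g t = g a + g a' + g b + g b' + g c + g c' := by
  have huniv : (Finset.univ : Finset (Fin 6)) = {a, a', b, b', c, c'} := by
    symm
    apply Finset.eq_of_subset_of_card_le (Finset.subset_univ _)
    rw [Finset.card_insert_of_notMem (by simp [hab, hac, had, hae, haf]),
      Finset.card_insert_of_notMem (by simp [hbc, hbd, hbe, hbf]),
      Finset.card_insert_of_notMem (by simp [hcd, hce, hcf]),
      Finset.card_insert_of_notMem (by simp [hde, hdf]),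
      Finset.card_insert_of_notMem (by simp [hef]),
      Finset.card_singleton]
    simp
  rw [huniv, Finset.sum_insert (by simp [hab, hac, had, hae, haf]),
    Finset.sum_insert (by simp [hbc, hbd, hbe, hbf]),
    Finset.sum_insert (by simp [hcd, hce, hcf]),
    Finset.sum_insert (by simp [hde, hdf]),
    Finset.sum_insert (by simp [hef]), Finset.sum_singleton]
  abel

lemma backward (y : Fin 6 → ℂ) (hy : y ≠ 0) (hsum : (∑ k, y k) = 0)
    (τ : Equiv.Perm (Fin 6)) (hinv : ∀ i, τ (τ i) = i) (hfpf : ∀ i, τ i ≠ i)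
    (hyt : ∀ k, y (τ k) = y k) :
    ∃ l q : MvPolynomial (Fin 6) ℂ, l.IsHomogeneous 1 ∧ q.IsHomogeneous 2 ∧
        (∑ t, (X t : MvPolynomial (Fin 6) ℂ) ^ 3) - l * q ∈
          Ideal.span {(∑ t, X t : MvPolynomial (Fin 6) ℂ), ∑ t, C (y t) * X t} := by
  classical
  -- two indices with distinct y-values
  have hij : ∃ i j, y i ≠ y j := by
    by_contra h
    push_neg at h
    apply hy
    funext t
    have h1 : (∑ k, y k) = ∑ _k : Fin 6, y t := Finset.sum_congr rfl fun k _ => h k t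
    rw [hsum] at h1
    simp at h1
    simpa using h1
  obtain ⟨a, b, hAB⟩ := hij
  have hab' : a ≠ b := fun h => hAB (by rw [h])
  have hba' : b ≠ τ a := fun h => hAB (by rw [h, hyt])
  -- pick c outside {a, τ a, b, τ b}
  have hc : ∃ c, c ∉ ({a, τ a, b, τ b} : Finset (Fin 6)) := by
    by_contra h
    push_neg at h
    have hsub : (Finset.univ : Finset (Fin 6)) ⊆ {a, τ a, b, τ b} :=
      fun x _ => h x
    have hcc := Finset.card_le_card hsub
    simp only [Finset.card_univ, Fintype.card_fin] at hcc
    have h4 := Finset.card_insert_le a ({τ a, b, τ b} : Finset (Fin 6))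
    have h5 := Finset.card_insert_le (τ a) ({b, τ b} : Finset (Fin 6))
    have h6 := Finset.card_insert_le b ({τ b} : Finset (Fin 6))
    have h7 := Finset.card_singleton (τ b)
    omega
  obtain ⟨c, hcmem⟩ := hc
  simp only [Finset.mem_insert, Finset.mem_singleton, not_or] at hcmem
  obtain ⟨hca, hcta, hcb, hctb⟩ := hcmem
  -- distinctness of the six indices a, τ a, b, τ b, c, τ c
  have inj : ∀ i j : Fin 6, τ i = τ j → i = j := by
    intro i j h
    have := congrArg τ h
    rwa [hinv, hinv] at this
  have d1 : a ≠ τ a := fun h => hfpf a h.symm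
  have d2 : a ≠ b := hab'
  have d3 : a ≠ τ b := fun h => hba' (by rw [← hinv b, ← h])
  have d4 : a ≠ c := fun h => hca h.symm
  have d5 : a ≠ τ c := fun h => hcta (by rw [← hinv c, ← h])
  have d6 : τ a ≠ b := fun h => hba' h.symm
  have d7 : τ a ≠ τ b := fun h => d2 (inj _ _ h)
  have d8 : τ a ≠ c := fun h => hcta h.symm
  have d9 : τ a ≠ τ c := fun h => d4 (inj _ _ h)
  have d10 : b ≠ τ b := fun h => hfpf b h.symm
  have d11 : b ≠ c := fun h => hcb h.symm
  have d12 : b ≠ τ c := fun h => hctb (by rw [← hinv c, ← h])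
  have d13 : τ b ≠ c := fun h => hctb h.symm
  have d14 : τ b ≠ τ c := fun h => d11 (inj _ _ h)
  have d15 : c ≠ τ c := fun h => hfpf c h.symm
  set a' := τ a with ha'
  set b' := τ b with hb'
  set c' := τ c with hc'
  -- values
  set A := y a with hA
  set B := y b with hB
  set Cc := y c with hCc
  have hya' : y a' = A := hyt a
  have hyb' : y b' = B := hyt b
  have hyc' : y c' = Cc := hyt c
  have hsum6 : A + A + B + B + Cc + Cc = 0 := by
    have h0 := sum_six y a a' b b' c c' d1 d2 d3 d4 d5 d6 d7 d8 d9 d10 d11 d12 d13 d14 d15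
    rw [hsum, hya', hyb', hyc'] at h0
    rw [← hA, ← hB, ← hCc] at h0
    linear_combination -h0
  have hD : A - B ≠ 0 := sub_ne_zero.mpr hAB
  set α := (B - Cc) / (A - B) with hα
  set β := (Cc - A) / (A - B) with hβ
  set l1 := -B / (A - B) with hl1
  set m1 := 1 / (A - B) with hm1
  set l2 := A / (A - B) with hl2
  set m2 := -1 / (A - B) with hm2
  have s1 : l1 + m1 * A = 1 := by rw [hl1, hm1]; field_simp; ring
  have s2 : l1 + m1 * B = 0 := by rw [hl1, hm1]; field_simp; ring
  have s3 : l1 + m1 * Cc = -α := by rw [hl1, hm1, hα]; field_simp; ring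
  have s4 : l2 + m2 * A = 0 := by rw [hl2, hm2]; field_simp; ring
  have s5 : l2 + m2 * B = 1 := by rw [hl2, hm2]; field_simp; ring
  have s6 : l2 + m2 * Cc = -β := by rw [hl2, hm2, hβ]; field_simp; ring
  have s7 : (4 : ℂ)⁻¹ * 4 = 1 := by norm_num
  -- polynomial versions
  have PC : ∀ x y : ℂ, (C (x + y) : MvPolynomial (Fin 6) ℂ) = C x + C y := fun x y => map_add C x y
  have S1 : (C l1 + C m1 * C A : MvPolynomial (Fin 6) ℂ) = 1 := by
    rw [← C_mul, ← C_add, s1, C_1]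
  have S2 : (C l1 + C m1 * C B : MvPolynomial (Fin 6) ℂ) = 0 := by
    rw [← C_mul, ← C_add, s2, C_0]
  have S3 : (C l1 + C m1 * C Cc : MvPolynomial (Fin 6) ℂ) = -C α := by
    rw [← C_mul, ← C_add, s3, map_neg]
  have S4 : (C l2 + C m2 * C A : MvPolynomial (Fin 6) ℂ) = 0 := by
    rw [← C_mul, ← C_add, s4, C_0]
  have S5 : (C l2 + C m2 * C B : MvPolynomial (Fin 6) ℂ) = 1 := by
    rw [← C_mul, ← C_add, s5, C_1]
  have S6 : (C l2 + C m2 * C Cc : MvPolynomial (Fin 6) ℂ) = -C β := by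
    rw [← C_mul, ← C_add, s6, map_neg]
  have S7 : (C ((4:ℂ)⁻¹) * 4 : MvPolynomial (Fin 6) ℂ) = 1 := by
    rw [(map_ofNat C 4).symm, ← C_mul, s7, C_1]
  refine ⟨C ((4:ℂ)⁻¹) * (X c + X c'),
    ((C α)^3 + (C β)^3 + 1) * (X c + X c')^2
      + 3 * (C α * (X a - X a')^2 + C β * (X b - X b')^2 + (X c - X c')^2), ?_, ?_, ?_⟩
  · have h1 : ((C ((4:ℂ)⁻¹) : MvPolynomial (Fin 6) ℂ) * (X c + X c')).IsHomogeneous (0 + 1) :=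
      (isHomogeneous_C _ _).mul ((isHomogeneous_X _ _).add (isHomogeneous_X _ _))
    exact h1
  · have hone : ∀ i j : Fin 6, ((X i - X j : MvPolynomial (Fin 6) ℂ)).IsHomogeneous 1 :=
      fun i j => (isHomogeneous_X _ _).sub (isHomogeneous_X _ _)
    have hXsq : ∀ i j : Fin 6, (((X i - X j : MvPolynomial (Fin 6) ℂ))^2).IsHomogeneous 2 := by
      intro i j
      simpa using (hone i j).pow 2
    have haddsq : (((X c + X c' : MvPolynomial (Fin 6) ℂ))^2).IsHomogeneous 2 := by
      simpa using (((isHomogeneous_X ℂ c).add (isHomogeneous_X ℂ c')).pow 2)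
    have hc0 : ∀ z : ℂ, ((C z : MvPolynomial (Fin 6) ℂ)).IsHomogeneous 0 := fun z => isHomogeneous_C _ _
    have hcoef : (((C α)^3 + (C β)^3 + 1 : MvPolynomial (Fin 6) ℂ)).IsHomogeneous 0 := by
      have := (((hc0 α).pow 3).add ((hc0 β).pow 3)).add (isHomogeneous_one (Fin 6) ℂ)
      exact this
    have h3 : ((3 : MvPolynomial (Fin 6) ℂ)).IsHomogeneous 0 := by
      rw [(map_ofNat C 3).symm]
      exact hc0 3
    have part1 := hcoef.mul haddsq
    have part2 := h3.mul ((((hc0 α).mul (hXsq a a')).add ((hc0 β).mul (hXsq b b'))).add (hXsq c c'))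
    simpa using part1.add (by simpa using part2)
  · rw [Ideal.mem_span_pair]
    refine ⟨C l1 * (C ((4:ℂ)⁻¹) * ((X a + X a')^2 + C α * (X a + X a') * (X c + X c')
        + (C α)^2 * (X c + X c')^2 + 3 * (X a - X a')^2))
      + C l2 * (C ((4:ℂ)⁻¹) * ((X b + X b')^2 + C β * (X b + X b') * (X c + X c')
        + (C β)^2 * (X c + X c')^2 + 3 * (X b - X b')^2)),
      C m1 * (C ((4:ℂ)⁻¹) * ((X a + X a')^2 + C α * (X a + X a') * (X c + X c')
        + (C α)^2 * (X c + X c')^2 + 3 * (X a - X a')^2))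
      + C m2 * (C ((4:ℂ)⁻¹) * ((X b + X b')^2 + C β * (X b + X b') * (X c + X c')
        + (C β)^2 * (X c + X c')^2 + 3 * (X b - X b')^2)), ?_⟩
    rw [sum_six (fun t => (X t : MvPolynomial (Fin 6) ℂ)) a a' b b' c c'
        d1 d2 d3 d4 d5 d6 d7 d8 d9 d10 d11 d12 d13 d14 d15,
      sum_six (fun t => (C (y t) * X t : MvPolynomial (Fin 6) ℂ)) a a' b b' c c'
        d1 d2 d3 d4 d5 d6 d7 d8 d9 d10 d11 d12 d13 d14 d15,
      sum_six (fun t => (X t : MvPolynomial (Fin 6) ℂ)^3) a a' b b' c c'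
        d1 d2 d3 d4 d5 d6 d7 d8 d9 d10 d11 d12 d13 d14 d15]
    simp only [hya', hyb', hyc', ← hA, ← hB, ← hCc]
    linear_combination (norm := ring_nf)
      (C ((4:ℂ)⁻¹) * ((X a + X a')^2 + C α * (X a + X a') * (X c + X c')
        + (C α)^2 * (X c + X c')^2 + 3 * (X a - X a')^2)) *
        ((X a + X a' : MvPolynomial (Fin 6) ℂ) * S1 + (X b + X b') * S2 + (X c + X c') * S3)
      + (C ((4:ℂ)⁻¹) * ((X b + X b')^2 + C β * (X b + X b') * (X c + X c')
        + (C β)^2 * (X c + X c')^2 + 3 * (X b - X b')^2)) *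
        ((X a + X a' : MvPolynomial (Fin 6) ℂ) * S4 + (X b + X b') * S5 + (X c + X c') * S6)
      + ((X a:MvPolynomial (Fin 6) ℂ)^3 + X a'^3 + X b^3 + X b'^3 + X c^3 + X c'^3) * S7

lemma forward (y : Fin 6 → ℂ) (hsum : (∑ k, y k) = 0)
    (l qq : MvPolynomial (Fin 6) ℂ) (hl : l.IsHomogeneous 1)
    (hmem : (∑ t, (X t : MvPolynomial (Fin 6) ℂ) ^ 3) - l * qq ∈
      Ideal.span {(∑ t, X t : MvPolynomial (Fin 6) ℂ), ∑ t, C (y t) * X t}) :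
    ∃ τ : Equiv.Perm (Fin 6), FPF τ ∧ ∀ k, y (τ k) = y k := by
  classical
  set v : Fin 3 → (Fin 6 → ℂ) :=
    ![fun _ => (1:ℂ), y, fun t => l.coeff (Finsupp.single t 1)] with hv
  have hv0 : v 0 = fun _ => (1:ℂ) := rfl
  have hv1 : v 1 = y := rfl
  have hv2 : v 2 = fun t => l.coeff (Finsupp.single t 1) := rfl
  obtain ⟨c1p, c2p, hcomb⟩ := Ideal.mem_span_pair.mp hmem
  have hcube : ∀ x ∈ LinearMap.ker (rowsL v), ∑ t, (x t)^3 = 0 := by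
    intro x hx
    have hx0 := (mem_ker_rowsL v x).mp hx 0
    have hx1 := (mem_ker_rowsL v x).mp hx 1
    have hx2 := (mem_ker_rowsL v x).mp hx 2
    rw [hv0] at hx0
    rw [hv1] at hx1
    rw [hv2] at hx2
    have hg1 : eval x (∑ t, (X t : MvPolynomial (Fin 6) ℂ)) = 0 := by
      rw [map_sum]
      simpa using hx0
    have hg2 : eval x (∑ t, C (y t) * (X t : MvPolynomial (Fin 6) ℂ)) = 0 := by
      rw [map_sum]
      simpa using hx1
    have hl0 : eval x l = 0 := by
      rw [eval_homog_one l hl x]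
      simpa using hx2
    have h := congrArg (eval x) hcomb
    rw [map_add, map_mul, map_mul, hg1, hg2, map_sub, map_mul, hl0] at h
    rw [map_sum] at h
    simpa using h.symm
  have hker := polarize (LinearMap.ker (rowsL v)) hcube
  obtain ⟨τ, hfpf, hmem'⟩ := ML v rfl hker
  refine ⟨τ, hfpf, ?_⟩
  intro k
  have h := (mem_ker_rowsL v _).mp (hmem' k) 1
  rw [hv1] at h
  simp only [Pi.sub_apply, Pi.single_apply, mul_sub, Finset.sum_sub_distrib,
    mul_ite, mul_one, mul_zero, Finset.sum_ite_eq', Finset.mem_univ, if_true] at h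
  exact (sub_eq_zero.mp h).symm

end Aux

/-- the cubic surface `Σ₃ ∩ H_y` is reducible (the cubic `∑ X_t³` is
congruent to a product of a linear form and a quadratic form modulo the ideal of the
plane `{∑ X_t = 0, ∑ y_t X_t = 0}`) if and only if `y` is invariant under some
fixed-point-free involution of `{0,…,5}`, i.e. `[y]` lies on one of the 15 singular
lines of the Castelnuovo–Richmond quartic. -/
theorem reducible_hyperplane_sections (y : Fin 6 → ℂ) (hy : y ≠ 0)
    (hsum : (∑ k, y k) = 0) :
    (∃ l q : MvPolynomial (Fin 6) ℂ, l.IsHomogeneous 1 ∧ q.IsHomogeneous 2 ∧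
        (∑ t, (X t : MvPolynomial (Fin 6) ℂ) ^ 3) - l * q ∈
          Ideal.span {(∑ t, X t : MvPolynomial (Fin 6) ℂ), ∑ t, C (y t) * X t}) ↔
      ∃ τ : Equiv.Perm (Fin 6), FPF τ ∧ ∀ k, y (τ k) = y k := by
  constructor
  · rintro ⟨l, q, hl, hq, hmem⟩
    exact forward y hsum l q hl hmem
  · rintro ⟨τ, ⟨hinv, hfpf⟩, hyt⟩
    exact backward y hy hsum τ hinv hfpf hyt
end
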